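/- arXiv:1711.05874 — 4 statements merged into one kernel-verified Lean document; each statement's English description precedes it below -/
import Mathlib

section
/- Let Γ be a geometric distance-regular graph with diameter D, valency k and smallest eigenvalue θ_min = −k/(a_1+1), and let (u_i)_{i=0}^D be the standard sequence associated with θ_min. Then every clique C of Γ with a_1+2 vertices is a completely regular code with covering radius D−1, and for every 0 ≤ i ≤ D−1 and every vertex x with d(x,C) = i, writing γ = |Γ_i(x) ∩ C|, one has γ·u_i + (a_1+2−γ)·u_{i+1} = 0. -/
open Finset

/-- The intersection number `a_i := k - b_i - c_i`, where `k = b 0` is the valency. -/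
def drgA (b c : ℕ → ℕ) (i : ℕ) : ℕ := b 0 - b i - c i

/-- `G` is a distance-regular graph with diameter `D` and intersection numbers
`b i`, `c i` (`0 ≤ i ≤ D`, with `b D = 0`, `c 0 = 0`): `G` is connected of diameter `D`,
and for any vertices `x, y` at distance `i`, `y` has exactly `c i` neighbours at distance
`i - 1` from `x` and exactly `b i` neighbours at distance `i + 1` from `x`. -/
def IsDRG {V : Type*} [Fintype V] (G : SimpleGraph V) [DecidableRel G.Adj]
    (D : ℕ) (b c : ℕ → ℕ) : Prop :=
  G.Connected ∧
  (∀ x y : V, G.dist x y ≤ D) ∧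
  (∃ x y : V, G.dist x y = D) ∧
  b D = 0 ∧ c 0 = 0 ∧
  ∀ i, i ≤ D → ∀ x y : V, G.dist x y = i →
    (Finset.univ.filter (fun z => G.Adj y z ∧ G.dist x z = i - 1)).card = c i ∧
    (Finset.univ.filter (fun z => G.Adj y z ∧ G.dist x z = i + 1)).card = b i

/-- `θ` is an eigenvalue of the adjacency matrix of `G`. -/
def IsAdjEigenvalue {V : Type*} [Fintype V] (G : SimpleGraph V) [DecidableRel G.Adj]
    (θ : ℝ) : Prop :=
  ∃ v : V → ℝ, v ≠ 0 ∧ (G.adjMatrix ℝ).mulVec v = θ • v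

/-- `θ` is the smallest eigenvalue of the adjacency matrix of `G`. -/
def IsSmallestAdjEigenvalue {V : Type*} [Fintype V] (G : SimpleGraph V) [DecidableRel G.Adj]
    (θ : ℝ) : Prop :=
  IsAdjEigenvalue G θ ∧ ∀ μ : ℝ, IsAdjEigenvalue G μ → θ ≤ μ

/-- The multiplicity of `θ` as an eigenvalue of the adjacency matrix of `G`,
i.e. the dimension of the `θ`-eigenspace. -/
noncomputable def adjMult {V : Type*} [Fintype V] (G : SimpleGraph V) [DecidableRel G.Adj]
    (θ : ℝ) : ℕ :=
  Module.finrank ℝ (Module.End.eigenspace ((G.adjMatrix ℝ).mulVecLin) θ)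

/-- `u` is the standard sequence of the eigenvalue `θ`:
`u 0 = 1`, `u 1 = θ / k`, and `c i * u (i-1) + a i * u i + b i * u (i+1) = θ * u i`
for `1 ≤ i ≤ D - 1`. -/
def IsStdSeq (D : ℕ) (b c : ℕ → ℕ) (θ : ℝ) (u : ℕ → ℝ) : Prop :=
  u 0 = 1 ∧ u 1 = θ / (b 0 : ℝ) ∧
  ∀ i, 1 ≤ i → i ≤ D - 1 →
    (c i : ℝ) * u (i - 1) + (drgA b c i : ℝ) * u i + (b i : ℝ) * u (i + 1) = θ * u i

/-- A Delsarte clique: a clique of size `1 - k / θmin`. -/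
def IsDelsarteClique {V : Type*} (G : SimpleGraph V) (k : ℕ) (θmin : ℝ)
    (C : Finset V) : Prop :=
  G.IsClique (C : Set V) ∧ (C.card : ℝ) = 1 - (k : ℝ) / θmin

/-- `G` is geometric with respect to the collection `𝒞` of Delsarte cliques:
every member of `𝒞` is a Delsarte clique and every edge lies in exactly one member of `𝒞`. -/
def IsGeometricWith {V : Type*} (G : SimpleGraph V) (k : ℕ) (θmin : ℝ)
    (𝒞 : Set (Finset V)) : Prop :=
  (∀ C ∈ 𝒞, IsDelsarteClique G k θmin C) ∧
  ∀ x y : V, G.Adj x y → ∃! C : Finset V, C ∈ 𝒞 ∧ x ∈ C ∧ y ∈ C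

/-- The distance `d(x, C) = min { d(x,c) : c ∈ C }` from a vertex to a set of vertices. -/
noncomputable def distToSet {V : Type*} (G : SimpleGraph V) (x : V) (C : Finset V) : ℕ :=
  sInf ((fun c => G.dist x c) '' (C : Set V))

/-- `C` is a completely regular code: the number of neighbours in
`C_j = {y : d(y,C) = j}` of a vertex `x` with `d(x,C) = i` depends only on `i` and `j`,
i.e. the distance partition of `C` is equitable. -/
def IsCompletelyRegularCode {V : Type*} [Fintype V] (G : SimpleGraph V) [DecidableRel G.Adj]
    (C : Finset V) : Prop :=
  ∀ i j : ℕ, ∃ f : ℕ, ∀ x : V, distToSet G x C = i →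
    (Finset.univ.filter (fun y => G.Adj x y ∧ distToSet G y C = j)).card = f

/-- `G` is non-bipartite (contains an odd cycle), i.e. not 2-colorable. -/
def NonBipartite {V : Type*} (G : SimpleGraph V) : Prop := ¬ G.Colorable 2

/-- A set `S` of vertices is strongly closed: any vertex `z` with
`d(x,z) + d(z,y) ≤ d(x,y) + 1` for some `x, y ∈ S` belongs to `S`. -/
def IsStronglyClosed {V : Type*} (G : SimpleGraph V) (S : Set V) : Prop :=
  ∀ x ∈ S, ∀ y ∈ S, ∀ z : V, G.dist x z + G.dist z y ≤ G.dist x y + 1 → z ∈ S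

/-- `G` is `m`-bounded: for every `1 ≤ i ≤ m` and all vertices `x, y` at distance `i`
there is a strongly closed set containing `x` and `y` inducing a connected subgraph
of diameter `i`. -/
def IsMBounded {V : Type*} [Fintype V] (G : SimpleGraph V) (m : ℕ) : Prop :=
  ∀ i, 1 ≤ i → i ≤ m → ∀ x y : V, G.dist x y = i →
    ∃ S : Set V, IsStronglyClosed G S ∧ x ∈ S ∧ y ∈ S ∧
      (G.induce S).Connected ∧
      (∀ u v : S, (G.induce S).dist u v ≤ i) ∧ (∃ u v : S, (G.induce S).dist u v = i)

/-- The vector `C_j = Σ_{z ∈ Γ(x) ∩ Γ_{j-1}(y)} φ z - Σ_{w ∈ Γ_{j-1}(x) ∩ Γ(y)} φ w`. -/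
noncomputable def Cvec {V : Type*} [Fintype V] (G : SimpleGraph V) [DecidableRel G.Adj]
    {N : ℕ} (φ : V → EuclideanSpace ℝ (Fin N)) (j : ℕ) (x y : V) :
    EuclideanSpace ℝ (Fin N) :=
  (∑ z ∈ Finset.univ.filter (fun z => G.Adj x z ∧ G.dist y z = j - 1), φ z)
    - ∑ w ∈ Finset.univ.filter (fun w => G.dist x w = j - 1 ∧ G.Adj y w), φ w

set_option linter.unusedSectionVars false


namespace DRGAux

variable {V : Type*} [Fintype V] [DecidableEq V] {G : SimpleGraph V} [DecidableRel G.Adj]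
variable {D : ℕ} {b c : ℕ → ℕ}

lemma dist_getVert_le (hconn : G.Connected) {x y : V} (p : G.Walk x y) (i : ℕ) :
    G.dist x (p.getVert i) ≤ i := by
  induction i with
  | zero => simp [p.getVert_zero, SimpleGraph.dist_self]
  | succ n ih =>
    by_cases h : n < p.length
    · have hadj := p.adj_getVert_succ h
      have h1 : G.dist (p.getVert n) (p.getVert (n+1)) = 1 :=
        SimpleGraph.dist_eq_one_iff_adj.mpr hadj
      have := hconn.dist_triangle (v := p.getVert n)
        (u := x) (w := p.getVert (n+1))
      omega
    · have hy : p.getVert (n+1) = y := p.getVert_of_length_le (by omega)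
      have : G.dist x y ≤ p.length := SimpleGraph.dist_le p
      rw [hy]; omega

lemma exists_dist_dist (hconn : G.Connected) (x y : V) {i : ℕ} (hi : i ≤ G.dist x y) :
    ∃ z : V, G.dist x z = i ∧ G.dist z y = G.dist x y - i := by
  obtain ⟨p, hp⟩ := hconn.exists_walk_length_eq_dist x y
  have h1 : G.dist x (p.getVert i) ≤ i := dist_getVert_le hconn p i
  have h2 : G.dist (p.getVert i) y ≤ G.dist x y - i := by
    have hrev : p.reverse.getVert (p.length - i) = p.getVert i := by
      rw [SimpleGraph.Walk.getVert_reverse]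
      congr 1
      omega
    have := dist_getVert_le hconn p.reverse (p.length - i)
    rw [hrev] at this
    rw [SimpleGraph.dist_comm]
    omega
  have h3 := hconn.dist_triangle (u := x) (v := p.getVert i) (w := y)
  exact ⟨p.getVert i, by omega, by omega⟩

lemma adj_dist_bound (hconn : G.Connected) {x w z : V} (ha : G.Adj w z) :
    G.dist x z ≤ G.dist x w + 1 ∧ G.dist x w ≤ G.dist x z + 1 := by
  have h1 : G.dist w z = 1 := SimpleGraph.dist_eq_one_iff_adj.mpr ha
  have h2 : G.dist z w = 1 := SimpleGraph.dist_eq_one_iff_adj.mpr ha.symm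
  have t1 := hconn.dist_triangle (u := x) (v := w) (w := z)
  have t2 := hconn.dist_triangle (u := x) (v := z) (w := w)
  omega

lemma drg_degree (h : IsDRG G D b c) (x : V) :
    (univ.filter fun z => G.Adj x z).card = b 0 := by
  have h0 := (h.2.2.2.2.2 0 (Nat.zero_le _) x x (SimpleGraph.dist_self)).2
  rw [← h0]
  congr 1
  ext z
  simp only [mem_filter, mem_univ, true_and, zero_add]
  exact ⟨fun hz => ⟨hz, SimpleGraph.dist_eq_one_iff_adj.mpr hz⟩, fun hz => hz.1⟩

/-- partition of the neighbourhood of `x` by distance to `z`, where `dist z x = j`. -/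
lemma nbr_partition (hconn : G.Connected) (x z : V) {j : ℕ} (hj : G.dist z x = j) :
    univ.filter (fun y => G.Adj x y)
      = (univ.filter (fun y => G.Adj x y ∧ G.dist z y + 1 = j)) ∪
        ((univ.filter (fun y => G.Adj x y ∧ G.dist z y = j)) ∪
         (univ.filter (fun y => G.Adj x y ∧ G.dist z y = j + 1))) := by
  ext y
  simp only [mem_filter, mem_univ, true_and, mem_union]
  constructor
  · intro hy
    have hb := adj_dist_bound (G := G) hconn (x := z) hy
    have h3 : G.dist z y + 1 = j ∨ G.dist z y = j ∨ G.dist z y = j + 1 := by omega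
    rcases h3 with h' | h' | h'
    · exact Or.inl ⟨hy, h'⟩
    · exact Or.inr (Or.inl ⟨hy, h'⟩)
    · exact Or.inr (Or.inr ⟨hy, h'⟩)
  · rintro (⟨hy, _⟩ | ⟨hy, _⟩ | ⟨hy, _⟩) <;> exact hy

lemma nbr_disj1 (x z : V) (j : ℕ) :
    Disjoint (univ.filter (fun y => G.Adj x y ∧ G.dist z y + 1 = j))
      ((univ.filter (fun y => G.Adj x y ∧ G.dist z y = j)) ∪
       (univ.filter (fun y => G.Adj x y ∧ G.dist z y = j + 1))) := by
  simp only [disjoint_left, mem_filter, mem_univ, true_and, mem_union]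
  rintro y ⟨_, h1⟩ (⟨_, h2⟩ | ⟨_, h2⟩) <;> omega

lemma nbr_disj2 (x z : V) (j : ℕ) :
    Disjoint (univ.filter (fun y => G.Adj x y ∧ G.dist z y = j))
      (univ.filter (fun y => G.Adj x y ∧ G.dist z y = j + 1)) := by
  simp only [disjoint_left, mem_filter, mem_univ, true_and]
  rintro y ⟨_, h1⟩ ⟨_, h2⟩; omega

end DRGAux

namespace DRGAux

variable {V : Type*} [Fintype V] [DecidableEq V] {G : SimpleGraph V} [DecidableRel G.Adj]
variable {D : ℕ} {b c : ℕ → ℕ}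

lemma drg_cnt_same (h : IsDRG G D b c) {x w : V} {j : ℕ} (hxw : G.dist x w = j) :
    (univ.filter fun y => G.Adj w y ∧ G.dist x y = j).card = drgA b c j := by
  have hj : j ≤ D := hxw ▸ h.2.1 x w
  have hmain := h.2.2.2.2.2 j hj x w hxw
  have hdeg := drg_degree h w
  have hpart := nbr_partition (G := G) h.1 w x hxw
  rw [hpart, card_union_of_disjoint (nbr_disj1 w x j),
    card_union_of_disjoint (nbr_disj2 w x j)] at hdeg
  have hc1 : (univ.filter (fun y => G.Adj w y ∧ G.dist x y + 1 = j)).card = c j := by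
    rcases Nat.eq_zero_or_pos j with hj0 | hj0
    · subst hj0
      rw [h.2.2.2.2.1]
      rw [Finset.card_eq_zero]
      ext y
      simp only [mem_filter, mem_univ, true_and, Finset.notMem_empty, iff_false]
      rintro ⟨_, h2⟩; omega
    · rw [← hmain.1]
      congr 1
      ext y
      simp only [mem_filter, mem_univ, true_and]
      constructor
      · rintro ⟨h1, h2⟩; exact ⟨h1, by omega⟩
      · rintro ⟨h1, h2⟩; exact ⟨h1, by omega⟩
  rw [hc1, hmain.2] at hdeg
  unfold drgA
  omega

lemma drg_cnt_far (h : IsDRG G D b c) {x w : V} {i : ℕ}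
    (hfar : G.dist x w + 1 < i ∨ i + 1 < G.dist x w) :
    (univ.filter fun y => G.Adj w y ∧ G.dist x y = i).card = 0 := by
  rw [Finset.card_eq_zero]
  ext y
  simp only [mem_filter, mem_univ, true_and, Finset.notMem_empty, iff_false]
  rintro ⟨h1, h2⟩
  have := adj_dist_bound (G := G) h.1 (x := x) h1
  omega

lemma drg_b_pos (h : IsDRG G D b c) {i : ℕ} (hi : i < D) : 1 ≤ b i := by
  obtain ⟨x, y, hxy⟩ := h.2.2.1
  obtain ⟨z, hz1, hz2⟩ := exists_dist_dist h.1 x y (by omega : i ≤ G.dist x y)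
  obtain ⟨w, hw1, hw2⟩ := exists_dist_dist h.1 z y (by omega : 1 ≤ G.dist z y)
  have hadj : G.Adj z w := SimpleGraph.dist_eq_one_iff_adj.mp hw1
  have hdxw : G.dist x w = i + 1 := by
    have t1 := h.1.dist_triangle (u := x) (v := z) (w := w)
    have t2 := h.1.dist_triangle (u := x) (v := w) (w := y)
    omega
  have hcard := (h.2.2.2.2.2 i (by omega) x z hz1).2
  have : w ∈ univ.filter (fun z' => G.Adj z z' ∧ G.dist x z' = i + 1) := by
    simp only [mem_filter, mem_univ, true_and]
    exact ⟨hadj, hdxw⟩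
  have := Finset.card_pos.mpr ⟨w, this⟩
  omega

lemma drg_c_pos (h : IsDRG G D b c) {i : ℕ} (h1 : 1 ≤ i) (h2 : i ≤ D) : 1 ≤ c i := by
  obtain ⟨x, y, hxy⟩ := h.2.2.1
  obtain ⟨z, hz1, _⟩ := exists_dist_dist h.1 x y (by omega : i ≤ G.dist x y)
  obtain ⟨w, hw1, hw2⟩ := exists_dist_dist h.1 x z (by omega : i - 1 ≤ G.dist x z)
  rw [hz1] at hw2
  have hadj : G.Adj z w := by
    rw [← SimpleGraph.dist_eq_one_iff_adj, SimpleGraph.dist_comm]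
    omega
  have hcard := (h.2.2.2.2.2 i h2 x z hz1).1
  have : w ∈ univ.filter (fun z' => G.Adj z z' ∧ G.dist x z' = i - 1) := by
    simp only [mem_filter, mem_univ, true_and]
    exact ⟨hadj, hw1⟩
  have := Finset.card_pos.mpr ⟨w, this⟩
  omega

lemma drg_c1 (h : IsDRG G D b c) (hD : 1 ≤ D) : c 1 = 1 := by
  obtain ⟨x, y, hxy⟩ := h.2.2.1
  obtain ⟨z, hz1, _⟩ := exists_dist_dist h.1 x y (by omega : 1 ≤ G.dist x y)
  have hcard := (h.2.2.2.2.2 1 hD x z hz1).1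
  rw [← hcard]
  have : (univ.filter (fun z' => G.Adj z z' ∧ G.dist x z' = 1 - 1)) = {x} := by
    ext w
    simp only [mem_filter, mem_univ, true_and, Finset.mem_singleton]
    constructor
    · rintro ⟨h1', h2'⟩
      have : G.dist x w = 0 := h2'
      exact ((h.1.dist_eq_zero_iff).mp this).symm
    · rintro rfl
      refine ⟨?_, by simp [SimpleGraph.dist_self]⟩
      rw [← SimpleGraph.dist_eq_one_iff_adj, SimpleGraph.dist_comm]
      exact hz1
  rw [this, Finset.card_singleton]

lemma drg_sphere_nonempty (h : IsDRG G D b c) (x : V) {i : ℕ} (hi : i ≤ D) :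
    ∃ y, G.dist x y = i := by
  induction i with
  | zero => exact ⟨x, SimpleGraph.dist_self⟩
  | succ n ih =>
    obtain ⟨y, hy⟩ := ih (by omega)
    have hb := drg_b_pos h (show n < D by omega)
    have hcard := (h.2.2.2.2.2 n (by omega) x y hy).2
    have : 0 < (univ.filter (fun z => G.Adj y z ∧ G.dist x z = n + 1)).card := by omega
    obtain ⟨z, hz⟩ := Finset.card_pos.mp this
    simp only [mem_filter, mem_univ, true_and] at hz
    exact ⟨z, hz.2⟩

lemma swap_count {α β : Type*} [DecidableEq α] [DecidableEq β]
    (s : Finset α) (t : Finset β) (p : α → β → Prop) [∀ a b, Decidable (p a b)] :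
    ∑ a ∈ s, (t.filter (fun b => p a b)).card = ∑ b ∈ t, (s.filter (fun a => p a b)).card := by
  simp only [Finset.card_filter]
  exact Finset.sum_comm

lemma drg_count_pairs (h : IsDRG G D b c) (x : V) {i : ℕ} (hi : i + 1 ≤ D) :
    (univ.filter fun y => G.dist x y = i).card * b i
      = (univ.filter fun w => G.dist x w = i + 1).card * c (i + 1) := by
  have key := swap_count (univ.filter fun y : V => G.dist x y = i)
      (univ.filter fun w : V => G.dist x w = i + 1) (fun y w => G.Adj y w)
  calc (univ.filter fun y => G.dist x y = i).card * b i
      = ∑ y ∈ univ.filter (fun y => G.dist x y = i),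
          ((univ.filter fun w : V => G.dist x w = i + 1).filter (fun w => G.Adj y w)).card := by
        rw [Finset.sum_congr rfl, Finset.sum_const, smul_eq_mul]
        intro y hy
        simp only [mem_filter, mem_univ, true_and] at hy
        rw [Finset.filter_filter]
        rw [← (h.2.2.2.2.2 i (by omega) x y hy).2]
        congr 1
        ext w
        simp only [mem_filter, mem_univ, true_and]
        tauto
    _ = ∑ w ∈ univ.filter (fun w => G.dist x w = i + 1),
          ((univ.filter fun y : V => G.dist x y = i).filter (fun y => G.Adj y w)).card := key
    _ = (univ.filter fun w => G.dist x w = i + 1).card * c (i + 1) := by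
        rw [Finset.sum_congr rfl, Finset.sum_const, smul_eq_mul]
        intro w hw
        simp only [mem_filter, mem_univ, true_and] at hw
        rw [Finset.filter_filter]
        have := (h.2.2.2.2.2 (i+1) (by omega) x w hw).1
        rw [← this]
        congr 1
        ext y
        simp only [mem_filter, mem_univ, true_and, Nat.add_sub_cancel]
        constructor
        · rintro ⟨h1, h2⟩; exact ⟨h2.symm, h1⟩
        · rintro ⟨h1, h2⟩; exact ⟨h2, h1.symm⟩

end DRGAux

namespace DRGAux

variable {V : Type*} [Fintype V] [DecidableEq V] {G : SimpleGraph V} [DecidableRel G.Adj]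
variable {D : ℕ} {b c : ℕ → ℕ}

lemma drg_sphere_recur (h : IsDRG G D b c) {θ : ℝ} {v : V → ℝ}
    (hv : ∀ x, ∑ y ∈ univ.filter (fun y => G.Adj x y), v y = θ * v x)
    (x : V) (i : ℕ) :
    θ * (∑ y ∈ univ.filter (fun y => G.dist x y = i), v y)
      = (c (i+1) : ℝ) * (∑ w ∈ univ.filter (fun w => G.dist x w = i+1), v w)
        + (drgA b c i : ℝ) * (∑ w ∈ univ.filter (fun w => G.dist x w = i), v w)
        + (b (i-1) : ℝ) * (∑ w ∈ univ.filter (fun w => G.dist x w + 1 = i), v w) := by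
  calc θ * (∑ y ∈ univ.filter (fun y => G.dist x y = i), v y)
      = ∑ y ∈ univ.filter (fun y => G.dist x y = i), θ * v y := by rw [Finset.mul_sum]
    _ = ∑ y ∈ univ.filter (fun y => G.dist x y = i),
          ∑ w ∈ univ.filter (fun w => G.Adj y w), v w :=
        Finset.sum_congr rfl fun y _ => (hv y).symm
    _ = ∑ y ∈ univ.filter (fun y => G.dist x y = i), ∑ w ∈ univ, if G.Adj y w then v w else 0 :=
        Finset.sum_congr rfl fun y _ => Finset.sum_filter _ _
    _ = ∑ w ∈ univ, ∑ y ∈ univ.filter (fun y => G.dist x y = i), if G.Adj y w then v w else 0 :=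
        Finset.sum_comm
    _ = ∑ w ∈ univ, ((univ.filter fun y => G.Adj w y ∧ G.dist x y = i).card : ℝ) * v w := by
        refine Finset.sum_congr rfl fun w _ => ?_
        rw [← Finset.sum_filter, Finset.filter_filter, Finset.sum_const, nsmul_eq_mul]
        have hset : (univ.filter fun y => G.dist x y = i ∧ G.Adj y w)
            = (univ.filter fun y => G.Adj w y ∧ G.dist x y = i) := by
          ext y
          simp only [mem_filter, mem_univ, true_and]
          constructor
          · rintro ⟨h1, h2⟩; exact ⟨h2.symm, h1⟩
          · rintro ⟨h1, h2⟩; exact ⟨h2, h1.symm⟩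
        rw [hset]
    _ = ∑ w ∈ univ, ((if G.dist x w = i + 1 then (c (i+1) : ℝ) * v w else 0)
          + ((if G.dist x w = i then (drgA b c i : ℝ) * v w else 0)
          + (if G.dist x w + 1 = i then (b (i-1) : ℝ) * v w else 0))) := by
        refine Finset.sum_congr rfl fun w _ => ?_
        by_cases h1 : G.dist x w = i + 1
        · rw [if_pos h1, if_neg (by omega), if_neg (by omega)]
          have hc := (h.2.2.2.2.2 (i+1) (h1 ▸ h.2.1 x w) x w h1).1
          rw [Nat.add_sub_cancel] at hc
          rw [hc]
          ring
        · by_cases h2 : G.dist x w = i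
          · rw [if_neg h1, if_pos h2, if_neg (by omega)]
            rw [drg_cnt_same h h2]
            ring
          · by_cases h3 : G.dist x w + 1 = i
            · rw [if_neg h1, if_neg h2, if_pos h3]
              have hb := (h.2.2.2.2.2 (G.dist x w) (h.2.1 x w) x w rfl).2
              rw [h3] at hb
              have hw' : G.dist x w = i - 1 := by omega
              rw [hw'] at hb
              rw [hb]
              ring
            · rw [if_neg h1, if_neg h2, if_neg h3, drg_cnt_far h (by omega)]
              simp
    _ = (c (i+1) : ℝ) * (∑ w ∈ univ.filter (fun w => G.dist x w = i+1), v w)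
        + (drgA b c i : ℝ) * (∑ w ∈ univ.filter (fun w => G.dist x w = i), v w)
        + (b (i-1) : ℝ) * (∑ w ∈ univ.filter (fun w => G.dist x w + 1 = i), v w) := by
        rw [Finset.sum_add_distrib, Finset.sum_add_distrib,
          ← Finset.sum_filter, ← Finset.sum_filter, ← Finset.sum_filter,
          ← Finset.mul_sum, ← Finset.mul_sum, ← Finset.mul_sum]
        ring

lemma sphere_zero (hconn : G.Connected) (x : V) :
    univ.filter (fun y => G.dist x y = 0) = {x} := by
  ext y
  simp only [mem_filter, mem_univ, true_and, Finset.mem_singleton]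
  rw [hconn.dist_eq_zero_iff]
  exact ⟨fun h' => h'.symm, fun h' => h'.symm⟩

lemma sphere_one (x : V) :
    univ.filter (fun y => G.dist x y = 1) = univ.filter (fun y => G.Adj x y) := by
  ext y
  simp [SimpleGraph.dist_eq_one_iff_adj]

lemma drgA_zero : drgA b c 0 = 0 := by unfold drgA; omega

lemma drg_sphere_sum (h : IsDRG G D b c) (hD : 1 ≤ D) {θ : ℝ} {u : ℕ → ℝ}
    (hu : IsStdSeq D b c θ u) {v : V → ℝ}
    (hv : ∀ x, ∑ y ∈ univ.filter (fun y => G.Adj x y), v y = θ * v x)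
    (x : V) : ∀ i, i ≤ D →
    ∑ y ∈ univ.filter (fun y => G.dist x y = i), v y
      = ((univ.filter (fun y => G.dist x y = i)).card : ℝ) * u i * v x := by
  have hk : 1 ≤ b 0 := drg_b_pos h (by omega)
  have hkR : (b 0 : ℝ) ≠ 0 := Nat.cast_ne_zero.mpr (by omega)
  have base0 : ∑ y ∈ univ.filter (fun y => G.dist x y = 0), v y
      = ((univ.filter (fun y : V => G.dist x y = 0)).card : ℝ) * u 0 * v x := by
    rw [sphere_zero h.1 x, Finset.sum_singleton, Finset.card_singleton, hu.1]
    ring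
  have base1 : ∑ y ∈ univ.filter (fun y => G.dist x y = 1), v y
      = ((univ.filter (fun y : V => G.dist x y = 1)).card : ℝ) * u 1 * v x := by
    have hrec := drg_sphere_recur h hv x 0
    have hempty : (univ.filter (fun w : V => G.dist x w + 1 = 0)) = ∅ := by
      ext w; simp only [mem_filter, mem_univ, true_and, Finset.notMem_empty, iff_false]; omega
    rw [hempty, Finset.sum_empty, mul_zero, add_zero, drgA_zero, sphere_zero h.1 x,
      Finset.sum_singleton, drg_c1 h hD] at hrec
    push_cast at hrec
    rw [sphere_one, drg_degree h, hu.2.1]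
    rw [sphere_one] at hrec
    field_simp
    linarith [hrec]
  have main : ∀ i : ℕ,
      ((i ≤ D → ∑ y ∈ univ.filter (fun y => G.dist x y = i), v y
        = ((univ.filter (fun y : V => G.dist x y = i)).card : ℝ) * u i * v x) ∧
       (i + 1 ≤ D → ∑ y ∈ univ.filter (fun y => G.dist x y = i + 1), v y
        = ((univ.filter (fun y : V => G.dist x y = i + 1)).card : ℝ) * u (i+1) * v x)) := by
    intro i
    induction i with
    | zero => exact ⟨fun _ => base0, fun _ => base1⟩
    | succ n ihn =>
      refine ⟨ihn.2, fun hn2 => ?_⟩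
      have hPn := ihn.1 (by omega)
      have hPn1 := ihn.2 (by omega)
      have hrec := drg_sphere_recur h hv x (n+1)
      have hshift : (univ.filter (fun w : V => G.dist x w + 1 = n + 1))
          = (univ.filter (fun w : V => G.dist x w = n)) := by
        ext w
        simp only [mem_filter, mem_univ, true_and]
        omega
      rw [hshift, Nat.add_sub_cancel] at hrec
      have hurec := hu.2.2 (n+1) (by omega) (by omega)
      rw [Nat.add_sub_cancel] at hurec
      have hK1' : ((univ.filter fun y : V => G.dist x y = n).card : ℝ) * (b n : ℝ)
          = ((univ.filter fun w : V => G.dist x w = n+1).card : ℝ) * (c (n+1) : ℝ) := by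
        exact_mod_cast drg_count_pairs h x (show n + 1 ≤ D by omega)
      have hK2' : ((univ.filter fun y : V => G.dist x y = n+1).card : ℝ) * (b (n+1) : ℝ)
          = ((univ.filter fun w : V => G.dist x w = n+1+1).card : ℝ) * (c (n+1+1) : ℝ) := by
        exact_mod_cast drg_count_pairs h x (show n + 1 + 1 ≤ D by omega)
      have hc2 : (c (n+2) : ℝ) ≠ 0 := by
        have := drg_c_pos h (show 1 ≤ n+2 by omega) (show n+2 ≤ D by omega)
        exact Nat.cast_ne_zero.mpr (by omega)
      have key : (c (n+2) : ℝ) * (∑ y ∈ univ.filter (fun y => G.dist x y = n+1+1), v y)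
          = (c (n+2) : ℝ)
            * (((univ.filter (fun y : V => G.dist x y = n+1+1)).card : ℝ) * u (n+1+1) * v x) := by
        rw [hPn, hPn1] at hrec
        linear_combination (-1 : ℝ) * hrec
          + (-(((univ.filter fun y : V => G.dist x y = n+1).card : ℝ) * v x)) * hurec
          + (-(u n * v x)) * hK1' + (u (n+2) * v x) * hK2'
      exact mul_left_cancel₀ hc2 key
  exact fun i hi => (main i).1 hi

end DRGAux

namespace DRGAux

variable {V : Type*} [Fintype V] [DecidableEq V] {G : SimpleGraph V} [DecidableRel G.Adj]
variable {D : ℕ} {b c : ℕ → ℕ}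

lemma drg_last_recur (h : IsDRG G D b c) (hD : 1 ≤ D) {θ : ℝ} {u : ℕ → ℝ}
    (hθ : IsAdjEigenvalue G θ) (hu : IsStdSeq D b c θ u) :
    (c D : ℝ) * u (D - 1) + (drgA b c D : ℝ) * u D = θ * u D := by
  obtain ⟨v, hv0, hveq⟩ := hθ
  have hv : ∀ x, ∑ y ∈ univ.filter (fun y => G.Adj x y), v y = θ * v x := by
    intro x
    have hx := congrFun hveq x
    rw [SimpleGraph.adjMatrix_mulVec_apply, SimpleGraph.neighborFinset_eq_filter] at hx
    simpa using hx
  obtain ⟨z, hvz⟩ : ∃ z, v z ≠ 0 := by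
    by_contra h'
    push_neg at h'
    exact hv0 (funext h')
  obtain ⟨E, rfl⟩ : ∃ E, D = E + 1 := ⟨D - 1, by omega⟩
  have hrec := drg_sphere_recur h hv z (E+1)
  have hempty : (univ.filter (fun w : V => G.dist z w = E+1+1)) = ∅ := by
    ext w
    simp only [mem_filter, mem_univ, true_and, Finset.notMem_empty, iff_false]
    have := h.2.1 z w
    omega
  have hshift : (univ.filter (fun w : V => G.dist z w + 1 = E + 1))
      = (univ.filter (fun w : V => G.dist z w = E)) := by
    ext w
    simp only [mem_filter, mem_univ, true_and]
    omega
  rw [hempty, Finset.sum_empty, mul_zero, zero_add, hshift, Nat.add_sub_cancel] at hrec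
  have hS1 := drg_sphere_sum h hD hu hv z (E+1) (by omega)
  have hS0 := drg_sphere_sum h hD hu hv z E (by omega)
  rw [hS1, hS0] at hrec
  have hK' : ((univ.filter fun y : V => G.dist z y = E).card : ℝ) * (b E : ℝ)
      = ((univ.filter fun w : V => G.dist z w = E+1).card : ℝ) * (c (E+1) : ℝ) := by
    exact_mod_cast drg_count_pairs h z (show E + 1 ≤ E + 1 by omega)
  have hKne : (((univ.filter fun y : V => G.dist z y = E+1).card : ℕ) : ℝ) ≠ 0 := by
    obtain ⟨y, hy⟩ := drg_sphere_nonempty h z (show E + 1 ≤ E + 1 from le_refl _)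
    have : y ∈ univ.filter fun y : V => G.dist z y = E+1 := by
      simp only [mem_filter, mem_univ, true_and]; exact hy
    have := Finset.card_pos.mpr ⟨y, this⟩
    exact Nat.cast_ne_zero.mpr (by omega)
  have key : (((univ.filter fun y : V => G.dist z y = E+1).card : ℕ) : ℝ) * v z
      * ((c (E+1) : ℝ) * u E + (drgA b c (E+1) : ℝ) * u (E+1) - θ * u (E+1)) = 0 := by
    linear_combination (-1 : ℝ) * hrec - (u E * v z) * hK'
  have h0 := (mul_eq_zero.mp key).resolve_left (mul_ne_zero hKne hvz)
  rw [Nat.add_sub_cancel]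
  linarith [h0]

lemma col_eig (h : IsDRG G D b c) (hD : 1 ≤ D) {θ : ℝ} {u : ℕ → ℝ}
    (hu : IsStdSeq D b c θ u)
    (hlast : (c D : ℝ) * u (D - 1) + (drgA b c D : ℝ) * u D = θ * u D)
    (z x : V) :
    ∑ y ∈ univ.filter (fun y => G.Adj x y), u (G.dist z y) = θ * u (G.dist z x) := by
  have hjD : G.dist z x ≤ D := h.2.1 z x
  rcases Nat.eq_zero_or_pos (G.dist z x) with hj0 | hjpos
  · have hzx : z = x := (h.1.dist_eq_zero_iff).mp hj0
    subst hzx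
    have hsum : ∑ y ∈ univ.filter (fun y => G.Adj z y), u (G.dist z y)
        = ∑ y ∈ univ.filter (fun y => G.Adj z y), u 1 := by
      refine Finset.sum_congr rfl fun y hy => ?_
      simp only [mem_filter, mem_univ, true_and] at hy
      rw [SimpleGraph.dist_eq_one_iff_adj.mpr hy]
    rw [hj0, hsum, Finset.sum_const, drg_degree h, nsmul_eq_mul, hu.2.1, hu.1]
    have hk : 1 ≤ b 0 := drg_b_pos h (by omega)
    have hkR : (b 0 : ℝ) ≠ 0 := Nat.cast_ne_zero.mpr (by omega)
    field_simp
  · set j := G.dist z x with hjdef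
    have hpart := nbr_partition (G := G) h.1 x z hjdef.symm
    rw [hpart, Finset.sum_union (nbr_disj1 x z j), Finset.sum_union (nbr_disj2 x z j)]
    have hmain := h.2.2.2.2.2 j hjD z x hjdef.symm
    have e1 : ∑ y ∈ univ.filter (fun y => G.Adj x y ∧ G.dist z y + 1 = j), u (G.dist z y)
        = (c j : ℝ) * u (j - 1) := by
      have hcard : (univ.filter (fun y => G.Adj x y ∧ G.dist z y + 1 = j)).card = c j := by
        rw [← hmain.1]
        congr 1
        ext y
        simp only [mem_filter, mem_univ, true_and]
        constructor
        · rintro ⟨h1, h2⟩; exact ⟨h1, by omega⟩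
        · rintro ⟨h1, h2⟩; exact ⟨h1, by omega⟩
      rw [Finset.sum_congr rfl (fun y hy => ?_), Finset.sum_const, hcard, nsmul_eq_mul]
      simp only [mem_filter, mem_univ, true_and] at hy
      have : G.dist z y = j - 1 := by omega
      rw [this]
    have e2 : ∑ y ∈ univ.filter (fun y => G.Adj x y ∧ G.dist z y = j), u (G.dist z y)
        = (drgA b c j : ℝ) * u j := by
      have hcard := drg_cnt_same h (w := x) hjdef.symm
      rw [Finset.sum_congr rfl (fun y hy => ?_), Finset.sum_const, hcard, nsmul_eq_mul]
      simp only [mem_filter, mem_univ, true_and] at hy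
      rw [hy.2]
    have e3 : ∑ y ∈ univ.filter (fun y => G.Adj x y ∧ G.dist z y = j + 1), u (G.dist z y)
        = (b j : ℝ) * u (j + 1) := by
      rw [Finset.sum_congr rfl (fun y hy => ?_), Finset.sum_const, hmain.2, nsmul_eq_mul]
      simp only [mem_filter, mem_univ, true_and] at hy
      rw [hy.2]
    rw [e1, e2, e3]
    by_cases hjD1 : j ≤ D - 1
    · have := hu.2.2 j hjpos hjD1; linarith [this]
    · have hjeq : j = D := by omega
      subst hjeq
      rw [h.2.2.2.1]
      push_cast
      rw [zero_mul, add_zero]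
      linarith [hlast]

end DRGAux

namespace DRGAux

variable {V : Type*} [Fintype V] [DecidableEq V] {G : SimpleGraph V} [DecidableRel G.Adj]
variable {D : ℕ} {b c : ℕ → ℕ}

noncomputable def fvec (G : SimpleGraph V) (u : ℕ → ℝ) (C : Finset V) : V → ℝ :=
  fun x => ∑ y ∈ C, u (G.dist x y)

lemma fvec_eig (h : IsDRG G D b c) (hD : 1 ≤ D) {θ : ℝ} {u : ℕ → ℝ}
    (hu : IsStdSeq D b c θ u)
    (hlast : (c D : ℝ) * u (D - 1) + (drgA b c D : ℝ) * u D = θ * u D)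
    (C : Finset V) (x : V) :
    ∑ y ∈ univ.filter (fun y => G.Adj x y), fvec G u C y = θ * fvec G u C x := by
  unfold fvec
  rw [Finset.sum_comm]
  have e1 : ∀ w ∈ C, ∑ y ∈ univ.filter (fun y => G.Adj x y), u (G.dist y w)
      = θ * u (G.dist w x) := by
    intro w _
    rw [Finset.sum_congr rfl (fun y _ => by rw [SimpleGraph.dist_comm])]
    exact col_eig h hD hu hlast w x
  rw [Finset.sum_congr rfl e1, ← Finset.mul_sum]
  congr 1
  exact Finset.sum_congr rfl (fun y _ => by rw [SimpleGraph.dist_comm])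

lemma clique_dist_le {C : Finset V} (hCclique : G.IsClique (C : Set V)) {y y' : V}
    (hy : y ∈ C) (hy' : y' ∈ C) : G.dist y y' ≤ 1 := by
  rcases eq_or_ne y y' with rfl | hne
  · simp [SimpleGraph.dist_self]
  · have hadj : G.Adj y y' := hCclique (Finset.mem_coe.mpr hy) (Finset.mem_coe.mpr hy') hne
    exact le_of_eq (SimpleGraph.dist_eq_one_iff_adj.mpr hadj)

lemma fvec_onC (h : IsDRG G D b c) (hD : 1 ≤ D) {θ : ℝ} {u : ℕ → ℝ}
    (hu : IsStdSeq D b c θ u)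
    (hθval : θ = -(b 0 : ℝ) / ((drgA b c 1 : ℝ) + 1))
    {C : Finset V} (hCclique : G.IsClique (C : Set V)) (hCcard : C.card = drgA b c 1 + 2)
    {x : V} (hx : x ∈ C) : fvec G u C x = 0 := by
  unfold fvec
  rw [← Finset.add_sum_erase C _ hx, SimpleGraph.dist_self, hu.1]
  have e1 : ∀ y ∈ C.erase x, u (G.dist x y) = u 1 := by
    intro y hy
    have hyC := Finset.mem_of_mem_erase hy
    have hne : x ≠ y := (Finset.ne_of_mem_erase hy).symm
    have hadj : G.Adj x y := hCclique (Finset.mem_coe.mpr hx) (Finset.mem_coe.mpr hyC) hne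
    rw [SimpleGraph.dist_eq_one_iff_adj.mpr hadj]
  rw [Finset.sum_congr rfl e1, Finset.sum_const, Finset.card_erase_of_mem hx, hCcard,
    nsmul_eq_mul, hu.2.1, hθval]
  have hk : 1 ≤ b 0 := drg_b_pos h (by omega)
  have hkR : (b 0 : ℝ) ≠ 0 := Nat.cast_ne_zero.mpr (by omega)
  have ha1 : ((drgA b c 1 : ℝ) + 1) ≠ 0 := by positivity
  have : (drgA b c 1 + 2 - 1 : ℕ) = drgA b c 1 + 1 := by omega
  rw [this]
  push_cast
  field_simp
  ring

lemma fvec_zero (h : IsDRG G D b c) (hD : 1 ≤ D) {θ : ℝ} {u : ℕ → ℝ}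
    (hu : IsStdSeq D b c θ u)
    (hθval : θ = -(b 0 : ℝ) / ((drgA b c 1 : ℝ) + 1))
    (hlast : (c D : ℝ) * u (D - 1) + (drgA b c D : ℝ) * u D = θ * u D)
    {C : Finset V} (hCclique : G.IsClique (C : Set V)) (hCcard : C.card = drgA b c 1 + 2)
    (x : V) : fvec G u C x = 0 := by
  have hv : ∀ x, ∑ y ∈ univ.filter (fun y => G.Adj x y), fvec G u C y = θ * fvec G u C x :=
    fvec_eig h hD hu hlast C
  have hsq : ∑ w : V, fvec G u C w * fvec G u C w = 0 := by
    have expand : ∑ w : V, fvec G u C w * fvec G u C w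
        = ∑ z ∈ C, ∑ w : V, u (G.dist z w) * fvec G u C w := by
      rw [Finset.sum_comm]
      refine Finset.sum_congr rfl fun w _ => ?_
      rw [← Finset.sum_mul]
      congr 1
      exact Finset.sum_congr rfl (fun z _ => by rw [SimpleGraph.dist_comm])
    rw [expand]
    refine Finset.sum_eq_zero fun z hz => ?_
    have hfib : ∑ w : V, u (G.dist z w) * fvec G u C w
        = ∑ i ∈ Finset.range (D+1), ∑ w ∈ univ.filter (fun w => G.dist z w = i),
            u (G.dist z w) * fvec G u C w := by
      rw [Finset.sum_fiberwise_of_maps_to (fun w _ => Finset.mem_range.mpr (by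
        have := h.2.1 z w; omega))]
    rw [hfib]
    refine Finset.sum_eq_zero fun i hi => ?_
    have e1 : ∀ w ∈ univ.filter (fun w => G.dist z w = i),
        u (G.dist z w) * fvec G u C w = u i * fvec G u C w := by
      intro w hw
      simp only [mem_filter, mem_univ, true_and] at hw
      rw [hw]
    rw [Finset.sum_congr rfl e1, ← Finset.mul_sum,
      drg_sphere_sum h hD hu hv z i (by simpa using Nat.lt_succ_iff.mp (Finset.mem_range.mp hi)),
      fvec_onC h hD hu hθval hCclique hCcard hz]
    ring
  have hnn : ∀ w ∈ (univ : Finset V), 0 ≤ fvec G u C w * fvec G u C w :=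
    fun w _ => mul_self_nonneg _
  have := (Finset.sum_eq_zero_iff_of_nonneg hnn).mp hsq x (Finset.mem_univ x)
  exact mul_self_eq_zero.mp this

lemma dts_le {C : Finset V} {y : V} (hy : y ∈ C) (x : V) :
    distToSet G x C ≤ G.dist x y :=
  Nat.sInf_le ⟨y, Finset.mem_coe.mpr hy, rfl⟩

lemma dts_attain {C : Finset V} (hC : C.Nonempty) (x : V) :
    ∃ y ∈ C, G.dist x y = distToSet G x C := by
  have hne : ((fun c => G.dist x c) '' (C : Set V)).Nonempty :=
    ⟨_, ⟨hC.choose, Finset.mem_coe.mpr hC.choose_spec, rfl⟩⟩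
  obtain ⟨y, hy, hval⟩ := Nat.sInf_mem hne
  exact ⟨y, Finset.mem_coe.mp hy, hval⟩

lemma dts_le_D (h : IsDRG G D b c) {C : Finset V} (hC : C.Nonempty) (x : V) :
    distToSet G x C ≤ D := by
  obtain ⟨y, hy⟩ := hC
  exact le_trans (dts_le hy x) (h.2.1 x y)

lemma dist_of_dts (hconn : G.Connected) {C : Finset V} (hCclique : G.IsClique (C : Set V))
    (hC : C.Nonempty) {x : V} {i : ℕ} (hx : distToSet G x C = i) {y : V} (hy : y ∈ C) :
    G.dist x y = i ∨ G.dist x y = i + 1 := by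
  have hlow : i ≤ G.dist x y := hx ▸ dts_le (G := G) hy x
  obtain ⟨y₀, hy₀, hd⟩ := dts_attain (G := G) hC x
  rw [hx] at hd
  have htri := hconn.dist_triangle (u := x) (v := y₀) (w := y)
  have hcl := clique_dist_le hCclique hy₀ hy
  omega

lemma dts_adj_le (hconn : G.Connected) {C : Finset V} (hC : C.Nonempty) {x y : V}
    (ha : G.Adj x y) : distToSet G y C ≤ distToSet G x C + 1 := by
  obtain ⟨c₀, hc₀, hd⟩ := dts_attain (G := G) hC x
  have h1 : G.dist y x = 1 := SimpleGraph.dist_eq_one_iff_adj.mpr ha.symm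
  have htri := hconn.dist_triangle (u := y) (v := x) (w := c₀)
  have := dts_le (G := G) hc₀ y
  omega

lemma dts_step (hconn : G.Connected) {C : Finset V} (hC : C.Nonempty) {x : V} {i : ℕ}
    (hx : distToSet G x C = i + 1) : ∃ z, G.Adj x z ∧ distToSet G z C = i := by
  obtain ⟨y₀, hy₀, hd⟩ := dts_attain (G := G) hC x
  rw [hx] at hd
  obtain ⟨z, hz1, hz2⟩ := exists_dist_dist hconn x y₀ (by omega : 1 ≤ G.dist x y₀)
  have hadj : G.Adj x z := SimpleGraph.dist_eq_one_iff_adj.mp hz1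
  have hle : distToSet G z C ≤ i := by
    have := dts_le (G := G) hy₀ z
    omega
  have hge : i ≤ distToSet G z C := by
    have := dts_adj_le hconn hC hadj.symm
    omega
  exact ⟨z, hadj, by omega⟩

lemma u_no_consec (h : IsDRG G D b c) {θ : ℝ} {u : ℕ → ℝ} (hu : IsStdSeq D b c θ u) :
    ∀ j, j + 1 ≤ D → u j = 0 → u (j+1) = 0 → False := by
  intro j
  induction j with
  | zero =>
    intro _ h0 _
    rw [hu.1] at h0
    norm_num at h0
  | succ n ih =>
    intro hn2 hj hj1
    have hrec := hu.2.2 (n+1) (by omega) (by omega)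
    rw [Nat.add_sub_cancel, hj, hj1] at hrec
    have hcpos := drg_c_pos h (show 1 ≤ n+1 by omega) (show n+1 ≤ D by omega)
    have hcne : (c (n+1) : ℝ) ≠ 0 := Nat.cast_ne_zero.mpr (by omega)
    have hun : u n = 0 := by
      have : (c (n+1) : ℝ) * u n = 0 := by linarith [hrec]
      exact (mul_eq_zero.mp this).resolve_left hcne
    exact ih (by omega) hun hj

end DRGAux

namespace DRGAux

variable {V : Type*} [Fintype V] [DecidableEq V] {G : SimpleGraph V} [DecidableRel G.Adj]
variable {D : ℕ} {b c : ℕ → ℕ}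

lemma gamma_union (hconn : G.Connected) {C : Finset V} (hCclique : G.IsClique (C : Set V))
    (hC : C.Nonempty) {x : V} {i : ℕ} (hx : distToSet G x C = i) :
    (C.filter fun y => G.dist x y = i) ∪ (C.filter fun y => G.dist x y = i+1) = C := by
  ext y
  simp only [Finset.mem_union, mem_filter]
  constructor
  · rintro (⟨hy, _⟩ | ⟨hy, _⟩) <;> exact hy
  · intro hy
    rcases dist_of_dts hconn hCclique hC hx hy with h' | h'
    · exact Or.inl ⟨hy, h'⟩
    · exact Or.inr ⟨hy, h'⟩

lemma gamma_disj {C : Finset V} (x : V) (i : ℕ) :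
    Disjoint (C.filter fun y => G.dist x y = i) (C.filter fun y => G.dist x y = i+1) := by
  simp only [disjoint_left, mem_filter]
  rintro y ⟨_, h1⟩ ⟨_, h2⟩
  omega

lemma gamma_card_sum (hconn : G.Connected) {C : Finset V} (hCclique : G.IsClique (C : Set V))
    (hC : C.Nonempty) {x : V} {i : ℕ} (hx : distToSet G x C = i) :
    (C.filter fun y => G.dist x y = i).card + (C.filter fun y => G.dist x y = i+1).card
      = C.card := by
  rw [← card_union_of_disjoint (gamma_disj (G := G) x i), gamma_union hconn hCclique hC hx]

lemma gamma_identity (h : IsDRG G D b c) (hD : 1 ≤ D) {θ : ℝ} {u : ℕ → ℝ}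
    (hu : IsStdSeq D b c θ u)
    (hθval : θ = -(b 0 : ℝ) / ((drgA b c 1 : ℝ) + 1))
    (hlast : (c D : ℝ) * u (D - 1) + (drgA b c D : ℝ) * u D = θ * u D)
    {C : Finset V} (hCclique : G.IsClique (C : Set V)) (hCcard : C.card = drgA b c 1 + 2)
    {x : V} {i : ℕ} (hx : distToSet G x C = i) :
    ((C.filter fun y => G.dist x y = i).card : ℝ) * u i
      + ((C.filter fun y => G.dist x y = i+1).card : ℝ) * u (i+1) = 0 := by
  have hC : C.Nonempty := Finset.card_pos.mp (by omega)
  have hf := fvec_zero h hD hu hθval hlast hCclique hCcard x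
  unfold fvec at hf
  rw [← gamma_union h.1 hCclique hC hx, Finset.sum_union (gamma_disj (G := G) x i)] at hf
  have e1 : ∀ y ∈ C.filter (fun y => G.dist x y = i), u (G.dist x y) = u i := by
    intro y hy
    simp only [mem_filter] at hy
    rw [hy.2]
  have e2 : ∀ y ∈ C.filter (fun y => G.dist x y = i+1), u (G.dist x y) = u (i+1) := by
    intro y hy
    simp only [mem_filter] at hy
    rw [hy.2]
  rw [Finset.sum_congr rfl e1, Finset.sum_congr rfl e2, Finset.sum_const, Finset.sum_const,
    nsmul_eq_mul, nsmul_eq_mul] at hf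
  exact hf

lemma gamma_pos {C : Finset V} (hC : C.Nonempty) {x : V} {i : ℕ}
    (hx : distToSet G x C = i) : 1 ≤ (C.filter fun y => G.dist x y = i).card := by
  obtain ⟨y₀, hy₀, hd⟩ := dts_attain (G := G) hC x
  rw [hx] at hd
  refine Finset.card_pos.mpr ⟨y₀, ?_⟩
  simp only [mem_filter]
  exact ⟨hy₀, hd⟩

lemma level_nonzero (h : IsDRG G D b c) (hD : 1 ≤ D) {θ : ℝ} {u : ℕ → ℝ}
    (hu : IsStdSeq D b c θ u)
    (hθval : θ = -(b 0 : ℝ) / ((drgA b c 1 : ℝ) + 1))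
    (hlast : (c D : ℝ) * u (D - 1) + (drgA b c D : ℝ) * u D = θ * u D)
    {C : Finset V} (hCclique : G.IsClique (C : Set V)) (hCcard : C.card = drgA b c 1 + 2)
    {x : V} {i : ℕ} (hx : distToSet G x C = i) : u i ≠ 0 := by
  have hC : C.Nonempty := Finset.card_pos.mp (by omega)
  rcases Nat.eq_zero_or_pos i with rfl | hipos
  · rw [hu.1]; norm_num
  · obtain ⟨m, rfl⟩ : ∃ m, i = m + 1 := ⟨i - 1, by omega⟩
    intro hui
    obtain ⟨z, hadj, hz⟩ := dts_step h.1 hC hx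
    have hid := gamma_identity h hD hu hθval hlast hCclique hCcard hz
    rw [hui, mul_zero, add_zero] at hid
    have hpos := gamma_pos (G := G) hC hz
    have hγne : ((C.filter fun y => G.dist z y = m).card : ℝ) ≠ 0 :=
      Nat.cast_ne_zero.mpr (by omega)
    have hum : u m = 0 := (mul_eq_zero.mp hid).resolve_left hγne
    have hmD : m + 1 ≤ D := by
      rw [← hx]
      exact dts_le_D h hC x
    exact u_no_consec h hu m hmD hum hui

lemma delta_pos (h : IsDRG G D b c) (hD : 1 ≤ D) {θ : ℝ} {u : ℕ → ℝ}
    (hu : IsStdSeq D b c θ u)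
    (hθval : θ = -(b 0 : ℝ) / ((drgA b c 1 : ℝ) + 1))
    (hlast : (c D : ℝ) * u (D - 1) + (drgA b c D : ℝ) * u D = θ * u D)
    {C : Finset V} (hCclique : G.IsClique (C : Set V)) (hCcard : C.card = drgA b c 1 + 2)
    {x : V} {i : ℕ} (hx : distToSet G x C = i) :
    1 ≤ (C.filter fun y => G.dist x y = i+1).card := by
  by_contra h0
  have hzero : (C.filter fun y => G.dist x y = i+1).card = 0 := by omega
  have hid := gamma_identity h hD hu hθval hlast hCclique hCcard hx
  rw [hzero] at hid
  push_cast at hid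
  rw [zero_mul, add_zero] at hid
  have hC : C.Nonempty := Finset.card_pos.mp (by omega)
  have hpos := gamma_pos (G := G) hC hx
  have hγne : ((C.filter fun y => G.dist x y = i).card : ℝ) ≠ 0 :=
    Nat.cast_ne_zero.mpr (by omega)
  exact level_nonzero h hD hu hθval hlast hCclique hCcard hx
    ((mul_eq_zero.mp hid).resolve_left hγne)

lemma dts_le_Dm1 (h : IsDRG G D b c) (hD : 1 ≤ D) {θ : ℝ} {u : ℕ → ℝ}
    (hu : IsStdSeq D b c θ u)
    (hθval : θ = -(b 0 : ℝ) / ((drgA b c 1 : ℝ) + 1))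
    (hlast : (c D : ℝ) * u (D - 1) + (drgA b c D : ℝ) * u D = θ * u D)
    {C : Finset V} (hCclique : G.IsClique (C : Set V)) (hCcard : C.card = drgA b c 1 + 2)
    (x : V) : distToSet G x C ≤ D - 1 := by
  have hC : C.Nonempty := Finset.card_pos.mp (by omega)
  have hle := dts_le_D h hC x
  rcases Nat.lt_or_ge (distToSet G x C) D with h' | h'
  · omega
  · exfalso
    have hxD : distToSet G x C = D := by omega
    have hdelta := delta_pos h hD hu hθval hlast hCclique hCcard hxD
    have hempty : (C.filter fun y => G.dist x y = D+1) = ∅ := by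
      ext y
      simp only [mem_filter, Finset.notMem_empty, iff_false]
      rintro ⟨_, hdist⟩
      have := h.2.1 x y
      omega
    rw [hempty] at hdelta
    simp at hdelta

lemma exists_dts_Dm1 (h : IsDRG G D b c) (hD : 1 ≤ D) {θ : ℝ} {u : ℕ → ℝ}
    (hu : IsStdSeq D b c θ u)
    (hθval : θ = -(b 0 : ℝ) / ((drgA b c 1 : ℝ) + 1))
    (hlast : (c D : ℝ) * u (D - 1) + (drgA b c D : ℝ) * u D = θ * u D)
    {C : Finset V} (hCclique : G.IsClique (C : Set V)) (hCcard : C.card = drgA b c 1 + 2) :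
    ∃ x : V, distToSet G x C = D - 1 := by
  have hC : C.Nonempty := Finset.card_pos.mp (by omega)
  obtain ⟨x₀, hx₀⟩ := hC
  obtain ⟨y, hy⟩ := drg_sphere_nonempty h x₀ (le_refl D)
  refine ⟨y, le_antisymm (dts_le_Dm1 h hD hu hθval hlast hCclique hCcard y) ?_⟩
  obtain ⟨y₁, hy₁, hd₁⟩ := dts_attain (G := G) ⟨x₀, hx₀⟩ y
  have hcl := clique_dist_le hCclique hx₀ hy₁
  have htri := h.1.dist_triangle (u := x₀) (v := y₁) (w := y)
  rw [SimpleGraph.dist_comm (u := y₁) (v := y)] at htri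
  omega

lemma gamma_const (h : IsDRG G D b c) (hD : 1 ≤ D) {θ : ℝ} {u : ℕ → ℝ}
    (hu : IsStdSeq D b c θ u)
    (hθval : θ = -(b 0 : ℝ) / ((drgA b c 1 : ℝ) + 1))
    (hlast : (c D : ℝ) * u (D - 1) + (drgA b c D : ℝ) * u D = θ * u D)
    {C : Finset V} (hCclique : G.IsClique (C : Set V)) (hCcard : C.card = drgA b c 1 + 2)
    {x x' : V} {i : ℕ} (hx : distToSet G x C = i) (hx' : distToSet G x' C = i) :
    (C.filter fun y => G.dist x y = i).card = (C.filter fun y => G.dist x' y = i).card := by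
  have hC : C.Nonempty := Finset.card_pos.mp (by omega)
  have hui : u i ≠ 0 := level_nonzero h hD hu hθval hlast hCclique hCcard hx
  have hid := gamma_identity h hD hu hθval hlast hCclique hCcard hx
  have hid' := gamma_identity h hD hu hθval hlast hCclique hCcard hx'
  have hsum : ((C.filter fun y => G.dist x y = i).card : ℝ)
      + ((C.filter fun y => G.dist x y = i+1).card : ℝ) = (C.card : ℝ) := by
    exact_mod_cast gamma_card_sum h.1 hCclique hC hx
  have hsum' : ((C.filter fun y => G.dist x' y = i).card : ℝ)
      + ((C.filter fun y => G.dist x' y = i+1).card : ℝ) = (C.card : ℝ) := by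
    exact_mod_cast gamma_card_sum h.1 hCclique hC hx'
  have hune : u i - u (i+1) ≠ 0 := by
    intro heq
    have heq' : u (i+1) = u i := by linarith [heq]
    rw [heq'] at hid
    have : (C.card : ℝ) * u i = 0 := by linear_combination hid - u i * hsum
    have hCne : (C.card : ℝ) ≠ 0 := Nat.cast_ne_zero.mpr (by omega)
    exact hui ((mul_eq_zero.mp this).resolve_left hCne)
  have hkey : (((C.filter fun y => G.dist x y = i).card : ℝ)
      - ((C.filter fun y => G.dist x' y = i).card : ℝ)) * (u i - u (i+1)) = 0 := by
    linear_combination hid - hid' - u (i+1) * hsum + u (i+1) * hsum'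
  have := (mul_eq_zero.mp hkey).resolve_right hune
  have : ((C.filter fun y => G.dist x y = i).card : ℝ)
      = ((C.filter fun y => G.dist x' y = i).card : ℝ) := by linarith [this]
  exact_mod_cast this

end DRGAux

namespace DRGAux

variable {V : Type*} [Fintype V] [DecidableEq V] {G : SimpleGraph V} [DecidableRel G.Adj]
variable {D : ℕ} {b c : ℕ → ℕ}

lemma count_down_eq (h : IsDRG G D b c) (hD : 1 ≤ D) {θ : ℝ} {u : ℕ → ℝ}
    (hu : IsStdSeq D b c θ u)
    (hθval : θ = -(b 0 : ℝ) / ((drgA b c 1 : ℝ) + 1))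
    (hlast : (c D : ℝ) * u (D - 1) + (drgA b c D : ℝ) * u D = θ * u D)
    {C : Finset V} (hCclique : G.IsClique (C : Set V)) (hCcard : C.card = drgA b c 1 + 2)
    {i : ℕ} {x z : V}
    (hx : distToSet G x C = i + 1) (hz : distToSet G z C = i) :
    (univ.filter fun y => G.Adj x y ∧ distToSet G y C = i).card
        * (C.filter fun y => G.dist z y = i).card
      = (C.filter fun y => G.dist x y = i+1).card * c (i+1) := by
  have hC : C.Nonempty := Finset.card_pos.mp (by omega)
  have hswap := swap_count (univ.filter fun y : V => G.Adj x y) C (fun y w => G.dist y w = i)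
  have hL : ∑ y ∈ univ.filter (fun y : V => G.Adj x y), (C.filter fun w => G.dist y w = i).card
      = (univ.filter fun y => G.Adj x y ∧ distToSet G y C = i).card
          * (C.filter fun y => G.dist z y = i).card := by
    rw [← Finset.sum_filter_add_sum_filter_not (univ.filter fun y : V => G.Adj x y)
      (fun y => distToSet G y C = i)]
    have hzero : ∑ y ∈ (univ.filter fun y : V => G.Adj x y).filter
        (fun y => ¬ distToSet G y C = i), (C.filter fun w => G.dist y w = i).card = 0 := by
      refine Finset.sum_eq_zero fun y hy => ?_
      simp only [Finset.mem_filter, Finset.mem_univ, true_and] at hy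
      rw [Finset.card_eq_zero]
      ext w
      simp only [Finset.mem_filter, Finset.notMem_empty, iff_false]
      rintro ⟨hwC, hdist⟩
      have h1 : distToSet G y C ≤ i := hdist ▸ dts_le (G := G) hwC y
      have h2 := dts_adj_le h.1 hC hy.1.symm
      omega
    rw [hzero, add_zero]
    have hconst : ∀ y ∈ (univ.filter fun y : V => G.Adj x y).filter
        (fun y => distToSet G y C = i),
        (C.filter fun w => G.dist y w = i).card = (C.filter fun w => G.dist z w = i).card := by
      intro y hy
      simp only [Finset.mem_filter, Finset.mem_univ, true_and] at hy
      exact gamma_const h hD hu hθval hlast hCclique hCcard hy.2 hz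
    rw [Finset.sum_congr rfl hconst, Finset.sum_const, smul_eq_mul, Finset.filter_filter]
  have hR : ∑ w ∈ C, ((univ.filter fun y : V => G.Adj x y).filter
        (fun y => G.dist y w = i)).card
      = (C.filter fun w => G.dist x w = i+1).card * c (i+1) := by
    rw [← Finset.sum_filter_add_sum_filter_not C (fun w => G.dist x w = i+1)]
    have hzero : ∑ w ∈ C.filter (fun w => ¬ G.dist x w = i+1),
        ((univ.filter fun y : V => G.Adj x y).filter (fun y => G.dist y w = i)).card = 0 := by
      refine Finset.sum_eq_zero fun w hw => ?_
      simp only [Finset.mem_filter] at hw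
      have hcases := dist_of_dts h.1 hCclique hC hx hw.1
      have hxw : G.dist x w = i + 2 := by omega
      rw [Finset.card_eq_zero]
      ext y
      simp only [Finset.mem_filter, Finset.mem_univ, true_and, Finset.notMem_empty, iff_false]
      rintro ⟨hadj, hdist⟩
      have hb := adj_dist_bound (G := G) h.1 (x := w) hadj
      have e1 : G.dist w y = G.dist y w := SimpleGraph.dist_comm
      have e2 : G.dist w x = G.dist x w := SimpleGraph.dist_comm
      omega
    rw [hzero, add_zero]
    have hconst : ∀ w ∈ C.filter (fun w => G.dist x w = i+1),
        ((univ.filter fun y : V => G.Adj x y).filter (fun y => G.dist y w = i)).card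
          = c (i+1) := by
      intro w hw
      simp only [Finset.mem_filter] at hw
      have hwx : G.dist w x = i + 1 := by rw [SimpleGraph.dist_comm]; exact hw.2
      have hdrg := (h.2.2.2.2.2 (i+1) (hwx ▸ h.2.1 w x) w x hwx).1
      rw [← hdrg, Finset.filter_filter]
      congr 1
      ext y
      simp only [Finset.mem_filter, Finset.mem_univ, true_and, Nat.add_sub_cancel]
      constructor
      · rintro ⟨h1, h2⟩
        exact ⟨h1, by rw [SimpleGraph.dist_comm]; exact h2⟩
      · rintro ⟨h1, h2⟩
        exact ⟨h1, by rw [SimpleGraph.dist_comm]; exact h2⟩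
    rw [Finset.sum_congr rfl hconst, Finset.sum_const, smul_eq_mul]
  rw [hL, hR] at hswap
  exact hswap

lemma count_up_eq (h : IsDRG G D b c) (hD : 1 ≤ D) {θ : ℝ} {u : ℕ → ℝ}
    (hu : IsStdSeq D b c θ u)
    (hθval : θ = -(b 0 : ℝ) / ((drgA b c 1 : ℝ) + 1))
    (hlast : (c D : ℝ) * u (D - 1) + (drgA b c D : ℝ) * u D = θ * u D)
    {C : Finset V} (hCclique : G.IsClique (C : Set V)) (hCcard : C.card = drgA b c 1 + 2)
    {i : ℕ} {x z : V}
    (hx : distToSet G x C = i) (hz : distToSet G z C = i + 1) :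
    (univ.filter fun y => G.Adj x y ∧ distToSet G y C = i + 1).card
        * (C.filter fun y => G.dist z y = i+2).card
      = (C.filter fun y => G.dist x y = i+1).card * b (i+1) := by
  have hC : C.Nonempty := Finset.card_pos.mp (by omega)
  have hswap := swap_count (univ.filter fun y : V => G.Adj x y) C (fun y w => G.dist y w = i+2)
  have hL : ∑ y ∈ univ.filter (fun y : V => G.Adj x y),
        (C.filter fun w => G.dist y w = i+2).card
      = (univ.filter fun y => G.Adj x y ∧ distToSet G y C = i+1).card
          * (C.filter fun y => G.dist z y = i+2).card := by
    rw [← Finset.sum_filter_add_sum_filter_not (univ.filter fun y : V => G.Adj x y)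
      (fun y => distToSet G y C = i+1)]
    have hzero : ∑ y ∈ (univ.filter fun y : V => G.Adj x y).filter
        (fun y => ¬ distToSet G y C = i+1), (C.filter fun w => G.dist y w = i+2).card = 0 := by
      refine Finset.sum_eq_zero fun y hy => ?_
      simp only [Finset.mem_filter, Finset.mem_univ, true_and] at hy
      rw [Finset.card_eq_zero]
      ext w
      simp only [Finset.mem_filter, Finset.notMem_empty, iff_false]
      rintro ⟨hwC, hdist⟩
      have h2 := dts_adj_le h.1 hC hy.1
      rcases dist_of_dts h.1 hCclique hC (rfl : distToSet G y C = distToSet G y C) hwC with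
        h' | h' <;> omega
    rw [hzero, add_zero]
    have hconst : ∀ y ∈ (univ.filter fun y : V => G.Adj x y).filter
        (fun y => distToSet G y C = i+1),
        (C.filter fun w => G.dist y w = i+2).card
          = (C.filter fun w => G.dist z w = i+2).card := by
      intro y hy
      simp only [Finset.mem_filter, Finset.mem_univ, true_and] at hy
      have hg := gamma_const h hD hu hθval hlast hCclique hCcard hy.2 hz
      have hs1 := gamma_card_sum h.1 hCclique hC hy.2
      have hs2 := gamma_card_sum h.1 hCclique hC hz
      simp only [show i + 1 + 1 = i + 2 by omega] at hs1 hs2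
      omega
    rw [Finset.sum_congr rfl hconst, Finset.sum_const, smul_eq_mul, Finset.filter_filter]
  have hR : ∑ w ∈ C, ((univ.filter fun y : V => G.Adj x y).filter
        (fun y => G.dist y w = i+2)).card
      = (C.filter fun w => G.dist x w = i+1).card * b (i+1) := by
    rw [← Finset.sum_filter_add_sum_filter_not C (fun w => G.dist x w = i+1)]
    have hzero : ∑ w ∈ C.filter (fun w => ¬ G.dist x w = i+1),
        ((univ.filter fun y : V => G.Adj x y).filter (fun y => G.dist y w = i+2)).card = 0 := by
      refine Finset.sum_eq_zero fun w hw => ?_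
      simp only [Finset.mem_filter] at hw
      have hcases := dist_of_dts h.1 hCclique hC hx hw.1
      have hxw : G.dist x w = i := by omega
      rw [Finset.card_eq_zero]
      ext y
      simp only [Finset.mem_filter, Finset.mem_univ, true_and, Finset.notMem_empty, iff_false]
      rintro ⟨hadj, hdist⟩
      have hb := adj_dist_bound (G := G) h.1 (x := w) hadj
      have e1 : G.dist w y = G.dist y w := SimpleGraph.dist_comm
      have e2 : G.dist w x = G.dist x w := SimpleGraph.dist_comm
      omega
    rw [hzero, add_zero]
    have hconst : ∀ w ∈ C.filter (fun w => G.dist x w = i+1),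
        ((univ.filter fun y : V => G.Adj x y).filter (fun y => G.dist y w = i+2)).card
          = b (i+1) := by
      intro w hw
      simp only [Finset.mem_filter] at hw
      have hwx : G.dist w x = i + 1 := by rw [SimpleGraph.dist_comm]; exact hw.2
      have hdrg := (h.2.2.2.2.2 (i+1) (hwx ▸ h.2.1 w x) w x hwx).2
      rw [← hdrg, Finset.filter_filter]
      congr 1
      ext y
      simp only [Finset.mem_filter, Finset.mem_univ, true_and]
      constructor
      · rintro ⟨h1, h2⟩
        exact ⟨h1, by rw [SimpleGraph.dist_comm]; exact h2⟩
      · rintro ⟨h1, h2⟩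
        exact ⟨h1, by rw [SimpleGraph.dist_comm]; exact h2⟩
    rw [Finset.sum_congr rfl hconst, Finset.sum_const, smul_eq_mul]
  rw [hL, hR] at hswap
  exact hswap

end DRGAux

namespace DRGAux

variable {V : Type*} [Fintype V] [DecidableEq V] {G : SimpleGraph V} [DecidableRel G.Adj]
variable {D : ℕ} {b c : ℕ → ℕ}

lemma crc_down (h : IsDRG G D b c) (hD : 1 ≤ D) {θ : ℝ} {u : ℕ → ℝ}
    (hu : IsStdSeq D b c θ u)
    (hθval : θ = -(b 0 : ℝ) / ((drgA b c 1 : ℝ) + 1))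
    (hlast : (c D : ℝ) * u (D - 1) + (drgA b c D : ℝ) * u D = θ * u D)
    {C : Finset V} (hCclique : G.IsClique (C : Set V)) (hCcard : C.card = drgA b c 1 + 2)
    (i : ℕ) :
    ∃ N, ∀ x, distToSet G x C = i + 1 →
      (univ.filter fun y => G.Adj x y ∧ distToSet G y C = i).card = N := by
  by_cases hex : ∃ x, distToSet G x C = i + 1
  · obtain ⟨x₁, hx₁⟩ := hex
    have hC : C.Nonempty := Finset.card_pos.mp (by omega)
    obtain ⟨z₁, hadj₁, hz₁⟩ := dts_step h.1 hC hx₁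
    refine ⟨(univ.filter fun y => G.Adj x₁ y ∧ distToSet G y C = i).card, fun x hx => ?_⟩
    have k1 := count_down_eq h hD hu hθval hlast hCclique hCcard hx hz₁
    have k2 := count_down_eq h hD hu hθval hlast hCclique hCcard hx₁ hz₁
    have hgc := gamma_const h hD hu hθval hlast hCclique hCcard hx hx₁
    rw [hgc] at k1
    have hγpos : 1 ≤ (C.filter fun y => G.dist z₁ y = i).card := gamma_pos (G := G) hC hz₁
    exact Nat.eq_of_mul_eq_mul_right (by omega) (k1.trans k2.symm)
  · exact ⟨0, fun x hx => absurd ⟨x, hx⟩ hex⟩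

lemma crc_up (h : IsDRG G D b c) (hD : 1 ≤ D) {θ : ℝ} {u : ℕ → ℝ}
    (hu : IsStdSeq D b c θ u)
    (hθval : θ = -(b 0 : ℝ) / ((drgA b c 1 : ℝ) + 1))
    (hlast : (c D : ℝ) * u (D - 1) + (drgA b c D : ℝ) * u D = θ * u D)
    {C : Finset V} (hCclique : G.IsClique (C : Set V)) (hCcard : C.card = drgA b c 1 + 2)
    (i : ℕ) :
    ∃ N, ∀ x, distToSet G x C = i →
      (univ.filter fun y => G.Adj x y ∧ distToSet G y C = i + 1).card = N := by
  have hC : C.Nonempty := Finset.card_pos.mp (by omega)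
  by_cases hup : ∃ z, distToSet G z C = i + 1
  · obtain ⟨z₁, hz₁⟩ := hup
    by_cases hex : ∃ x, distToSet G x C = i
    · obtain ⟨x₁, hx₁⟩ := hex
      refine ⟨(univ.filter fun y => G.Adj x₁ y ∧ distToSet G y C = i + 1).card,
        fun x hx => ?_⟩
      have k1 := count_up_eq h hD hu hθval hlast hCclique hCcard hx hz₁
      have k2 := count_up_eq h hD hu hθval hlast hCclique hCcard hx₁ hz₁
      have hgc := gamma_const h hD hu hθval hlast hCclique hCcard hx hx₁
      have hs1 := gamma_card_sum h.1 hCclique hC hx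
      have hs2 := gamma_card_sum h.1 hCclique hC hx₁
      have hδ : (C.filter fun y => G.dist x y = i+1).card
          = (C.filter fun y => G.dist x₁ y = i+1).card := by omega
      rw [hδ] at k1
      have hδpos : 1 ≤ (C.filter fun y => G.dist z₁ y = i+2).card := by
        have := delta_pos h hD hu hθval hlast hCclique hCcard hz₁
        simpa [show i + 1 + 1 = i + 2 by omega] using this
      exact Nat.eq_of_mul_eq_mul_right (by omega) (k1.trans k2.symm)
    · exact ⟨0, fun x hx => absurd ⟨x, hx⟩ hex⟩
  · refine ⟨0, fun x hx => ?_⟩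
    rw [Finset.card_eq_zero]
    ext y
    simp only [Finset.mem_filter, Finset.mem_univ, true_and, Finset.notMem_empty, iff_false]
    rintro ⟨_, hy⟩
    exact hup ⟨y, hy⟩

lemma dts_disj1 {C : Finset V} (x : V) (i : ℕ) :
    Disjoint (univ.filter (fun y => G.Adj x y ∧ distToSet G y C + 1 = i))
      ((univ.filter (fun y => G.Adj x y ∧ distToSet G y C = i)) ∪
       (univ.filter (fun y => G.Adj x y ∧ distToSet G y C = i + 1))) := by
  simp only [disjoint_left, mem_filter, mem_univ, true_and, mem_union]
  rintro y ⟨_, h1⟩ (⟨_, h2⟩ | ⟨_, h2⟩) <;> omega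

lemma dts_disj2 {C : Finset V} (x : V) (i : ℕ) :
    Disjoint (univ.filter (fun y => G.Adj x y ∧ distToSet G y C = i))
      (univ.filter (fun y => G.Adj x y ∧ distToSet G y C = i + 1)) := by
  simp only [disjoint_left, mem_filter, mem_univ, true_and]
  rintro y ⟨_, h1⟩ ⟨_, h2⟩
  omega

lemma nbr_dts_partition (hconn : G.Connected) {C : Finset V} (hC : C.Nonempty) {x : V} {i : ℕ}
    (hx : distToSet G x C = i) :
    univ.filter (fun y => G.Adj x y)
      = (univ.filter (fun y => G.Adj x y ∧ distToSet G y C + 1 = i)) ∪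
        ((univ.filter (fun y => G.Adj x y ∧ distToSet G y C = i)) ∪
         (univ.filter (fun y => G.Adj x y ∧ distToSet G y C = i + 1))) := by
  ext y
  simp only [mem_filter, mem_univ, true_and, mem_union]
  constructor
  · intro hy
    have h1 := dts_adj_le hconn hC hy
    have h2 := dts_adj_le hconn hC hy.symm
    have h3 : distToSet G y C + 1 = i ∨ distToSet G y C = i ∨ distToSet G y C = i + 1 := by
      omega
    rcases h3 with h' | h' | h'
    · exact Or.inl ⟨hy, h'⟩
    · exact Or.inr (Or.inl ⟨hy, h'⟩)
    · exact Or.inr (Or.inr ⟨hy, h'⟩)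
  · rintro (⟨hy, _⟩ | ⟨hy, _⟩ | ⟨hy, _⟩) <;> exact hy

lemma crc_same (h : IsDRG G D b c) (hD : 1 ≤ D) {θ : ℝ} {u : ℕ → ℝ}
    (hu : IsStdSeq D b c θ u)
    (hθval : θ = -(b 0 : ℝ) / ((drgA b c 1 : ℝ) + 1))
    (hlast : (c D : ℝ) * u (D - 1) + (drgA b c D : ℝ) * u D = θ * u D)
    {C : Finset V} (hCclique : G.IsClique (C : Set V)) (hCcard : C.card = drgA b c 1 + 2)
    (i : ℕ) :
    ∃ N, ∀ x, distToSet G x C = i →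
      (univ.filter fun y => G.Adj x y ∧ distToSet G y C = i).card = N := by
  have hC : C.Nonempty := Finset.card_pos.mp (by omega)
  obtain ⟨Nu, hNu⟩ := crc_up h hD hu hθval hlast hCclique hCcard i
  have hNd : ∃ Nd, ∀ x, distToSet G x C = i →
      (univ.filter fun y => G.Adj x y ∧ distToSet G y C + 1 = i).card = Nd := by
    rcases Nat.eq_zero_or_pos i with rfl | hipos
    · refine ⟨0, fun x hx => ?_⟩
      rw [Finset.card_eq_zero]
      ext y
      simp only [mem_filter, mem_univ, true_and, Finset.notMem_empty, iff_false]
      rintro ⟨_, h2⟩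
      omega
    · obtain ⟨m, rfl⟩ : ∃ m, i = m + 1 := ⟨i - 1, by omega⟩
      obtain ⟨Nd, hNd⟩ := crc_down h hD hu hθval hlast hCclique hCcard m
      refine ⟨Nd, fun x hx => ?_⟩
      have := hNd x hx
      rw [← this]
      congr 1
      ext y
      simp only [mem_filter, mem_univ, true_and]
      constructor
      · rintro ⟨h1, h2⟩; exact ⟨h1, by omega⟩
      · rintro ⟨h1, h2⟩; exact ⟨h1, by omega⟩
  obtain ⟨Nd, hNd⟩ := hNd
  refine ⟨b 0 - Nd - Nu, fun x hx => ?_⟩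
  have hdeg := drg_degree h x
  rw [nbr_dts_partition h.1 hC hx, card_union_of_disjoint (dts_disj1 (C := C) x i),
    card_union_of_disjoint (dts_disj2 (C := C) x i)] at hdeg
  have e1 := hNd x hx
  have e2 := hNu x hx
  omega

lemma crc_all (h : IsDRG G D b c) (hD : 1 ≤ D) {θ : ℝ} {u : ℕ → ℝ}
    (hu : IsStdSeq D b c θ u)
    (hθval : θ = -(b 0 : ℝ) / ((drgA b c 1 : ℝ) + 1))
    (hlast : (c D : ℝ) * u (D - 1) + (drgA b c D : ℝ) * u D = θ * u D)
    {C : Finset V} (hCclique : G.IsClique (C : Set V)) (hCcard : C.card = drgA b c 1 + 2)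
    (i j : ℕ) :
    ∃ N, ∀ x, distToSet G x C = i →
      (univ.filter fun y => G.Adj x y ∧ distToSet G y C = j).card = N := by
  have hC : C.Nonempty := Finset.card_pos.mp (by omega)
  by_cases hij : j + 1 = i
  · subst hij
    exact crc_down h hD hu hθval hlast hCclique hCcard j
  · by_cases hij2 : j = i
    · subst hij2
      exact crc_same h hD hu hθval hlast hCclique hCcard j
    · by_cases hij3 : j = i + 1
      · subst hij3
        exact crc_up h hD hu hθval hlast hCclique hCcard i
      · refine ⟨0, fun x hx => ?_⟩
        rw [Finset.card_eq_zero]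
        ext y
        simp only [mem_filter, mem_univ, true_and, Finset.notMem_empty, iff_false]
        rintro ⟨hadj, hdts⟩
        have h1 := dts_adj_le h.1 hC hadj
        have h2 := dts_adj_le h.1 hC hadj.symm
        omega

end DRGAux



open DRGAux in
/-- In a geometric distance-regular graph with smallest eigenvalue `θmin = -k/(a₁+1)`
and standard sequence `u` associated with `θmin`, every clique `C` with `a₁ + 2` vertices
is a completely regular code with covering radius `D - 1`, and for every `0 ≤ i ≤ D-1` and
every vertex `x` with `d(x,C) = i`, writing `γ = |Γᵢ(x) ∩ C|`, one has
`γ * u i + (a₁ + 2 - γ) * u (i+1) = 0`. -/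
theorem stmt_2 {V : Type*} [Fintype V] (G : SimpleGraph V) [DecidableRel G.Adj]
    (D : ℕ) (b c : ℕ → ℕ) (hDRG : IsDRG G D b c)
    (θmin : ℝ) (hθ : IsSmallestAdjEigenvalue G θmin)
    (hθval : θmin = -(b 0 : ℝ) / ((drgA b c 1 : ℝ) + 1))
    (𝒞 : Set (Finset V)) (hgeo : IsGeometricWith G (b 0) θmin 𝒞)
    (u : ℕ → ℝ) (hu : IsStdSeq D b c θmin u)
    (C : Finset V) (hCclique : G.IsClique (C : Set V)) (hCcard : C.card = drgA b c 1 + 2) :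
    IsCompletelyRegularCode G C ∧
    ((∀ x : V, distToSet G x C ≤ D - 1) ∧ (∃ x : V, distToSet G x C = D - 1)) ∧
    ∀ i, i ≤ D - 1 → ∀ x : V, distToSet G x C = i →
      ((C.filter (fun y => G.dist x y = i)).card : ℝ) * u i +
        ((drgA b c 1 : ℝ) + 2 - ((C.filter (fun y => G.dist x y = i)).card : ℝ)) * u (i + 1)
          = 0 := by
  classical
  rcases Nat.eq_zero_or_pos D with hD0 | hDpos
  · exfalso
    subst hD0
    have hsub : ∀ x y : V, x = y := fun x y =>
      (hDRG.1.dist_eq_zero_iff).mp (Nat.le_zero.mp (hDRG.2.1 x y))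
    have h1 : Fintype.card V ≤ 1 := Fintype.card_le_one_iff.mpr fun a b => hsub a b
    have h2 : C.card ≤ Fintype.card V := Finset.card_le_univ C
    omega
  · have hD : 1 ≤ D := hDpos
    have hlast := drg_last_recur hDRG hD hθ.1 hu
    refine ⟨?_, ⟨?_, ?_⟩, ?_⟩
    · intro i j
      exact crc_all hDRG hD hu hθval hlast hCclique hCcard i j
    · exact fun x => dts_le_Dm1 hDRG hD hu hθval hlast hCclique hCcard x
    · exact exists_dts_Dm1 hDRG hD hu hθval hlast hCclique hCcard
    · intro i _ x hx
      have hC : C.Nonempty := Finset.card_pos.mp (by omega)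
      have hid := gamma_identity hDRG hD hu hθval hlast hCclique hCcard hx
      have hsum := gamma_card_sum hDRG.1 hCclique hC hx
      rw [hCcard] at hsum
      have hs : ((C.filter fun y => G.dist x y = i).card : ℝ)
          + ((C.filter fun y => G.dist x y = i+1).card : ℝ)
          = (drgA b c 1 : ℝ) + 2 := by exact_mod_cast hsum
      have hδ : ((drgA b c 1 : ℝ) + 2 - ((C.filter fun y => G.dist x y = i).card : ℝ))
          = ((C.filter fun y => G.dist x y = i+1).card : ℝ) := by linarith
      rw [hδ]
      exact hid
end

section
/- Let Γ be a geometric distance-regular graph with diameter D ≥ 2, geometric with respect to the collection 𝒞 of Delsarte cliques, and suppose there is a function γ : {0,…,D−1} → ℕ such that for every C ∈ 𝒞, every 0 ≤ i ≤ D−1 and every vertex x with d(x,C) = i one has |Γ_i(x) ∩ C| = γ_i. Then γ_{D−1} = 1 if and only if a_i = c_i · a_1 for all 1 ≤ i ≤ D (i.e., Γ is a regular near 2D-gon). -/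
open Finset

section WalkAux
open SimpleGraph Finset
variable {V : Type*} {G : SimpleGraph V}

lemma aux_dist_getVert_le (hc : G.Connected) {x y : V} (p : G.Walk x y) :
    ∀ i, G.dist x (p.getVert i) ≤ i := by
  induction p with
  | nil => intro i; simp [SimpleGraph.Walk.getVert, SimpleGraph.dist_self]
  | @cons u v w h q ih =>
    intro i
    match i with
    | 0 => simp
    | (i+1) =>
      have h2 : (SimpleGraph.Walk.cons h q).getVert (i+1) = q.getVert i := rfl
      rw [h2]
      have h3 := hc.dist_triangle (u := u) (v := v) (w := q.getVert i)
      have h4 := (SimpleGraph.dist_eq_one_iff_adj (G := G)).mpr h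
      have h5 := ih i
      omega

lemma aux_getVert_dist_le {x y : V} (p : G.Walk x y) :
    ∀ i, G.dist (p.getVert i) y ≤ p.length - i := by
  induction p with
  | nil => intro i; simp [SimpleGraph.Walk.getVert, SimpleGraph.dist_self]
  | cons h q ih =>
    intro i
    match i with
    | 0 =>
      have h2 : (SimpleGraph.Walk.cons h q).getVert 0 = _ := SimpleGraph.Walk.getVert_zero _
      rw [h2]
      have := SimpleGraph.dist_le (SimpleGraph.Walk.cons h q)
      simpa using this
    | (i+1) =>
      have h2 : (SimpleGraph.Walk.cons h q).getVert (i+1) = q.getVert i := rfl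
      rw [h2]
      have h5 := ih i
      have h6 : (SimpleGraph.Walk.cons h q).length = q.length + 1 := SimpleGraph.Walk.length_cons _ _
      omega

lemma aux_exists_dist_split (hc : G.Connected) {x y : V} {n : ℕ} (hxy : G.dist x y = n)
    {i : ℕ} (hi : i ≤ n) : ∃ z : V, G.dist x z = i ∧ G.dist z y = n - i := by
  obtain ⟨p, hp⟩ := hc.exists_walk_length_eq_dist x y
  refine ⟨p.getVert i, ?_, ?_⟩ <;>
  · have h1 := aux_dist_getVert_le hc p i
    have h2 := aux_getVert_dist_le p i
    have h3 := hc.dist_triangle (u := x) (v := p.getVert i) (w := y)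
    omega

lemma aux_exists_adj_dist (hc : G.Connected) {x y : V} {i : ℕ} (hxy : G.dist x y = i)
    (hi : 1 ≤ i) : ∃ w : V, G.Adj y w ∧ G.dist x w = i - 1 := by
  obtain ⟨z, hz1, hz2⟩ := aux_exists_dist_split hc hxy (i := i - 1) (by omega)
  have : G.dist z y = 1 := by omega
  exact ⟨z, (SimpleGraph.dist_eq_one_iff_adj.mp this).symm, hz1⟩

end WalkAux
section DRGAux
open SimpleGraph Finset
variable {V : Type*} [Fintype V] [DecidableEq V] {G : SimpleGraph V} [DecidableRel G.Adj] {D : ℕ} {b c : ℕ → ℕ}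

lemma aux_degree (h : IsDRG G D b c) (x : V) :
    (univ.filter fun z => G.Adj x z).card = b 0 := by
  have h0 := (h.2.2.2.2.2 0 (Nat.zero_le D) x x (SimpleGraph.dist_self)).2
  rw [← h0]
  apply congrArg
  apply Finset.filter_congr
  intro z _
  simp only [zero_add]
  constructor
  · intro hz; exact ⟨hz, SimpleGraph.dist_eq_one_iff_adj.mpr hz⟩
  · intro hz; exact hz.1

lemma aux_nbr_bounds (hc : G.Connected) {x y z : V} {i : ℕ} (hxy : G.dist x y = i)
    (hz : G.Adj x z) : G.dist y z ≤ i + 1 ∧ i ≤ G.dist y z + 1 := by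
  have h1 : G.dist x z = 1 := SimpleGraph.dist_eq_one_iff_adj.mpr hz
  have h2 := hc.dist_triangle (u := y) (v := x) (w := z)
  have h3 := hc.dist_triangle (u := x) (v := z) (w := y)
  have h4 : G.dist y x = i := by rwa [SimpleGraph.dist_comm]
  have h5 : G.dist z y = G.dist y z := SimpleGraph.dist_comm
  have h6 : G.dist x y = i := hxy
  omega

lemma aux_nbr_split (hc : G.Connected) {x y : V} {i : ℕ} (hxy : G.dist x y = i) :
    (univ.filter fun z => G.Adj x z)
      = ((univ.filter fun z => G.Adj x z ∧ G.dist y z = i - 1) ∪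
          (univ.filter fun z => G.Adj x z ∧ G.dist y z = i)) ∪
          (univ.filter fun z => G.Adj x z ∧ G.dist y z = i + 1) := by
  ext z
  simp only [mem_filter, mem_union, mem_univ, true_and]
  constructor
  · intro hz
    have hb := aux_nbr_bounds hc hxy hz
    have : G.dist y z = i - 1 ∨ G.dist y z = i ∨ G.dist y z = i + 1 := by omega
    tauto
  · tauto

lemma aux_count_c (h : IsDRG G D b c) {x y : V} {i : ℕ} (hxy : G.dist x y = i) :
    (univ.filter fun z => G.Adj x z ∧ G.dist y z = i - 1).card = c i := by
  have hD : i ≤ D := hxy ▸ h.2.1 x y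
  exact (h.2.2.2.2.2 i hD y x (by rwa [SimpleGraph.dist_comm])).1

lemma aux_count_b (h : IsDRG G D b c) {x y : V} {i : ℕ} (hxy : G.dist x y = i) :
    (univ.filter fun z => G.Adj x z ∧ G.dist y z = i + 1).card = b i := by
  have hD : i ≤ D := hxy ▸ h.2.1 x y
  exact (h.2.2.2.2.2 i hD y x (by rwa [SimpleGraph.dist_comm])).2

lemma aux_count_sum (h : IsDRG G D b c) {x y : V} {i : ℕ} (hxy : G.dist x y = i)
    (hi : 1 ≤ i) :
    c i + (univ.filter fun z => G.Adj x z ∧ G.dist y z = i).card + b i = b 0 := by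
  have hsplit := aux_nbr_split h.1 hxy
  have hd1 : Disjoint (univ.filter fun z => G.Adj x z ∧ G.dist y z = i - 1)
      (univ.filter fun z => G.Adj x z ∧ G.dist y z = i) := by
    rw [Finset.disjoint_filter]
    intro z _ hz1 hz2
    omega
  have hd2 : Disjoint ((univ.filter fun z => G.Adj x z ∧ G.dist y z = i - 1) ∪
      (univ.filter fun z => G.Adj x z ∧ G.dist y z = i))
      (univ.filter fun z => G.Adj x z ∧ G.dist y z = i + 1) := by
    rw [Finset.disjoint_union_left]
    constructor <;>
    · rw [Finset.disjoint_filter]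
      intro z _ hz1 hz2
      omega
  have hcard : (univ.filter fun z => G.Adj x z).card
      = (univ.filter fun z => G.Adj x z ∧ G.dist y z = i - 1).card
        + (univ.filter fun z => G.Adj x z ∧ G.dist y z = i).card
        + (univ.filter fun z => G.Adj x z ∧ G.dist y z = i + 1).card := by
    rw [hsplit, Finset.card_union_of_disjoint hd2, Finset.card_union_of_disjoint hd1]
  rw [aux_degree h x, aux_count_c h hxy, aux_count_b h hxy] at hcard
  omega

lemma aux_count_a (h : IsDRG G D b c) {x y : V} {i : ℕ} (hxy : G.dist x y = i)
    (hi : 1 ≤ i) :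
    (univ.filter fun z => G.Adj x z ∧ G.dist y z = i).card = drgA b c i := by
  have := aux_count_sum h hxy hi
  unfold drgA
  omega

lemma aux_exists_pair (h : IsDRG G D b c) {i : ℕ} (hi : i ≤ D) :
    ∃ x y : V, G.dist x y = i := by
  obtain ⟨x, y, hxy⟩ := h.2.2.1
  obtain ⟨z, hz, -⟩ := aux_exists_dist_split h.1 hxy hi
  exact ⟨x, z, hz⟩

lemma aux_c_pos (h : IsDRG G D b c) {i : ℕ} (h1 : 1 ≤ i) (hiD : i ≤ D) : 1 ≤ c i := by
  obtain ⟨x, y, hxy⟩ := aux_exists_pair h hiD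
  obtain ⟨w, hw1, hw2⟩ := aux_exists_adj_dist h.1 hxy h1
  have := aux_count_c h (by rwa [SimpleGraph.dist_comm] : G.dist y x = i)
  rw [← this]
  apply Finset.card_pos.mpr
  exact ⟨w, by simp [hw1, hw2]⟩

lemma aux_b0_pos (h : IsDRG G D b c) (hD : 1 ≤ D) : 1 ≤ b 0 := by
  obtain ⟨x, y, hxy⟩ := aux_exists_pair h hD
  have hadj : G.Adj x y := SimpleGraph.dist_eq_one_iff_adj.mp hxy
  rw [← aux_degree h x]
  exact Finset.card_pos.mpr ⟨y, by simp [hadj]⟩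

lemma aux_exists_edge (h : IsDRG G D b c) (hD : 1 ≤ D) : ∃ x y : V, G.Adj x y := by
  obtain ⟨x, y, hxy⟩ := aux_exists_pair h hD
  exact ⟨x, y, SimpleGraph.dist_eq_one_iff_adj.mp hxy⟩

end DRGAux

section DistSetAux
open SimpleGraph Finset
variable {V : Type*} (G : SimpleGraph V) {C : Finset V}

lemma distToSet_le_dist {x y : V} (hy : y ∈ C) : distToSet G x C ≤ G.dist x y :=
  Nat.sInf_le ⟨y, by simpa using hy, rfl⟩

lemma exists_distToSet_attain (hC : C.Nonempty) (x : V) :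
    ∃ y ∈ C, G.dist x y = distToSet G x C := by
  have hne : ((fun c => G.dist x c) '' (C : Set V)).Nonempty := by
    obtain ⟨y, hy⟩ := hC
    exact ⟨G.dist x y, ⟨y, by simpa using hy, rfl⟩⟩
  have := Nat.sInf_mem hne
  obtain ⟨y, hy1, hy2⟩ := this
  exact ⟨y, by simpa using hy1, hy2⟩

lemma clique_dist_le_one (hc : G.Connected) (hclq : G.IsClique (C : Set V)) {y z : V}
    (hy : y ∈ C) (hz : z ∈ C) : G.dist y z ≤ 1 := by
  by_cases hyz : y = z
  · subst hyz; simp [SimpleGraph.dist_self]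
  · exact le_of_eq (SimpleGraph.dist_eq_one_iff_adj.mpr (hclq hy hz hyz))

lemma dist_mem_le_distToSet_add_one (hc : G.Connected) (hclq : G.IsClique (C : Set V))
    (hC : C.Nonempty) {x y : V} (hy : y ∈ C) :
    G.dist x y ≤ distToSet G x C + 1 := by
  obtain ⟨w, hw1, hw2⟩ := exists_distToSet_attain G hC x
  have h1 := hc.dist_triangle (u := x) (v := w) (w := y)
  have h2 := clique_dist_le_one G hc hclq hw1 hy
  omega

end DistSetAux
section SpecToolkit
open Finset Matrix
variable {V : Type*} [Fintype V] [DecidableEq V]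

lemma aux_decomp (B : OrthonormalBasis V ℝ (EuclideanSpace ℝ V)) (w : V → ℝ) :
    w = ∑ j, (⇑(B j) ⬝ᵥ w) • ⇑(B j) := by
  set E := WithLp.linearEquiv 2 ℝ (V → ℝ) with hE
  have h := (B.sum_repr (E.symm w)).symm
  have h2 : ∀ j, B.repr (E.symm w) j = ⇑(B j) ⬝ᵥ w := by
    intro j
    rw [B.repr_apply_apply]
    simp only [PiLp.inner_apply, RCLike.inner_apply, dotProduct]
    refine Finset.sum_congr rfl fun x _ => ?_
    have : (E.symm w) x = w x := rfl
    rw [this, starRingEnd_apply, star_trivial]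
    exact mul_comm _ _
  calc w = E (E.symm w) := rfl
    _ = E (∑ j, B.repr (E.symm w) j • B j) := by rw [← h]
    _ = ∑ j, (⇑(B j) ⬝ᵥ w) • ⇑(B j) := by
        rw [map_sum]
        refine Finset.sum_congr rfl fun j _ => ?_
        rw [LinearEquiv.map_smul, h2 j]
        rfl

lemma aux_mulVec_sumf {M : Matrix V V ℝ} {ι : Type*} (s : Finset ι) (f : ι → (V → ℝ)) :
    M *ᵥ (∑ j ∈ s, f j) = ∑ j ∈ s, M *ᵥ (f j) := by
  classical
  induction s using Finset.induction with
  | empty => simp [Matrix.mulVec_zero]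
  | insert _ _ h ih => rw [Finset.sum_insert h, Finset.sum_insert h, Matrix.mulVec_add, ih]

lemma aux_dotProduct_sumf {ι : Type*} (w : V → ℝ) (s : Finset ι) (f : ι → (V → ℝ)) :
    w ⬝ᵥ (∑ j ∈ s, f j) = ∑ j ∈ s, w ⬝ᵥ (f j) := by
  classical
  induction s using Finset.induction with
  | empty => simp
  | insert _ _ h ih => rw [Finset.sum_insert h, Finset.sum_insert h, dotProduct_add, ih]

lemma aux_spec_mulVec (B : OrthonormalBasis V ℝ (EuclideanSpace ℝ V)) (M : Matrix V V ℝ)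
    (ν : V → ℝ) (hM : ∀ j, M *ᵥ ⇑(B j) = ν j • ⇑(B j)) (w : V → ℝ) :
    M *ᵥ w = ∑ j, (ν j * (⇑(B j) ⬝ᵥ w)) • ⇑(B j) := by
  conv_lhs => rw [aux_decomp B w]
  rw [aux_mulVec_sumf]
  refine Finset.sum_congr rfl fun j _ => ?_
  rw [Matrix.mulVec_smul, hM j, smul_smul, mul_comm]

lemma aux_matrix_ext_basis (B : OrthonormalBasis V ℝ (EuclideanSpace ℝ V)) {M N : Matrix V V ℝ}
    (h : ∀ j, M *ᵥ ⇑(B j) = N *ᵥ ⇑(B j)) : M = N := by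
  have key : ∀ w : V → ℝ, M *ᵥ w = N *ᵥ w := by
    intro w
    conv_lhs => rw [aux_decomp B w]
    conv_rhs => rw [aux_decomp B w]
    rw [aux_mulVec_sumf, aux_mulVec_sumf]
    exact Finset.sum_congr rfl fun j _ => by rw [Matrix.mulVec_smul, Matrix.mulVec_smul, h j]
  ext x y
  have := congrFun (key (Pi.single y 1)) x
  rw [Matrix.mulVec_single, Matrix.mulVec_single] at this
  simpa using this

lemma aux_quad_form (B : OrthonormalBasis V ℝ (EuclideanSpace ℝ V)) (M : Matrix V V ℝ)
    (ν : V → ℝ) (hM : ∀ j, M *ᵥ ⇑(B j) = ν j • ⇑(B j)) (w : V → ℝ) :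
    w ⬝ᵥ (M *ᵥ w) = ∑ j, ν j * (⇑(B j) ⬝ᵥ w)^2 := by
  rw [aux_spec_mulVec B M ν hM w, aux_dotProduct_sumf]
  refine Finset.sum_congr rfl fun j _ => ?_
  rw [dotProduct_smul, dotProduct_comm]
  rw [smul_eq_mul]; ring

lemma aux_pow_mulVec (M : Matrix V V ℝ) (v : V → ℝ) (μ : ℝ) (hv : M *ᵥ v = μ • v) (n : ℕ) :
    (M ^ n) *ᵥ v = (μ ^ n) • v := by
  induction n with
  | zero => simp
  | succ n ih =>
    rw [pow_succ, ← Matrix.mulVec_mulVec, hv, Matrix.mulVec_smul, ih, smul_smul, pow_succ]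
    ring_nf

lemma aux_sum_mulVec {ι : Type*} (s : Finset ι) (f : ι → Matrix V V ℝ) (v : V → ℝ) :
    (∑ j ∈ s, f j) *ᵥ v = ∑ j ∈ s, (f j) *ᵥ v := by
  classical
  induction s using Finset.induction with
  | empty => simp [Matrix.zero_mulVec]
  | insert _ _ h ih => rw [Finset.sum_insert h, Finset.sum_insert h, Matrix.add_mulVec, ih]

lemma aux_aeval_mulVec (M : Matrix V V ℝ) (v : V → ℝ) (μ : ℝ) (hv : M *ᵥ v = μ • v)
    (p : Polynomial ℝ) : (Polynomial.aeval M p) *ᵥ v = (p.eval μ) • v := by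
  rw [Polynomial.aeval_eq_sum_range, Polynomial.eval_eq_sum_range]
  rw [aux_sum_mulVec, Finset.sum_smul]
  refine Finset.sum_congr rfl fun k _ => ?_
  rw [Matrix.smul_mulVec, aux_pow_mulVec M v μ hv k, smul_smul]

lemma aux_dot_mulVec_symm {M : Matrix V V ℝ} (hsym : ∀ x z, M x z = M z x) (u v : V → ℝ) :
    u ⬝ᵥ (M *ᵥ v) = (M *ᵥ u) ⬝ᵥ v := by
  simp only [dotProduct, Matrix.mulVec, dotProduct, Finset.mul_sum, Finset.sum_mul]
  rw [Finset.sum_comm]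
  exact Finset.sum_congr rfl fun z _ => Finset.sum_congr rfl fun x _ => by rw [hsym x z]; ring

end SpecToolkit
section EntryReg
open SimpleGraph Finset Matrix
variable {V : Type*} [Fintype V] [DecidableEq V] {G : SimpleGraph V} [DecidableRel G.Adj]
  {D : ℕ} {b c : ℕ → ℕ}

lemma aux_sum_nbr (h : IsDRG G D b c) {x y : V} {i : ℕ} (hxy : G.dist x y = i) (f : ℕ → ℝ) :
    ∑ z ∈ univ.filter (fun z => G.Adj x z), f (G.dist y z)
      = (c i : ℝ) * f (i - 1) + (drgA b c i : ℝ) * f i + (b i : ℝ) * f (i + 1) := by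
  rcases Nat.eq_zero_or_pos i with hi | hi
  · subst hi
    have hxy0 : x = y := (h.1.dist_eq_zero_iff).mp hxy
    subst hxy0
    have hcongr : ∀ z ∈ univ.filter (fun z => G.Adj x z), f (G.dist x z) = f 1 := by
      intro z hz
      simp only [mem_filter, mem_univ, true_and] at hz
      rw [SimpleGraph.dist_eq_one_iff_adj.mpr hz]
    rw [Finset.sum_congr rfl hcongr, Finset.sum_const, aux_degree h x]
    have hc0 : c 0 = 0 := h.2.2.2.2.1
    have hd0 : drgA b c 0 = 0 := by unfold drgA; omega
    rw [hc0, hd0]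
    simp [nsmul_eq_mul]
  · have hd1 : Disjoint (univ.filter fun z => G.Adj x z ∧ G.dist y z = i - 1)
        (univ.filter fun z => G.Adj x z ∧ G.dist y z = i) := by
      rw [Finset.disjoint_filter]
      intro z _ hz1 hz2
      omega
    have hd2 : Disjoint ((univ.filter fun z => G.Adj x z ∧ G.dist y z = i - 1) ∪
        (univ.filter fun z => G.Adj x z ∧ G.dist y z = i))
        (univ.filter fun z => G.Adj x z ∧ G.dist y z = i + 1) := by
      rw [Finset.disjoint_union_left]
      constructor <;>
      · rw [Finset.disjoint_filter]
        intro z _ hz1 hz2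
        omega
    rw [aux_nbr_split h.1 hxy, Finset.sum_union hd2, Finset.sum_union hd1]
    have e1 : ∑ z ∈ univ.filter (fun z => G.Adj x z ∧ G.dist y z = i - 1), f (G.dist y z)
        = (c i : ℝ) * f (i - 1) := by
      rw [Finset.sum_congr rfl (fun z hz => by
        simp only [mem_filter, mem_univ, true_and] at hz
        rw [hz.2] : ∀ z ∈ univ.filter (fun z => G.Adj x z ∧ G.dist y z = i - 1),
          f (G.dist y z) = f (i-1)), Finset.sum_const, aux_count_c h hxy, nsmul_eq_mul]
    have e2 : ∑ z ∈ univ.filter (fun z => G.Adj x z ∧ G.dist y z = i), f (G.dist y z)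
        = (drgA b c i : ℝ) * f i := by
      rw [Finset.sum_congr rfl (fun z hz => by
        simp only [mem_filter, mem_univ, true_and] at hz
        rw [hz.2] : ∀ z ∈ univ.filter (fun z => G.Adj x z ∧ G.dist y z = i),
          f (G.dist y z) = f i), Finset.sum_const, aux_count_a h hxy hi, nsmul_eq_mul]
    have e3 : ∑ z ∈ univ.filter (fun z => G.Adj x z ∧ G.dist y z = i + 1), f (G.dist y z)
        = (b i : ℝ) * f (i + 1) := by
      rw [Finset.sum_congr rfl (fun z hz => by
        simp only [mem_filter, mem_univ, true_and] at hz
        rw [hz.2] : ∀ z ∈ univ.filter (fun z => G.Adj x z ∧ G.dist y z = i + 1),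
          f (G.dist y z) = f (i+1)), Finset.sum_const, aux_count_b h hxy, nsmul_eq_mul]
    rw [e1, e2, e3]

noncomputable def auxAlpha (b c : ℕ → ℕ) : ℕ → ℕ → ℝ
  | 0, i => if i = 0 then 1 else 0
  | (k+1), i => (c i : ℝ) * auxAlpha b c k (i - 1) + (drgA b c i : ℝ) * auxAlpha b c k i
      + (b i : ℝ) * auxAlpha b c k (i + 1)

lemma aux_pow_entry (h : IsDRG G D b c) (k : ℕ) (x y : V) :
    ((G.adjMatrix ℝ) ^ k) x y = auxAlpha b c k (G.dist x y) := by
  induction k generalizing x y with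
  | zero =>
    rw [pow_zero, Matrix.one_apply]
    by_cases hxy : x = y
    · subst hxy; simp [auxAlpha, SimpleGraph.dist_self]
    · have : G.dist x y ≠ 0 := fun h0 => hxy ((h.1.dist_eq_zero_iff).mp h0)
      simp [auxAlpha, hxy, this]
  | succ k ih =>
    rw [pow_succ', SimpleGraph.adjMatrix_mul_apply]
    have hrw : ∀ z ∈ G.neighborFinset x, ((G.adjMatrix ℝ) ^ k) z y
        = auxAlpha b c k (G.dist y z) := by
      intro z hz
      rw [ih z y, SimpleGraph.dist_comm]
    rw [Finset.sum_congr rfl hrw]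
    rw [show G.neighborFinset x = univ.filter (fun z => G.Adj x z) from by
      ext z; simp [SimpleGraph.mem_neighborFinset]]
    rw [aux_sum_nbr h rfl (auxAlpha b c k)]
    rfl

noncomputable def auxPhi (b c : ℕ → ℕ) (p : Polynomial ℝ) (i : ℕ) : ℝ :=
  ∑ k ∈ Finset.range (p.natDegree + 1), p.coeff k * auxAlpha b c k i

lemma aux_poly_entry (h : IsDRG G D b c) (p : Polynomial ℝ) (x y : V) :
    (Polynomial.aeval (G.adjMatrix ℝ) p) x y = auxPhi b c p (G.dist x y) := by
  rw [Polynomial.aeval_eq_sum_range, auxPhi]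
  rw [Matrix.sum_apply]
  refine Finset.sum_congr rfl fun k _ => ?_
  rw [Matrix.smul_apply, aux_pow_entry h k x y, smul_eq_mul]

end EntryReg
section CoveringRadius
open SimpleGraph Finset Matrix
variable {V : Type*} [Fintype V] [DecidableEq V] {G : SimpleGraph V} [DecidableRel G.Adj]
  {D : ℕ} {b c : ℕ → ℕ}

lemma aux_adj_hermitian (G : SimpleGraph V) [DecidableRel G.Adj] :
    (G.adjMatrix ℝ).IsHermitian := by
  rw [Matrix.IsHermitian]
  ext i j
  simp [Matrix.conjTranspose_apply, SimpleGraph.adjMatrix_apply, SimpleGraph.adj_comm]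

lemma aux_covering_radius (h : IsDRG G D b c) (hD : 1 ≤ D)
    {θ : ℝ} (hθ : IsSmallestAdjEigenvalue G θ)
    {C : Finset V} (hclq : G.IsClique (C : Set V))
    (hcard : (C.card : ℝ) = 1 - (b 0 : ℝ) / θ) (hCne : C.Nonempty)
    (x : V) : distToSet G x C ≠ D := by
  intro hdist
  have hA : (G.adjMatrix ℝ).IsHermitian := aux_adj_hermitian G
  set B := hA.eigenvectorBasis with hB
  set μ := hA.eigenvalues with hμ
  have hμeig : ∀ j, (G.adjMatrix ℝ) *ᵥ ⇑(B j) = μ j • ⇑(B j) := hA.mulVec_eigenvectorBasis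
  have hBne : ∀ j, ⇑(B j) ≠ (0 : V → ℝ) := by
    intro j h0
    have hnorm : ‖B j‖ = 1 := B.orthonormal.1 j
    rw [EuclideanSpace.norm_eq] at hnorm
    have hz : ∀ z : V, B j z = 0 := fun z => congrFun h0 z
    simp only [hz, norm_zero] at hnorm
    norm_num at hnorm
  have hθeig : ∀ j, θ ≤ μ j := fun j => hθ.2 _ ⟨⇑(B j), hBne j, hμeig j⟩
  -- θ < 0
  have hθneg : θ < 0 := by
    obtain ⟨x0, y0, hadj⟩ := aux_exists_edge h hD
    set w : V → ℝ := Pi.single x0 1 - Pi.single y0 1 with hw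
    have hquad := aux_quad_form B (G.adjMatrix ℝ) μ hμeig w
    have hlhs : w ⬝ᵥ ((G.adjMatrix ℝ) *ᵥ w) = -2 := by
      rw [hw, Matrix.mulVec_sub, Matrix.mulVec_single, Matrix.mulVec_single]
      rw [sub_dotProduct, single_dotProduct, single_dotProduct]
      simp only [Pi.sub_apply]
      simp [SimpleGraph.adjMatrix_apply, hadj, hadj.symm, G.irrefl, G.ne_of_adj hadj]
      norm_num
    rw [hlhs] at hquad
    have hex : ∃ j, μ j * ((⇑(B j) ⬝ᵥ w) ^ 2) < 0 := by
      by_contra hno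
      push_neg at hno
      have : (0:ℝ) ≤ ∑ j, μ j * ((⇑(B j) ⬝ᵥ w) ^ 2) := Finset.sum_nonneg fun j _ => hno j
      rw [← hquad] at this
      linarith
    obtain ⟨j, hj⟩ := hex
    have hsq : (0:ℝ) ≤ (⇑(B j) ⬝ᵥ w) ^ 2 := sq_nonneg _
    have hμj : μ j < 0 := by nlinarith
    exact lt_of_le_of_lt (hθeig j) hμj
  have hk : 1 ≤ b 0 := aux_b0_pos h hD
  have hkR : (0:ℝ) < (b 0 : ℝ) := by exact_mod_cast hk
  -- interpolation polynomial
  set R : Finset ℝ := Finset.image μ Finset.univ with hR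
  set r : ℝ → ℝ := fun t => if t = θ then 1 else 0 with hr
  set p : Polynomial ℝ := Lagrange.interpolate R id r with hp
  have hpeval : ∀ j, Polynomial.eval (μ j) p = if μ j = θ then 1 else 0 := by
    intro j
    have hmem : μ j ∈ R := Finset.mem_image_of_mem μ (Finset.mem_univ j)
    have := Lagrange.eval_interpolate_at_node r (Set.injOn_id _) hmem
    rw [hp]; exact this
  set E := Polynomial.aeval (G.adjMatrix ℝ) p with hE
  set φ := auxPhi b c p with hφ
  have hEent : ∀ x' y' : V, E x' y' = φ (G.dist x' y') := fun x' y' => aux_poly_entry h p x' y'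
  set ind : V → ℝ := fun j => if μ j = θ then 1 else 0 with hind
  have hEB : ∀ j, E *ᵥ ⇑(B j) = ind j • ⇑(B j) := by
    intro j
    rw [hE, aux_aeval_mulVec (G.adjMatrix ℝ) _ (μ j) (hμeig j) p, hpeval j]
  have hAE : (G.adjMatrix ℝ) * E = θ • E := by
    apply aux_matrix_ext_basis B
    intro j
    rw [← Matrix.mulVec_mulVec, hEB j, Matrix.mulVec_smul, hμeig j,
      Matrix.smul_mulVec, hEB j]
    by_cases hμj : μ j = θ
    · rw [hind]; simp [hμj]
    · rw [hind]; simp [hμj]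
  have hrec : ∀ (x' y' : V) (i : ℕ), G.dist x' y' = i →
      (c i : ℝ) * φ (i-1) + (drgA b c i : ℝ) * φ i + (b i : ℝ) * φ (i+1) = θ * φ i := by
    intro x' y' i hxy
    have h1 : ((G.adjMatrix ℝ) * E) x' y' = θ * φ i := by
      rw [hAE, Matrix.smul_apply, hEent, hxy, smul_eq_mul]
    have h2 : ((G.adjMatrix ℝ) * E) x' y'
        = (c i : ℝ) * φ (i-1) + (drgA b c i : ℝ) * φ i + (b i : ℝ) * φ (i+1) := by
      rw [SimpleGraph.adjMatrix_mul_apply]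
      have hcg : ∀ z ∈ G.neighborFinset x', E z y' = φ (G.dist y' z) := by
        intro z _
        rw [hEent, SimpleGraph.dist_comm]
      rw [Finset.sum_congr rfl hcg]
      rw [show G.neighborFinset x' = univ.filter (fun z => G.Adj x' z) from by
        ext z; simp [SimpleGraph.mem_neighborFinset]]
      exact aux_sum_nbr h hxy φ
    rw [← h1, h2]
  have hrecD : ∀ i, i ≤ D →
      (c i : ℝ) * φ (i-1) + (drgA b c i : ℝ) * φ i + (b i : ℝ) * φ (i+1) = θ * φ i := by
    intro i hi
    obtain ⟨x', y', hxy⟩ := aux_exists_pair h hi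
    exact hrec x' y' i hxy
  -- the characteristic vector of C
  set χ : V → ℝ := fun z => if z ∈ C then 1 else 0 with hχ
  have hEχ : ∀ x' : V, (E *ᵥ χ) x' = ∑ y' ∈ C, φ (G.dist x' y') := by
    intro x'
    rw [Matrix.mulVec, dotProduct]
    have hcg : ∀ y' ∈ (univ : Finset V), E x' y' * χ y'
        = if y' ∈ C then φ (G.dist x' y') else 0 := fun y' _ => by
      by_cases hy : y' ∈ C <;> simp [hχ, hy, hEent]
    rw [Finset.sum_congr rfl hcg, Finset.sum_ite_mem, Finset.univ_inter]
  -- k φ1 = θ φ0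
  have hc0 : c 0 = 0 := h.2.2.2.2.1
  have hd0 : drgA b c 0 = 0 := by unfold drgA; omega
  have hφ01 : (b 0 : ℝ) * φ 1 = θ * φ 0 := by
    have := hrecD 0 (Nat.zero_le D)
    rw [hc0, hd0] at this
    simpa using this
  -- χᵀ E χ = 0
  have hquadχ : χ ⬝ᵥ (E *ᵥ χ) = 0 := by
    have hout : χ ⬝ᵥ (E *ᵥ χ) = ∑ x' ∈ C, ∑ y' ∈ C, φ (G.dist x' y') := by
      rw [dotProduct]
      have hcg : ∀ x' ∈ (univ : Finset V), χ x' * (E *ᵥ χ) x'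
          = if x' ∈ C then (∑ y' ∈ C, φ (G.dist x' y')) else 0 := fun x' _ => by
        rw [hEχ]; by_cases hx : x' ∈ C <;> simp [hχ, hx]
      rw [Finset.sum_congr rfl hcg, Finset.sum_ite_mem, Finset.univ_inter]
    rw [hout]
    have hinner : ∀ x' ∈ C, ∑ y' ∈ C, φ (G.dist x' y')
        = ((C.card : ℝ) - 1) * φ 1 + φ 0 := by
      intro x' hx
      rw [← Finset.sum_erase_add _ _ hx]
      have : ∀ y' ∈ C.erase x', φ (G.dist x' y') = φ 1 := by
        intro y' hy
        have hy1 : y' ∈ C := Finset.mem_of_mem_erase hy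
        have hy2 : y' ≠ x' := Finset.ne_of_mem_erase hy
        have : G.Adj x' y' := hclq (by simpa using hx) (by simpa using hy1) (Ne.symm hy2)
        rw [SimpleGraph.dist_eq_one_iff_adj.mpr this]
      rw [Finset.sum_congr rfl this, Finset.sum_const, SimpleGraph.dist_self,
        Finset.card_erase_of_mem hx, nsmul_eq_mul]
      have hCpos : 1 ≤ C.card := Finset.card_pos.mpr hCne
      rw [Nat.cast_sub hCpos]
      norm_num
    rw [Finset.sum_congr rfl hinner, Finset.sum_const, nsmul_eq_mul]
    have hzero : ((C.card : ℝ) - 1) * φ 1 + φ 0 = 0 := by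
      have h1 : (C.card : ℝ) - 1 = -((b 0 : ℝ) / θ) := by rw [hcard]; ring
      rw [h1]
      have hφ1 : φ 1 = θ * φ 0 / (b 0 : ℝ) := by
        field_simp at hφ01 ⊢
        linarith
      rw [hφ1]
      have hθne : θ ≠ 0 := ne_of_lt hθneg
      have hkne : (b 0 : ℝ) ≠ 0 := ne_of_gt hkR
      field_simp
      ring
    rw [hzero, mul_zero]
  -- E χ = 0
  have hEχ0 : E *ᵥ χ = 0 := by
    have hq := aux_quad_form B E ind hEB χ
    rw [hquadχ] at hq
    have hterm : ∀ j ∈ Finset.univ, (0:ℝ) ≤ ind j * ((⇑(B j) ⬝ᵥ χ) ^ 2) := by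
      intro j _
      rw [hind]
      by_cases hμj : μ j = θ <;> simp [hμj, sq_nonneg]
    have hall := (Finset.sum_eq_zero_iff_of_nonneg hterm).mp hq.symm
    rw [aux_spec_mulVec B E ind hEB χ]
    apply Finset.sum_eq_zero
    intro j _
    have := hall j (Finset.mem_univ j)
    have hcoeff : ind j * (⇑(B j) ⬝ᵥ χ) = 0 := by
      by_cases hμj : μ j = θ
      · have hij : ind j = 1 := by rw [hind]; simp [hμj]
        rw [hij, one_mul] at this ⊢
        exact pow_eq_zero_iff (n := 2) (by norm_num) |>.mp this
      · have hij : ind j = 0 := by rw [hind]; simp [hμj]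
        rw [hij, zero_mul]
    rw [hcoeff, zero_smul]
  -- φ D = 0
  have hφD : φ D = 0 := by
    have hmem : ∀ y' ∈ C, G.dist x y' = D := by
      intro y' hy
      have h1 : distToSet G x C ≤ G.dist x y' := distToSet_le_dist G hy
      have h2 : G.dist x y' ≤ D := h.2.1 x y'
      omega
    have h0 : (0:ℝ) = ∑ y' ∈ C, φ (G.dist x y') := by
      rw [← hEχ x, hEχ0]
      rfl
    rw [Finset.sum_congr rfl (fun y' hy => by rw [hmem y' hy]), Finset.sum_const,
      nsmul_eq_mul] at h0
    have hCpos : 0 < C.card := Finset.card_pos.mpr hCne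
    have hCR : (0:ℝ) < (C.card : ℝ) := by exact_mod_cast hCpos
    rcases mul_eq_zero.mp h0.symm with h' | h'
    · exact absurd h' (ne_of_gt hCR)
    · exact h'
  -- downward induction: φ (D - j) = 0
  have hφall : ∀ j, j ≤ D → φ (D - j) = 0 := by
    intro j
    induction j using Nat.strong_induction_on with
    | _ j ih =>
      intro hj
      match j, hj with
      | 0, _ => simpa using hφD
      | 1, hj =>
        have hr := hrecD D (le_refl D)
        have hbD : b D = 0 := h.2.2.2.2.1 ▸ h.2.2.2.1
        have hφDD : φ D = 0 := hφD
        rw [hbD, hφDD] at hr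
        have hcD : 1 ≤ c D := aux_c_pos h hD (le_refl D)
        have hcDR : (0:ℝ) < (c D : ℝ) := by exact_mod_cast hcD
        simp only [Nat.cast_zero, zero_mul, mul_zero, add_zero, zero_add] at hr
        have : (c D : ℝ) * φ (D - 1) = 0 := by linarith
        have := mul_eq_zero.mp this
        rcases this with h' | h'
        · exact absurd h' (ne_of_gt hcDR)
        · exact h'
      | (j+2), hj =>
        set i := D - (j+1) with hi
        have hi1 : 1 ≤ i := by omega
        have hiD : i ≤ D := by omega
        have hr := hrecD i hiD
        have hφi : φ i = 0 := ih (j+1) (by omega) (by omega)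
        have hφi1 : φ (i+1) = 0 := by
          have := ih j (by omega) (by omega)
          rwa [show D - j = i + 1 from by omega] at this
        rw [hφi, hφi1] at hr
        have hci : 1 ≤ c i := aux_c_pos h hi1 hiD
        have hciR : (0:ℝ) < (c i : ℝ) := by exact_mod_cast hci
        simp only [mul_zero, add_zero, zero_add] at hr
        have hmul : (c i : ℝ) * φ (i - 1) = 0 := by linarith
        have := mul_eq_zero.mp hmul
        rcases this with h' | h'
        · exact absurd h' (ne_of_gt hciR)
        · rwa [show i - 1 = D - (j+2) from by omega] at h'
  -- E = 0
  have hE0 : E = 0 := by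
    ext a b'
    rw [hEent a b']
    have hd : G.dist a b' ≤ D := h.2.1 a b'
    have := hφall (D - G.dist a b') (by omega)
    rw [show D - (D - G.dist a b') = G.dist a b' from by omega] at this
    simpa using this
  -- contradiction with existence of θ-eigenvector
  obtain ⟨v, hv0, hveig⟩ := hθ.1
  have hexj : ∃ j, ⇑(B j) ⬝ᵥ v ≠ 0 := by
    by_contra hno
    push_neg at hno
    have hsum := aux_decomp B v
    rw [Finset.sum_congr rfl (fun j _ => show (⇑(B j) ⬝ᵥ v) • ⇑(B j) = (0 : V → ℝ) from by
      rw [hno j, zero_smul])] at hsum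
    simp only [Finset.sum_const_zero] at hsum
    exact hv0 hsum
  obtain ⟨j0, hj0⟩ := hexj
  have hμj0 : μ j0 = θ := by
    have h1 : ⇑(B j0) ⬝ᵥ ((G.adjMatrix ℝ) *ᵥ v) = θ * (⇑(B j0) ⬝ᵥ v) := by
      rw [hveig, dotProduct_smul, smul_eq_mul]
    have h2 : ⇑(B j0) ⬝ᵥ ((G.adjMatrix ℝ) *ᵥ v) = μ j0 * (⇑(B j0) ⬝ᵥ v) := by
      rw [aux_dot_mulVec_symm (fun a b' => by
        simp [SimpleGraph.adjMatrix_apply, SimpleGraph.adj_comm]), hμeig j0,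
        smul_dotProduct, smul_eq_mul]
    have := h1.symm.trans h2
    have hfac : (μ j0 - θ) * (⇑(B j0) ⬝ᵥ v) = 0 := by linarith
    rcases mul_eq_zero.mp hfac with h' | h'
    · linarith
    · exact absurd h' hj0
  have : E *ᵥ ⇑(B j0) = ⇑(B j0) := by
    rw [hEB j0, hind]
    simp [hμj0]
  rw [hE0, Matrix.zero_mulVec] at this
  exact hBne j0 this.symm

end CoveringRadius
section CliqueGeo
open SimpleGraph Finset
variable {V : Type*} [Fintype V] [DecidableEq V] {G : SimpleGraph V} [DecidableRel G.Adj]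

lemma aux_clique_partition {𝒞 : Set (Finset V)}
    (hclq : ∀ Cl ∈ 𝒞, G.IsClique (Cl : Set V))
    (huniq : ∀ x y : V, G.Adj x y → ∃! Cl : Finset V, Cl ∈ 𝒞 ∧ x ∈ Cl ∧ y ∈ Cl)
    (y : V) (Ty : Finset (Finset V)) (hTy : ∀ Cl, Cl ∈ Ty ↔ Cl ∈ 𝒞 ∧ y ∈ Cl)
    (P : V → Prop) [DecidablePred P] :
    (univ.filter fun z => G.Adj y z ∧ P z).card
      = ∑ Cl ∈ Ty, ((Cl.erase y).filter P).card := by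
  rw [← Finset.card_biUnion]
  · congr 1
    ext z
    simp only [mem_filter, mem_univ, true_and, Finset.mem_biUnion, Finset.mem_erase]
    constructor
    · rintro ⟨hadj, hP⟩
      obtain ⟨Cl, ⟨hCl, hyCl, hzCl⟩, -⟩ := huniq y z hadj
      exact ⟨Cl, (hTy Cl).mpr ⟨hCl, hyCl⟩, ⟨(G.ne_of_adj hadj).symm, hzCl⟩, hP⟩
    · rintro ⟨Cl, hClTy, ⟨hzy, hzCl⟩, hP⟩
      obtain ⟨hCl, hyCl⟩ := (hTy Cl).mp hClTy
      exact ⟨hclq Cl hCl (by simpa using hyCl) (by simpa using hzCl) (Ne.symm hzy), hP⟩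
  · intro C1 h1 C2 h2 hne
    rw [Function.onFun, Finset.disjoint_left]
    intro z hz1 hz2
    simp only [mem_filter, Finset.mem_erase] at hz1 hz2
    obtain ⟨⟨hzy, hzC1⟩, hP⟩ := hz1
    obtain ⟨⟨-, hzC2⟩, -⟩ := hz2
    obtain ⟨hC1, hyC1⟩ := (hTy C1).mp h1
    obtain ⟨hC2, hyC2⟩ := (hTy C2).mp h2
    have hadj : G.Adj y z := hclq C1 hC1 (by simpa using hyC1) (by simpa using hzC1) (Ne.symm hzy)
    obtain ⟨Cl, -, huni⟩ := huniq y z hadj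
    exact hne ((huni C1 ⟨hC1, hyC1, hzC1⟩).trans (huni C2 ⟨hC2, hyC2, hzC2⟩).symm)

end CliqueGeo
/-- In a geometric distance-regular graph with diameter `D ≥ 2` in which
`|Γᵢ(x) ∩ C| = γ i` for every Delsarte clique `C ∈ 𝒞` and every vertex `x` with
`d(x,C) = i` (`0 ≤ i ≤ D - 1`), one has `γ (D-1) = 1` if and only if `a_i = c_i * a₁`
for all `1 ≤ i ≤ D` (i.e. `G` is a regular near `2D`-gon). -/
theorem stmt_6 {V : Type*} [Fintype V] (G : SimpleGraph V) [DecidableRel G.Adj]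
    (D : ℕ) (b c : ℕ → ℕ) (hDRG : IsDRG G D b c) (hD : 2 ≤ D)
    (θmin : ℝ) (hθ : IsSmallestAdjEigenvalue G θmin)
    (𝒞 : Set (Finset V)) (hgeo : IsGeometricWith G (b 0) θmin 𝒞)
    (γ : ℕ → ℕ)
    (hγ : ∀ C ∈ 𝒞, ∀ i, i ≤ D - 1 → ∀ x : V, distToSet G x C = i →
      (C.filter (fun y => G.dist x y = i)).card = γ i) :
    γ (D - 1) = 1 ↔ ∀ i, 1 ≤ i → i ≤ D → drgA b c i = c i * drgA b c 1 := by
  classical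
  have hconn : G.Connected := hDRG.1
  have hD1 : 1 ≤ D := by omega
  have hclqs : ∀ Cl ∈ 𝒞, G.IsClique (Cl : Set V) := fun Cl hCl => (hgeo.1 Cl hCl).1
  -- common clique size
  obtain ⟨x0, y0, hadj0⟩ := aux_exists_edge hDRG hD1
  obtain ⟨C0, ⟨hC0, hx0C0, hy0C0⟩, -⟩ := hgeo.2 x0 y0 hadj0
  have hC0card : 2 ≤ C0.card := by
    have hsub : ({x0, y0} : Finset V) ⊆ C0 := by
      intro z hz
      rcases Finset.mem_insert.mp hz with h' | h'
      · subst h'; exact hx0C0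
      · rw [Finset.mem_singleton] at h'; subst h'; exact hy0C0
    have h2 : ({x0, y0} : Finset V).card = 2 := by
      rw [Finset.card_insert_of_notMem (by simp [G.ne_of_adj hadj0]), Finset.card_singleton]
    calc 2 = ({x0, y0} : Finset V).card := h2.symm
      _ ≤ C0.card := Finset.card_le_card hsub
  set s : ℕ := C0.card - 1 with hs
  have hs1 : 1 ≤ s := by omega
  have hcards : ∀ Cl ∈ 𝒞, Cl.card = s + 1 := by
    intro Cl hCl
    have h1 := (hgeo.1 Cl hCl).2
    have h2 := (hgeo.1 C0 hC0).2
    have h3 : ((Cl.card : ℕ) : ℝ) = ((C0.card : ℕ) : ℝ) := by rw [h1, h2]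
    have h4 : Cl.card = C0.card := Nat.cast_injective h3
    omega
  have hCne : ∀ Cl ∈ 𝒞, Cl.Nonempty := fun Cl hCl =>
    Finset.card_pos.mp (by rw [hcards Cl hCl]; omega)
  -- covering radius
  have hcover : ∀ Cl ∈ 𝒞, ∀ x : V, distToSet G x Cl ≠ D := fun Cl hCl x =>
    aux_covering_radius hDRG hD1 hθ (hclqs Cl hCl) ((hgeo.1 Cl hCl).2) (hCne Cl hCl) x
  -- dichotomy for clique distances
  have hdich : ∀ (x y : V) (i : ℕ), 1 ≤ i → G.dist x y = i → ∀ Cl ∈ 𝒞, y ∈ Cl →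
      distToSet G x Cl = i - 1 ∨ distToSet G x Cl = i := by
    intro x y i hi1 hxy Cl hCl hyCl
    have h1 : distToSet G x Cl ≤ i := hxy ▸ distToSet_le_dist G hyCl
    obtain ⟨z, hz, hzd⟩ := exists_distToSet_attain G (hCne Cl hCl) x
    have h2 : G.dist z y ≤ 1 := clique_dist_le_one G hconn (hclqs Cl hCl) hz hyCl
    have h3 := hconn.dist_triangle (u := x) (v := z) (w := y)
    omega
  -- γ 0 = 1
  have hγ0 : γ 0 = 1 := by
    have hd0 : distToSet G x0 C0 = 0 := by
      have h1 := distToSet_le_dist G hx0C0 (x := x0)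
      rw [SimpleGraph.dist_self] at h1
      omega
    have hfe : C0.filter (fun z => G.dist x0 z = 0) = {x0} := by
      ext z
      simp only [Finset.mem_filter, Finset.mem_singleton]
      constructor
      · rintro ⟨-, hz⟩
        exact ((hconn.dist_eq_zero_iff).mp hz).symm
      · rintro rfl
        exact ⟨hx0C0, SimpleGraph.dist_self⟩
    have h1 := hγ C0 hC0 0 (by omega) x0 hd0
    rw [hfe] at h1
    simpa using h1.symm
  -- γ is positive at any realized index
  have hγpos : ∀ j, j ≤ D - 1 → ∀ Cl ∈ 𝒞, ∀ x : V, distToSet G x Cl = j → 1 ≤ γ j := by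
    intro j hj Cl hCl x hd
    obtain ⟨z, hz, hzd⟩ := exists_distToSet_attain G (hCne Cl hCl) x
    rw [← hγ Cl hCl j hj x hd]
    exact Finset.card_pos.mpr ⟨z, by simp only [Finset.mem_filter]; exact ⟨hz, by omega⟩⟩
  -- near clique counts
  have hnear : ∀ (x y : V) (i : ℕ), 1 ≤ i → i ≤ D → G.dist x y = i → ∀ Cl ∈ 𝒞, y ∈ Cl →
      distToSet G x Cl = i - 1 →
      ((Cl.erase y).filter (fun z => G.dist x z = i - 1)).card = γ (i-1) ∧
      ((Cl.erase y).filter (fun z => G.dist x z = i)).card + γ (i - 1) = s := by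
    intro x y i hi1 hiD hxy Cl hCl hyCl hdt
    have hγf : (Cl.filter (fun z => G.dist x z = i-1)).card = γ (i-1) :=
      hγ Cl hCl (i-1) (by omega) x hdt
    have hyf : y ∉ Cl.filter (fun z => G.dist x z = i - 1) := by
      simp only [Finset.mem_filter]
      rintro ⟨-, hy⟩
      omega
    have hmem2 : ∀ z ∈ Cl, G.dist x z = i - 1 ∨ G.dist x z = i := by
      intro z hz
      have l1 := distToSet_le_dist G hz (x := x)
      have l2 := dist_mem_le_distToSet_add_one G hconn (hclqs Cl hCl) (hCne Cl hCl) hz (x := x)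
      omega
    have hsplit : Cl = (Cl.filter (fun z => G.dist x z = i-1))
        ∪ (Cl.filter (fun z => G.dist x z = i)) := by
      ext z
      simp only [Finset.mem_union, Finset.mem_filter]
      constructor
      · intro hz
        rcases hmem2 z hz with h' | h'
        · exact Or.inl ⟨hz, h'⟩
        · exact Or.inr ⟨hz, h'⟩
      · rintro (⟨hz, -⟩ | ⟨hz, -⟩) <;> exact hz
    have hdisj : Disjoint (Cl.filter (fun z => G.dist x z = i-1))
        (Cl.filter (fun z => G.dist x z = i)) := by
      rw [Finset.disjoint_filter]
      intro z _ h1 h2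
      omega
    have hcardsplit : (Cl.filter (fun z => G.dist x z = i-1)).card
        + (Cl.filter (fun z => G.dist x z = i)).card = s + 1 := by
      rw [← Finset.card_union_of_disjoint hdisj, ← hsplit, hcards Cl hCl]
    have hymem : y ∈ Cl.filter (fun z => G.dist x z = i) := by
      simp only [Finset.mem_filter]; exact ⟨hyCl, hxy⟩
    have hpos : 1 ≤ (Cl.filter (fun z => G.dist x z = i)).card :=
      Finset.card_pos.mpr ⟨y, hymem⟩
    constructor
    · rw [Finset.filter_erase, Finset.erase_eq_of_notMem hyf, hγf]
    · rw [Finset.filter_erase, Finset.card_erase_of_mem hymem]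
      omega
  -- far clique counts
  have hfar : ∀ (x y : V) (i : ℕ), 1 ≤ i → i ≤ D - 1 → G.dist x y = i → ∀ Cl ∈ 𝒞, y ∈ Cl →
      distToSet G x Cl = i →
      ((Cl.erase y).filter (fun z => G.dist x z = i - 1)).card = 0 ∧
      ((Cl.erase y).filter (fun z => G.dist x z = i)).card + 1 = γ i := by
    intro x y i hi1 hiD1 hxy Cl hCl hyCl hdt
    have hγf : (Cl.filter (fun z => G.dist x z = i)).card = γ i := hγ Cl hCl i hiD1 x hdt
    have hymem : y ∈ Cl.filter (fun z => G.dist x z = i) := by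
      simp only [Finset.mem_filter]; exact ⟨hyCl, hxy⟩
    have hpos : 1 ≤ γ i := hγpos i hiD1 Cl hCl x hdt
    constructor
    · rw [Finset.filter_erase]
      have hfe : Cl.filter (fun z => G.dist x z = i - 1) = ∅ := by
        rw [Finset.filter_eq_empty_iff]
        intro z hz
        have := distToSet_le_dist G hz (x := x)
        omega
      rw [hfe]
      simp
    · rw [Finset.filter_erase, Finset.card_erase_of_mem hymem, hγf]
      omega
  -- c 1 = 1
  have hc1 : c 1 = 1 := by
    have hd1 : G.dist x0 y0 = 1 := SimpleGraph.dist_eq_one_iff_adj.mpr hadj0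
    have h1 := (hDRG.2.2.2.2.2 1 hD1 x0 y0 hd1).1
    have hfe : (Finset.univ.filter fun z => G.Adj y0 z ∧ G.dist x0 z = 1 - 1) = {x0} := by
      ext z
      simp only [Finset.mem_filter, Finset.mem_univ, true_and, Finset.mem_singleton]
      constructor
      · rintro ⟨-, hz⟩
        exact ((hconn.dist_eq_zero_iff).mp (by simpa using hz)).symm
      · rintro rfl
        exact ⟨hadj0.symm, by simpa using SimpleGraph.dist_self (G := G) (v := x0)⟩
    rw [hfe] at h1
    simpa using h1.symm
  -- the forward counting: ⇐ direction core
  have hdir2 : (∀ j, j ≤ D - 1 → γ j = 1) →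
      ∀ i, 1 ≤ i → i ≤ D → drgA b c i = c i * (s - 1) := by
    intro hγ1 i hi1 hiD
    obtain ⟨x, y, hxy⟩ := aux_exists_pair hDRG hiD
    set Ty := Finset.univ.filter (fun Cl : Finset V => Cl ∈ 𝒞 ∧ y ∈ Cl) with hTy
    have hTymem : ∀ Cl, Cl ∈ Ty ↔ Cl ∈ 𝒞 ∧ y ∈ Cl := fun Cl => by
      simp [hTy]
    have hcic := (hDRG.2.2.2.2.2 i hiD x y hxy).1
    have hcia : (Finset.univ.filter fun z => G.Adj y z ∧ G.dist x z = i).card = drgA b c i :=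
      aux_count_a hDRG (by rwa [SimpleGraph.dist_comm]) hi1
    rw [aux_clique_partition hclqs hgeo.2 y Ty hTymem (fun z => G.dist x z = i - 1)] at hcic
    rw [aux_clique_partition hclqs hgeo.2 y Ty hTymem (fun z => G.dist x z = i)] at hcia
    have hper1 : ∀ Cl ∈ Ty, ((Cl.erase y).filter (fun z => G.dist x z = i - 1)).card
        = if distToSet G x Cl = i - 1 then 1 else 0 := by
      intro Cl hCl
      obtain ⟨hClm, hyCl⟩ := (hTymem Cl).mp hCl
      rcases hdich x y i hi1 hxy Cl hClm hyCl with hdt | hdt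
      · rw [if_pos hdt, (hnear x y i hi1 hiD hxy Cl hClm hyCl hdt).1, hγ1 (i-1) (by omega)]
      · have hiD1 : i ≤ D - 1 := by
          rcases Nat.lt_or_ge i D with h' | h'
          · omega
          · exfalso
            exact hcover Cl hClm x (by omega)
        rw [if_neg (by omega), (hfar x y i hi1 hiD1 hxy Cl hClm hyCl hdt).1]
    have hper2 : ∀ Cl ∈ Ty, ((Cl.erase y).filter (fun z => G.dist x z = i)).card
        = if distToSet G x Cl = i - 1 then s - 1 else 0 := by
      intro Cl hCl
      obtain ⟨hClm, hyCl⟩ := (hTymem Cl).mp hCl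
      rcases hdich x y i hi1 hxy Cl hClm hyCl with hdt | hdt
      · rw [if_pos hdt]
        have h2 := (hnear x y i hi1 hiD hxy Cl hClm hyCl hdt).2
        rw [hγ1 (i-1) (by omega)] at h2
        omega
      · have hiD1 : i ≤ D - 1 := by
          rcases Nat.lt_or_ge i D with h' | h'
          · omega
          · exfalso
            exact hcover Cl hClm x (by omega)
        rw [if_neg (by omega)]
        have h2 := (hfar x y i hi1 hiD1 hxy Cl hClm hyCl hdt).2
        rw [hγ1 i hiD1] at h2
        omega
    rw [Finset.sum_congr rfl hper1, Finset.sum_ite, Finset.sum_const, Finset.sum_const] at hcic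
    rw [Finset.sum_congr rfl hper2, Finset.sum_ite, Finset.sum_const, Finset.sum_const] at hcia
    simp only [smul_eq_mul, mul_one, mul_zero, add_zero] at hcic hcia
    rw [← hcia, ← hcic]
  -- ⇒ direction
  have hdir1 : (∀ i, 1 ≤ i → i ≤ D → drgA b c i = c i * drgA b c 1) → γ (D-1) = 1 := by
    intro hnp
    obtain ⟨x, y, hxy⟩ := hDRG.2.2.1
    set Ty := Finset.univ.filter (fun Cl : Finset V => Cl ∈ 𝒞 ∧ y ∈ Cl) with hTy
    have hTymem : ∀ Cl, Cl ∈ Ty ↔ Cl ∈ 𝒞 ∧ y ∈ Cl := fun Cl => by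
      simp [hTy]
    have hallnear : ∀ Cl ∈ Ty, distToSet G x Cl = D - 1 := by
      intro Cl hCl
      obtain ⟨hClm, hyCl⟩ := (hTymem Cl).mp hCl
      rcases hdich x y D hD1 hxy Cl hClm hyCl with h' | h'
      · exact h'
      · exact absurd h' (hcover Cl hClm x)
    have hTyne : Ty.Nonempty := by
      obtain ⟨w, hw1, hw2⟩ := aux_exists_adj_dist hconn hxy hD1
      obtain ⟨Cl, ⟨hClm, hyCl, hwCl⟩, -⟩ := hgeo.2 y w hw1
      exact ⟨Cl, (hTymem Cl).mpr ⟨hClm, hyCl⟩⟩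
    have hg1 : 1 ≤ γ (D-1) := by
      obtain ⟨Cl, hCl⟩ := hTyne
      obtain ⟨hClm, hyCl⟩ := (hTymem Cl).mp hCl
      exact hγpos (D-1) (le_refl _) Cl hClm x (hallnear Cl hCl)
    have hgs : γ (D-1) ≤ s := by
      obtain ⟨Cl, hCl⟩ := hTyne
      obtain ⟨hClm, hyCl⟩ := (hTymem Cl).mp hCl
      have := (hnear x y D hD1 (le_refl D) hxy Cl hClm hyCl (hallnear Cl hCl)).2
      omega
    have hcic := (hDRG.2.2.2.2.2 D (le_refl D) x y hxy).1
    have hcia : (Finset.univ.filter fun z => G.Adj y z ∧ G.dist x z = D).card = drgA b c D :=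
      aux_count_a hDRG (by rwa [SimpleGraph.dist_comm]) hD1
    rw [aux_clique_partition hclqs hgeo.2 y Ty hTymem (fun z => G.dist x z = D - 1)] at hcic
    rw [aux_clique_partition hclqs hgeo.2 y Ty hTymem (fun z => G.dist x z = D)] at hcia
    have hper1 : ∀ Cl ∈ Ty, ((Cl.erase y).filter (fun z => G.dist x z = D - 1)).card
        = γ (D-1) := fun Cl hCl => by
      obtain ⟨hClm, hyCl⟩ := (hTymem Cl).mp hCl
      exact (hnear x y D hD1 (le_refl D) hxy Cl hClm hyCl (hallnear Cl hCl)).1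
    have hper2 : ∀ Cl ∈ Ty, ((Cl.erase y).filter (fun z => G.dist x z = D)).card
        = s - γ (D-1) := fun Cl hCl => by
      obtain ⟨hClm, hyCl⟩ := (hTymem Cl).mp hCl
      have := (hnear x y D hD1 (le_refl D) hxy Cl hClm hyCl (hallnear Cl hCl)).2
      omega
    rw [Finset.sum_congr rfl hper1, Finset.sum_const, smul_eq_mul] at hcic
    rw [Finset.sum_congr rfl hper2, Finset.sum_const, smul_eq_mul] at hcia
    -- a₁ ≥ s - 1
    have ha1 : s - 1 ≤ drgA b c 1 := by
      have hd1 : G.dist x0 y0 = 1 := SimpleGraph.dist_eq_one_iff_adj.mpr hadj0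
      have hcount := aux_count_a hDRG hd1 (le_refl 1)
      rw [← hcount]
      have hsub : (C0.erase x0).erase y0
          ⊆ Finset.univ.filter (fun z => G.Adj x0 z ∧ G.dist y0 z = 1) := by
        intro z hz
        have hzy0 : z ≠ y0 := Finset.ne_of_mem_erase hz
        have hz1 := Finset.mem_of_mem_erase hz
        have hzx0 : z ≠ x0 := Finset.ne_of_mem_erase hz1
        have hzC0 : z ∈ C0 := Finset.mem_of_mem_erase hz1
        simp only [Finset.mem_filter, Finset.mem_univ, true_and]
        constructor
        · exact hclqs C0 hC0 (by simpa using hx0C0) (by simpa using hzC0) (Ne.symm hzx0)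
        · exact SimpleGraph.dist_eq_one_iff_adj.mpr
            (hclqs C0 hC0 (by simpa using hy0C0) (by simpa using hzC0) (Ne.symm hzy0))
      have hcard : ((C0.erase x0).erase y0).card = s - 1 := by
        have hmem' : y0 ∈ C0.erase x0 :=
          Finset.mem_erase.mpr ⟨(G.ne_of_adj hadj0).symm, hy0C0⟩
        rw [Finset.card_erase_of_mem hmem', Finset.card_erase_of_mem hx0C0]
      calc s - 1 = ((C0.erase x0).erase y0).card := hcard.symm
        _ ≤ _ := Finset.card_le_card hsub
    -- conclude
    have heq := hnp D hD1 (le_refl D)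
    rw [← hcia, ← hcic] at heq
    have hm : 1 ≤ Ty.card := Finset.card_pos.mpr hTyne
    have hkey : s - γ (D-1) = γ (D-1) * drgA b c 1 := by
      apply Nat.eq_of_mul_eq_mul_left (show 0 < Ty.card by omega)
      rw [heq]
      ring
    by_contra hgne
    have hg2 : 2 ≤ γ (D-1) := by omega
    have h1 : s = γ (D-1) * (drgA b c 1 + 1) := by
      rw [Nat.mul_add, mul_one, ← hkey]
      omega
    have h2 : 2 * (drgA b c 1 + 1) ≤ γ (D-1) * (drgA b c 1 + 1) :=
      Nat.mul_le_mul_right _ hg2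
    have h4 : 2 * (drgA b c 1 + 1) ≤ s := h1 ▸ h2
    omega
  constructor
  · -- γ (D-1) = 1 → near polygon
    intro hγD
    -- build a clique realizing all distances
    obtain ⟨xD, yD, hxyD⟩ := hDRG.2.2.1
    obtain ⟨w, hw1, hw2⟩ := aux_exists_adj_dist hconn hxyD hD1
    obtain ⟨C1, ⟨hC1, hyDC1, hwC1⟩, -⟩ := hgeo.2 yD w hw1
    have hdtC1 : distToSet G xD C1 = D - 1 := by
      have h1 : distToSet G xD C1 ≤ D - 1 := hw2 ▸ distToSet_le_dist G hwC1
      obtain ⟨z, hz, hzd⟩ := exists_distToSet_attain G (hCne C1 hC1) xD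
      have h2 : G.dist z yD ≤ 1 := clique_dist_le_one G hconn (hclqs C1 hC1) hz hyDC1
      have h3 := hconn.dist_triangle (u := xD) (v := z) (w := yD)
      omega
    have hreal : ∀ j, j ≤ D - 1 → ∃ x' : V, distToSet G x' C1 = j := by
      intro j hj
      obtain ⟨zst, hzst, hzstd⟩ := exists_distToSet_attain G (hCne C1 hC1) xD
      rw [hdtC1] at hzstd
      obtain ⟨u, hu1, hu2⟩ := aux_exists_dist_split hconn hzstd (i := D - 1 - j) (by omega)
      refine ⟨u, le_antisymm ?_ ?_⟩
      · have := distToSet_le_dist G hzst (x := u)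
        omega
      · obtain ⟨z', hz', hz'd⟩ := exists_distToSet_attain G (hCne C1 hC1) u
        have h4 := hconn.dist_triangle (u := xD) (v := u) (w := z')
        have h5 : D - 1 ≤ G.dist xD z' := hdtC1 ▸ distToSet_le_dist G hz'
        omega
    have hmono : ∀ j, j + 1 ≤ D - 1 → γ j ≤ γ (j+1) := by
      intro j hj
      obtain ⟨x', hx'⟩ := hreal (j+1) hj
      obtain ⟨zst, hzst, hzstd⟩ := exists_distToSet_attain G (hCne C1 hC1) x'
      rw [hx'] at hzstd
      obtain ⟨u, hu1, hu2⟩ := aux_exists_dist_split hconn hzstd (i := 1) (by omega)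
      have hdu : distToSet G u C1 = j := by
        refine le_antisymm ?_ ?_
        · have := distToSet_le_dist G hzst (x := u)
          omega
        · obtain ⟨z', hz', hz'd⟩ := exists_distToSet_attain G (hCne C1 hC1) u
          have h4 := hconn.dist_triangle (u := x') (v := u) (w := z')
          have h5 : j + 1 ≤ G.dist x' z' := hx' ▸ distToSet_le_dist G hz'
          omega
      have hsub : C1.filter (fun z => G.dist u z = j)
          ⊆ C1.filter (fun z => G.dist x' z = j + 1) := by
        intro z hz
        simp only [Finset.mem_filter] at hz ⊢
        refine ⟨hz.1, le_antisymm ?_ ?_⟩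
        · have h4 := hconn.dist_triangle (u := x') (v := u) (w := z)
          omega
        · have h5 := hx' ▸ distToSet_le_dist G hz.1 (x := x')
          omega
      have h1 := hγ C1 hC1 j (by omega) u hdu
      have h2 := hγ C1 hC1 (j+1) hj x' hx'
      rw [← h1, ← h2]
      exact Finset.card_le_card hsub
    have hγall : ∀ j, j ≤ D - 1 → γ j = 1 := by
      have hstep : ∀ t, t ≤ D - 1 → γ (D - 1 - t) = 1 := by
        intro t
        induction t with
        | zero => intro _; simpa using hγD
        | succ t ih =>
          intro ht
          have hprev := ih (by omega)
          have hm := hmono (D - 1 - (t+1)) (by omega)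
          rw [show D - 1 - (t+1) + 1 = D - 1 - t from by omega] at hm
          have hpos : 1 ≤ γ (D - 1 - (t+1)) := by
            obtain ⟨x', hx'⟩ := hreal (D - 1 - (t+1)) (by omega)
            exact hγpos _ (by omega) C1 hC1 x' hx'
          omega
      intro j hj
      have := hstep (D - 1 - j) (by omega)
      rwa [show D - 1 - (D - 1 - j) = j from by omega] at this
    intro i hi1 hiD
    have hA := hdir2 hγall i hi1 hiD
    have hA1 := hdir2 hγall 1 (le_refl 1) hD1
    rw [hc1, one_mul] at hA1
    rw [hA, hA1]
  · exact hdir1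
end

section
/- Let Γ be a distance-regular graph with diameter D ≥ 2 and vertex set V, let θ ≠ k be an eigenvalue of Γ with standard sequence (u_i)_{i=0}^D, and let φ : V → ℝ^N be a map satisfying ⟨φ(x), φ(y)⟩ = u_{d(x,y)} for all vertices x, y. Fix 2 ≤ j ≤ D and vertices x, y with d(x,y) = j, and set F_j = φ(x) − φ(y) and C_j = Σ_{z ∈ Γ(x)∩Γ_{j−1}(y)} φ(z) − Σ_{w ∈ Γ_{j−1}(x)∩Γ(y)} φ(w). Then: (1) ⟨F_j, F_j⟩ = 2(u_0 − u_j); (2) ⟨C_j, F_j⟩ = 2 c_j (u_1 − u_{j−1}); (3) if moreover Γ is geometric with respect to a collection 𝒞 of Delsarte cliques and |Γ_{j−1}(v) ∩ C| = 1 for every C ∈ 𝒞 and every vertex v with d(v,C) = j−1, then ⟨C_j, C_j⟩ = 2 c_j ((u_0 + (c_j − 1) u_2) − (c_{j−1} u_{j−2} + (c_j − c_{j−1}) u_j)). -/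
open Finset

lemma exists_intermediate {V : Type*} (G : SimpleGraph V) (hconn : G.Connected) :
    ∀ (t : ℕ) (s m : V), t ≤ G.dist s m →
      ∃ v : V, G.dist s v = G.dist s m - t ∧ G.dist v m = t := by
  intro t
  induction t with
  | zero =>
    intro s m _
    exact ⟨m, by simp [SimpleGraph.dist_self], SimpleGraph.dist_self⟩
  | succ t ih =>
    intro s m ht
    obtain ⟨v, hv1, hv2⟩ := ih s m (by omega)
    have hr : 1 ≤ G.dist s v := by omega
    have hvs : G.dist v s = G.dist s v := SimpleGraph.dist_comm
    obtain ⟨w, hw⟩ := hconn.exists_walk_length_eq_dist v s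
    have hnil : ¬ w.Nil := by
      rw [SimpleGraph.Walk.nil_iff_length_eq]
      omega
    refine ⟨w.getVert 1, ?_, ?_⟩
    · have h1 : G.dist (w.getVert 1) s ≤ w.tail.length := SimpleGraph.dist_le w.tail
      have h2 : w.tail.length + 1 = w.length := SimpleGraph.Walk.length_tail_add_one hnil
      have hadj : G.Adj v (w.getVert 1) := w.adj_snd hnil
      have h3 : G.dist v (w.getVert 1) = 1 := SimpleGraph.dist_eq_one_iff_adj.2 hadj
      have h4 : G.dist s v ≤ G.dist s (w.getVert 1) + G.dist (w.getVert 1) v :=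
        hconn.dist_triangle
      have h5 : G.dist (w.getVert 1) v = 1 := by
        rw [SimpleGraph.dist_comm]; exact h3
      have h6 : G.dist s (w.getVert 1) = G.dist (w.getVert 1) s := SimpleGraph.dist_comm
      omega
    · have h1 : G.dist (w.getVert 1) s ≤ w.tail.length := SimpleGraph.dist_le w.tail
      have h2 : w.tail.length + 1 = w.length := SimpleGraph.Walk.length_tail_add_one hnil
      have hadj : G.Adj v (w.getVert 1) := w.adj_snd hnil
      have h3 : G.dist (w.getVert 1) v = 1 := by
        rw [SimpleGraph.dist_comm]; exact SimpleGraph.dist_eq_one_iff_adj.2 hadj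
      have h4 : G.dist (w.getVert 1) m ≤ G.dist (w.getVert 1) v + G.dist v m :=
        hconn.dist_triangle
      have h5 : G.dist s m ≤ G.dist s (w.getVert 1) + G.dist (w.getVert 1) m :=
        hconn.dist_triangle
      have h6 : G.dist s (w.getVert 1) = G.dist (w.getVert 1) s := SimpleGraph.dist_comm
      have h7 : G.dist s v ≤ G.dist s (w.getVert 1) + G.dist (w.getVert 1) v :=
        hconn.dist_triangle
      omega

lemma exists_extension {V : Type*} [Fintype V] (G : SimpleGraph V) [DecidableRel G.Adj]
    (hconn : G.Connected) (D : ℕ) (b c : ℕ → ℕ)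
    (hdex : ∃ x y : V, G.dist x y = D)
    (hcount : ∀ i, i ≤ D → ∀ x y : V, G.dist x y = i →
      (Finset.univ.filter (fun z => G.Adj y z ∧ G.dist x z = i - 1)).card = c i ∧
      (Finset.univ.filter (fun z => G.Adj y z ∧ G.dist x z = i + 1)).card = b i)
    (i : ℕ) (hiD : i < D) (p a : V) (hpa : G.dist p a = i) :
    ∃ a' : V, G.Adj a a' ∧ G.dist p a' = i + 1 := by
  classical
  -- first: b i ≥ 1
  obtain ⟨x₀, y₀, hxy₀⟩ := hdex
  obtain ⟨v, hv1, hv2⟩ := exists_intermediate G hconn (D - (i+1)) x₀ y₀ (by omega)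
  have hv1' : G.dist x₀ v = i + 1 := by omega
  obtain ⟨v₁, hw1, hw2⟩ := exists_intermediate G hconn 1 x₀ v (by omega)
  have hw1' : G.dist x₀ v₁ = i := by omega
  have hadj : G.Adj v₁ v := SimpleGraph.dist_eq_one_iff_adj.1 hw2
  have hb := (hcount i (le_of_lt hiD) x₀ v₁ hw1').2
  have hvmem : v ∈ Finset.univ.filter (fun z => G.Adj v₁ z ∧ G.dist x₀ z = i + 1) := by
    simp [hadj, hv1']
  have hbpos : 1 ≤ b i := by
    rw [← hb]
    exact Finset.card_pos.2 ⟨v, hvmem⟩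
  -- now use the count at the pair (p, a)
  have hb2 := (hcount i (le_of_lt hiD) p a hpa).2
  have : (Finset.univ.filter (fun z => G.Adj a z ∧ G.dist p z = i + 1)).Nonempty := by
    rw [← Finset.card_pos, hb2]
    omega
  obtain ⟨a', ha'⟩ := this
  rw [Finset.mem_filter] at ha'
  exact ⟨a', ha'.2.1, ha'.2.2⟩

-- chain: from d(p,x) = 2 build u with d(p,u) = j and d(x,u) ≤ j - 2

lemma exists_far_vertex {V : Type*} [Fintype V] (G : SimpleGraph V) [DecidableRel G.Adj]
    (hconn : G.Connected) (D : ℕ) (b c : ℕ → ℕ)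
    (hdex : ∃ x y : V, G.dist x y = D)
    (hcount : ∀ i, i ≤ D → ∀ x y : V, G.dist x y = i →
      (Finset.univ.filter (fun z => G.Adj y z ∧ G.dist x z = i - 1)).card = c i ∧
      (Finset.univ.filter (fun z => G.Adj y z ∧ G.dist x z = i + 1)).card = b i)
    (j : ℕ) (hj2 : 2 ≤ j) (hjD : j ≤ D) (p x : V) (hpx : G.dist p x = 2) :
    ∃ u : V, G.dist p u = j ∧ G.dist x u ≤ j - 2 := by
  have key : ∀ n, 2 ≤ n → n ≤ j → ∃ u : V, G.dist p u = n ∧ G.dist x u ≤ n - 2 := by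
    intro n
    induction n with
    | zero => omega
    | succ n ih =>
      intro h2 hnj
      rcases Nat.lt_or_ge 2 (n+1) with hlt | hle
      · -- n + 1 > 2, so 2 ≤ n
        obtain ⟨u, hu1, hu2⟩ := ih (by omega) (by omega)
        obtain ⟨u', hadj, hu'⟩ := exists_extension G hconn D b c hdex hcount n
          (by omega) p u hu1
        refine ⟨u', hu', ?_⟩
        have t1 : G.dist x u' ≤ G.dist x u + G.dist u u' := hconn.dist_triangle
        have t2 : G.dist u u' = 1 := SimpleGraph.dist_eq_one_iff_adj.2 hadj
        omega
      · -- n + 1 = 2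
        have : n + 1 = 2 := by omega
        rw [this]
        exact ⟨x, hpx, by simp [SimpleGraph.dist_self]⟩
  exact key j hj2 le_rfl

lemma cross_dist_ne {V : Type*} [Fintype V] (G : SimpleGraph V) [DecidableRel G.Adj]
    (hconn : G.Connected) (j : ℕ) (hj2 : 2 ≤ j) (𝒞 : Set (Finset V))
    (hcl : ∀ C ∈ 𝒞, G.IsClique (C : Set V))
    (hedge : ∀ a b : V, G.Adj a b → ∃! C : Finset V, C ∈ 𝒞 ∧ a ∈ C ∧ b ∈ C)
    (hpsi : ∀ C ∈ 𝒞, ∀ v : V, distToSet G v C = j - 1 →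
      (C.filter (fun w => G.dist v w = j - 1)).card = 1)
    (x y z w : V) (hxy : G.dist x y = j) (hxz : G.Adj x z) (hyz : G.dist y z = j - 1)
    (hxw : G.dist x w = j - 1) (hyw : G.Adj y w) :
    G.dist z w ≠ j - 1 := by
  classical
  obtain ⟨C₁, ⟨hC₁mem, hxC₁, hzC₁⟩, -⟩ := hedge x z hxz
  have hclC := hcl C₁ hC₁mem
  have hyx : G.dist y x = j := by rw [SimpleGraph.dist_comm]; exact hxy
  have hlowy : ∀ q ∈ C₁, j - 1 ≤ G.dist y q := by
    intro q hq
    by_cases hqx : q = x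
    · subst hqx; omega
    · have hadj : G.Adj x q := hclC (Finset.mem_coe.2 hxC₁) (Finset.mem_coe.2 hq)
        (fun h => hqx h.symm)
      have h1 : G.dist q x = 1 := by
        rw [SimpleGraph.dist_comm]; exact SimpleGraph.dist_eq_one_iff_adj.2 hadj
      have tri : G.dist y x ≤ G.dist y q + G.dist q x := hconn.dist_triangle
      omega
  have hmemim : (j - 1) ∈ ((fun q => G.dist y q) '' (C₁ : Set V)) :=
    ⟨z, Finset.mem_coe.2 hzC₁, hyz⟩
  have hdsetY : distToSet G y C₁ = j - 1 := by
    refine le_antisymm (Nat.sInf_le hmemim) (le_csInf ⟨_, hmemim⟩ ?_)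
    rintro b ⟨q, hq, rfl⟩
    exact hlowy q (Finset.mem_coe.1 hq)
  have hcard1 := hpsi C₁ hC₁mem y hdsetY
  have huniq : ∀ q ∈ C₁, G.dist y q = j - 1 → q = z := by
    intro q hq hdq
    have h1 : q ∈ C₁.filter (fun q => G.dist y q = j - 1) := Finset.mem_filter.2 ⟨hq, hdq⟩
    have h2 : z ∈ C₁.filter (fun q => G.dist y q = j - 1) := Finset.mem_filter.2 ⟨hzC₁, hyz⟩
    exact Finset.card_le_one.1 (le_of_eq hcard1) q h1 z h2
  intro hzw
  have hwz : G.dist w z = j - 1 := by rw [SimpleGraph.dist_comm]; exact hzw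
  have hwx : G.dist w x = j - 1 := by rw [SimpleGraph.dist_comm]; exact hxw
  have hlow2 : ∀ q ∈ C₁, j - 2 ≤ G.dist w q := by
    intro q hq
    by_cases hqz : q = z
    · subst hqz; omega
    · have hadj : G.Adj z q := hclC (Finset.mem_coe.2 hzC₁) (Finset.mem_coe.2 hq)
        (fun h => hqz h.symm)
      have h1 : G.dist q z = 1 := by
        rw [SimpleGraph.dist_comm]; exact SimpleGraph.dist_eq_one_iff_adj.2 hadj
      have tri : G.dist w z ≤ G.dist w q + G.dist q z := hconn.dist_triangle
      omega
  by_cases hex : ∃ q ∈ C₁, G.dist w q = j - 2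
  · obtain ⟨q, hq, hwq⟩ := hex
    have h1 : G.dist y q ≤ G.dist y w + G.dist w q := hconn.dist_triangle
    have h2 : G.dist y w = 1 := SimpleGraph.dist_eq_one_iff_adj.2 hyw
    have h3 : G.dist y q = j - 1 := le_antisymm (by omega) (hlowy q hq)
    have h4 : q = z := huniq q hq h3
    subst h4
    omega
  · push_neg at hex
    have hlow3 : ∀ q ∈ C₁, j - 1 ≤ G.dist w q := by
      intro q hq
      have h1 := hlow2 q hq
      have h2 := hex q hq
      omega
    have hmemim2 : (j - 1) ∈ ((fun q => G.dist w q) '' (C₁ : Set V)) :=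
      ⟨x, Finset.mem_coe.2 hxC₁, hwx⟩
    have hdsetW : distToSet G w C₁ = j - 1 := by
      refine le_antisymm (Nat.sInf_le hmemim2) (le_csInf ⟨_, hmemim2⟩ ?_)
      rintro b ⟨q, hq, rfl⟩
      exact hlow3 q (Finset.mem_coe.1 hq)
    have hcard2 := hpsi C₁ hC₁mem w hdsetW
    have hxzne : x ≠ z := by
      intro h
      rw [← h] at hyz
      omega
    have h2 : 1 < (C₁.filter (fun q => G.dist w q = j - 1)).card :=
      Finset.one_lt_card.2 ⟨x, Finset.mem_filter.2 ⟨hxC₁, hwx⟩, z,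
        Finset.mem_filter.2 ⟨hzC₁, hwz⟩, hxzne⟩
    omega

lemma coclique_of_psi {V : Type*} [Fintype V] (G : SimpleGraph V) [DecidableRel G.Adj]
    (hconn : G.Connected) (D : ℕ) (b c : ℕ → ℕ)
    (hdex : ∃ x y : V, G.dist x y = D)
    (hcount : ∀ i, i ≤ D → ∀ x y : V, G.dist x y = i →
      (Finset.univ.filter (fun z => G.Adj y z ∧ G.dist x z = i - 1)).card = c i ∧
      (Finset.univ.filter (fun z => G.Adj y z ∧ G.dist x z = i + 1)).card = b i)
    (j : ℕ) (hj2 : 2 ≤ j) (hjD : j ≤ D) (𝒞 : Set (Finset V))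
    (hcl : ∀ C ∈ 𝒞, G.IsClique (C : Set V))
    (hedge : ∀ a b : V, G.Adj a b → ∃! C : Finset V, C ∈ 𝒞 ∧ a ∈ C ∧ b ∈ C)
    (hpsi : ∀ C ∈ 𝒞, ∀ v : V, distToSet G v C = j - 1 →
      (C.filter (fun w => G.dist v w = j - 1)).card = 1)
    (x y z z' : V) (hxy : G.dist x y = j) (hxz : G.Adj x z) (hyz : G.dist y z = j - 1)
    (hxz' : G.Adj x z') (hyz' : G.dist y z' = j - 1) (hne : z ≠ z') :
    G.dist z z' = 2 := by
  classical
  have hdxz : G.dist x z = 1 := SimpleGraph.dist_eq_one_iff_adj.2 hxz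
  have hdxz' : G.dist x z' = 1 := SimpleGraph.dist_eq_one_iff_adj.2 hxz'
  have hd2 : G.dist z z' ≤ 2 := by
    have t1 : G.dist z z' ≤ G.dist z x + G.dist x z' := hconn.dist_triangle
    have t2 : G.dist z x = 1 := by rw [SimpleGraph.dist_comm]; exact hdxz
    omega
  have hd0 : 0 < G.dist z z' := hconn.pos_dist_of_ne hne
  suffices hnadj : ¬ G.Adj z z' by
    have : G.dist z z' ≠ 1 := fun h => hnadj (SimpleGraph.dist_eq_one_iff_adj.1 h)
    omega
  intro hzz'
  obtain ⟨C, ⟨hCmem, hzC, hz'C⟩, -⟩ := hedge z z' hzz'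
  have hclC := hcl C hCmem
  by_cases hex : ∃ p ∈ C, G.dist y p < j - 1
  · -- there is a vertex of C closer to y : the interesting case
    obtain ⟨p, hpC, hplt⟩ := hex
    have hpz : z ≠ p := fun h => by rw [← h] at hplt; omega
    have hpz' : z' ≠ p := fun h => by rw [← h] at hplt; omega
    have hadjzp : G.Adj z p := hclC (Finset.mem_coe.2 hzC) (Finset.mem_coe.2 hpC) hpz
    have hadjz'p : G.Adj z' p := hclC (Finset.mem_coe.2 hz'C) (Finset.mem_coe.2 hpC) hpz'
    have hdzp : G.dist z p = 1 := SimpleGraph.dist_eq_one_iff_adj.2 hadjzp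
    have hdz'p : G.dist z' p = 1 := SimpleGraph.dist_eq_one_iff_adj.2 hadjz'p
    -- d(y,p) = j - 2
    have hyp : G.dist y p = j - 2 := by
      have t1 : G.dist y z ≤ G.dist y p + G.dist p z := hconn.dist_triangle
      have t2 : G.dist p z = 1 := by rw [SimpleGraph.dist_comm]; exact hdzp
      omega
    -- d(x,p) = 2
    have hxp : G.dist x p = 2 := by
      have t1 : G.dist x p ≤ G.dist x z + G.dist z p := hconn.dist_triangle
      have t2 : G.dist x y ≤ G.dist x p + G.dist p y := hconn.dist_triangle
      have t3 : G.dist p y = j - 2 := by rw [SimpleGraph.dist_comm]; exact hyp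
      omega
    have hpx : G.dist p x = 2 := by rw [SimpleGraph.dist_comm]; exact hxp
    -- get the far vertex u
    obtain ⟨u, hu1, hu2⟩ := exists_far_vertex G hconn D b c hdex hcount j hj2 hjD p x hpx
    -- d(u,z) = j - 1, d(u,z') = j - 1
    have huz : G.dist u z = j - 1 := by
      have t1 : G.dist u z ≤ G.dist u x + G.dist x z := hconn.dist_triangle
      have t2 : G.dist u x = G.dist x u := SimpleGraph.dist_comm
      have t3 : G.dist p u ≤ G.dist p z + G.dist z u := hconn.dist_triangle
      have t4 : G.dist p z = 1 := by rw [SimpleGraph.dist_comm]; exact hdzp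
      have t5 : G.dist z u = G.dist u z := SimpleGraph.dist_comm
      omega
    have huz' : G.dist u z' = j - 1 := by
      have t1 : G.dist u z' ≤ G.dist u x + G.dist x z' := hconn.dist_triangle
      have t2 : G.dist u x = G.dist x u := SimpleGraph.dist_comm
      have t3 : G.dist p u ≤ G.dist p z' + G.dist z' u := hconn.dist_triangle
      have t4 : G.dist p z' = 1 := by rw [SimpleGraph.dist_comm]; exact hdz'p
      have t5 : G.dist z' u = G.dist u z' := SimpleGraph.dist_comm
      omega
    -- every vertex of C is at distance ≥ j - 1 from u
    have hlow : ∀ q ∈ C, j - 1 ≤ G.dist u q := by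
      intro q hq
      by_cases hqp : q = p
      · subst hqp
        have : G.dist u q = j := by rw [SimpleGraph.dist_comm]; exact hu1
        omega
      · have hadjpq : G.Adj p q := hclC (Finset.mem_coe.2 hpC) (Finset.mem_coe.2 hq)
          (fun h => hqp h.symm)
        have t1 : G.dist p u ≤ G.dist p q + G.dist q u := hconn.dist_triangle
        have t2 : G.dist p q = 1 := SimpleGraph.dist_eq_one_iff_adj.2 hadjpq
        have t3 : G.dist q u = G.dist u q := SimpleGraph.dist_comm
        omega
    have hmemim : (j - 1) ∈ ((fun q => G.dist u q) '' (C : Set V)) :=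
      ⟨z, Finset.mem_coe.2 hzC, huz⟩
    have hdsetU : distToSet G u C = j - 1 := by
      refine le_antisymm (Nat.sInf_le hmemim) (le_csInf ⟨_, hmemim⟩ ?_)
      rintro r ⟨q, hq, rfl⟩
      exact hlow q (Finset.mem_coe.1 hq)
    have hcard := hpsi C hCmem u hdsetU
    have h2 : 1 < (C.filter (fun q => G.dist u q = j - 1)).card :=
      Finset.one_lt_card.2 ⟨z, Finset.mem_filter.2 ⟨hzC, huz⟩, z',
        Finset.mem_filter.2 ⟨hz'C, huz'⟩, hne⟩
    omega
  · -- all vertices of C at distance ≥ j - 1 from y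
    push_neg at hex
    have hmemim : (j - 1) ∈ ((fun q => G.dist y q) '' (C : Set V)) :=
      ⟨z, Finset.mem_coe.2 hzC, hyz⟩
    have hdsetY : distToSet G y C = j - 1 := by
      refine le_antisymm (Nat.sInf_le hmemim) (le_csInf ⟨_, hmemim⟩ ?_)
      rintro r ⟨q, hq, rfl⟩
      exact hex q (Finset.mem_coe.1 hq)
    have hcard := hpsi C hCmem y hdsetY
    have h2 : 1 < (C.filter (fun q => G.dist y q = j - 1)).card :=
      Finset.one_lt_card.2 ⟨z, Finset.mem_filter.2 ⟨hzC, hyz⟩, z',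
        Finset.mem_filter.2 ⟨hz'C, hyz'⟩, hne⟩
    omega

/-- For a distance-regular graph with diameter `D ≥ 2`, an eigenvalue `θ ≠ k` with
standard sequence `u`, and a representation `φ` with `⟨φ x, φ y⟩ = u (d(x,y))`, for
`2 ≤ j ≤ D` and vertices `x, y` at distance `j`, with `F_j = φ x - φ y` and
`C_j = Σ_{z ∈ Γ(x) ∩ Γ_{j-1}(y)} φ z - Σ_{w ∈ Γ_{j-1}(x) ∩ Γ(y)} φ w`:
(1) `⟨F_j, F_j⟩ = 2 (u 0 - u j)`; (2) `⟨C_j, F_j⟩ = 2 c_j (u 1 - u (j-1))`;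
(3) if moreover `G` is geometric w.r.t. `𝒞` and `|Γ_{j-1}(v) ∩ C| = 1` for every `C ∈ 𝒞`
and vertex `v` with `d(v,C) = j - 1`, then
`⟨C_j, C_j⟩ = 2 c_j ((u 0 + (c_j - 1) u 2) - (c_{j-1} u (j-2) + (c_j - c_{j-1}) u j))`. -/
theorem stmt_8 {V : Type*} [Fintype V] (G : SimpleGraph V) [DecidableRel G.Adj]
    (D : ℕ) (b c : ℕ → ℕ) (hDRG : IsDRG G D b c) (hD : 2 ≤ D)
    (θ : ℝ) (hθk : θ ≠ (b 0 : ℝ)) (hθ : IsAdjEigenvalue G θ)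
    (u : ℕ → ℝ) (hu : IsStdSeq D b c θ u)
    (N : ℕ) (φ : V → EuclideanSpace ℝ (Fin N))
    (hφ : ∀ x y : V, (inner ℝ (φ x) (φ y) : ℝ) = u (G.dist x y))
    (j : ℕ) (hj2 : 2 ≤ j) (hjD : j ≤ D)
    (x y : V) (hxy : G.dist x y = j) :
    (inner ℝ (φ x - φ y) (φ x - φ y) : ℝ) = 2 * (u 0 - u j) ∧
    (inner ℝ (Cvec G φ j x y) (φ x - φ y) : ℝ) = 2 * (c j : ℝ) * (u 1 - u (j - 1)) ∧
    ∀ (θmin : ℝ) (𝒞 : Set (Finset V)), IsSmallestAdjEigenvalue G θmin →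
      IsGeometricWith G (b 0) θmin 𝒞 →
      (∀ C ∈ 𝒞, ∀ v : V, distToSet G v C = j - 1 →
        (C.filter (fun w => G.dist v w = j - 1)).card = 1) →
      (inner ℝ (Cvec G φ j x y) (Cvec G φ j x y) : ℝ) =
        2 * (c j : ℝ) *
          ((u 0 + ((c j : ℝ) - 1) * u 2) -
            ((c (j - 1) : ℝ) * u (j - 2) + ((c j : ℝ) - (c (j - 1) : ℝ)) * u j)) := by
  classical
  obtain ⟨hconn, hdle, hdex, hbD, hc0, hcount⟩ := hDRG
  have hyx : G.dist y x = j := by rw [SimpleGraph.dist_comm]; exact hxy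
  set S₁ := Finset.univ.filter (fun z => G.Adj x z ∧ G.dist y z = j - 1) with hS₁
  set S₂ := Finset.univ.filter (fun w => G.dist x w = j - 1 ∧ G.Adj y w) with hS₂
  have hA : S₁.card = c j := (hcount j hjD y x hyx).1
  have hB : S₂.card = c j := by
    have he : S₂ = Finset.univ.filter (fun z => G.Adj y z ∧ G.dist x z = j - 1) := by
      ext w; simp [hS₂, and_comm]
    rw [he]
    exact (hcount j hjD x y hxy).1
  -- membership facts
  have hmem₁ : ∀ z ∈ S₁, G.Adj x z ∧ G.dist y z = j - 1 := by
    intro z hz; rw [hS₁, Finset.mem_filter] at hz; exact hz.2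
  have hmem₂ : ∀ w ∈ S₂, G.dist x w = j - 1 ∧ G.Adj y w := by
    intro w hw; rw [hS₂, Finset.mem_filter] at hw; exact hw.2
  have hCvec : Cvec G φ j x y = (∑ z ∈ S₁, φ z) - ∑ w ∈ S₂, φ w := rfl
  refine ⟨?_, ?_, ?_⟩
  · -- Part 1
    rw [inner_sub_sub_self, hφ, hφ, hφ, hφ, SimpleGraph.dist_self, SimpleGraph.dist_self,
      hyx, hxy]
    ring
  · -- Part 2
    have key1 : ∀ z ∈ S₁, (inner ℝ (φ z) (φ x - φ y) : ℝ) = u 1 - u (j - 1) := by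
      intro z hz
      obtain ⟨h1, h2⟩ := hmem₁ z hz
      have d1 : G.dist z x = 1 := by
        rw [SimpleGraph.dist_comm]; exact SimpleGraph.dist_eq_one_iff_adj.2 h1
      have d1' : G.dist x z = 1 := SimpleGraph.dist_eq_one_iff_adj.2 h1
      have d2 : G.dist z y = j - 1 := by rw [SimpleGraph.dist_comm]; exact h2
      rw [inner_sub_right, hφ, hφ]
      simp only [d1, d1', d2, h2]
    have key2 : ∀ w ∈ S₂, (inner ℝ (φ w) (φ x - φ y) : ℝ) = u (j - 1) - u 1 := by
      intro w hw
      obtain ⟨h1, h2⟩ := hmem₂ w hw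
      have d1 : G.dist w x = j - 1 := by rw [SimpleGraph.dist_comm]; exact h1
      have d2 : G.dist w y = 1 := by
        rw [SimpleGraph.dist_comm]; exact SimpleGraph.dist_eq_one_iff_adj.2 h2
      have d2' : G.dist y w = 1 := SimpleGraph.dist_eq_one_iff_adj.2 h2
      rw [inner_sub_right, hφ, hφ]
      simp only [d1, h1, d2, d2']
    rw [hCvec, inner_sub_left, sum_inner, sum_inner, Finset.sum_congr rfl key1,
      Finset.sum_congr rfl key2, Finset.sum_const, Finset.sum_const, hA, hB, nsmul_eq_mul]
    ring
  · -- Part 3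
    intro θmin 𝒞 hmin hgeo hpsi
    have hcl : ∀ C ∈ 𝒞, G.IsClique (C : Set V) := fun C hC => (hgeo.1 C hC).1
    have hedge := hgeo.2
    -- within-set distances are 2
    have hF1 : ∀ z ∈ S₁, ∀ z' ∈ S₁, z ≠ z' → G.dist z z' = 2 := by
      intro z hz z' hz' hne
      obtain ⟨h1, h2⟩ := hmem₁ z hz
      obtain ⟨h1', h2'⟩ := hmem₁ z' hz'
      exact coclique_of_psi G hconn D b c hdex hcount j hj2 hjD 𝒞 hcl hedge hpsi x y z z' hxy h1 h2 h1' h2' hne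
    have hF2 : ∀ w ∈ S₂, ∀ w' ∈ S₂, w ≠ w' → G.dist w w' = 2 := by
      intro w hw w' hw' hne
      obtain ⟨h1, h2⟩ := hmem₂ w hw
      obtain ⟨h1', h2'⟩ := hmem₂ w' hw'
      exact coclique_of_psi G hconn D b c hdex hcount j hj2 hjD 𝒞 hcl hedge hpsi
        y x w w' hyx h2 h1 h2' h1' hne
    -- cross counts
    have hTcard : ∀ z ∈ S₁, (S₂.filter (fun w => G.dist z w = j - 2)).card = c (j - 1) := by
      intro z hz
      obtain ⟨h1, h2⟩ := hmem₁ z hz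
      have hzy : G.dist z y = j - 1 := by rw [SimpleGraph.dist_comm]; exact h2
      have hset : S₂.filter (fun w => G.dist z w = j - 2) =
          Finset.univ.filter (fun w => G.Adj y w ∧ G.dist z w = (j - 1) - 1) := by
        ext w
        simp only [hS₂, Finset.mem_filter, Finset.mem_univ, true_and]
        constructor
        · rintro ⟨⟨hw1, hw2⟩, hw3⟩
          refine ⟨hw2, ?_⟩
          omega
        · rintro ⟨hw1, hw2⟩
          have e1 : G.dist x w ≤ G.dist x z + G.dist z w := hconn.dist_triangle
          have e2 : G.dist x z = 1 := SimpleGraph.dist_eq_one_iff_adj.2 h1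
          have e3 : G.dist x y ≤ G.dist x w + G.dist w y := hconn.dist_triangle
          have e4 : G.dist w y = 1 := by
            rw [SimpleGraph.dist_comm]; exact SimpleGraph.dist_eq_one_iff_adj.2 hw1
          refine ⟨⟨?_, hw1⟩, ?_⟩ <;> omega
      rw [hset]
      exact (hcount (j - 1) (by omega) z y hzy).1
    have hTrest : ∀ z ∈ S₁, ∀ w ∈ S₂, G.dist z w ≠ j - 2 → G.dist z w = j := by
      intro z hz w hw hnd
      obtain ⟨h1, h2⟩ := hmem₁ z hz
      obtain ⟨h1', h2'⟩ := hmem₂ w hw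
      have e1 : G.dist z w ≤ G.dist z x + G.dist x w := hconn.dist_triangle
      have e2 : G.dist z x = 1 := by
        rw [SimpleGraph.dist_comm]; exact SimpleGraph.dist_eq_one_iff_adj.2 h1
      have e3 : G.dist z y ≤ G.dist z w + G.dist w y := hconn.dist_triangle
      have e4 : G.dist w y = 1 := by
        rw [SimpleGraph.dist_comm]; exact SimpleGraph.dist_eq_one_iff_adj.2 h2'
      have e5 : G.dist z y = j - 1 := by rw [SimpleGraph.dist_comm]; exact h2
      have e6 : G.dist z w ≠ j - 1 :=
        cross_dist_ne G hconn j hj2 𝒞 hcl hedge hpsi x y z w hxy h1 h2 h1' h2'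
      omega
    -- the inner product computation
    have hdiag : ∀ (S : Finset V), S.card = c j →
        (∀ z ∈ S, ∀ z' ∈ S, z ≠ z' → G.dist z z' = 2) →
        (inner ℝ (∑ z ∈ S, φ z) (∑ z' ∈ S, φ z') : ℝ) =
          (c j : ℝ) * (u 0 + ((c j : ℝ) - 1) * u 2) := by
      intro S hS hcc
      rw [sum_inner]
      have key : ∀ z ∈ S, (inner ℝ (φ z) (∑ z' ∈ S, φ z') : ℝ) =
          u 0 + ((c j : ℝ) - 1) * u 2 := by
        intro z hz
        rw [inner_sum]
        have hsplit := Finset.add_sum_erase S (fun z' => (inner ℝ (φ z) (φ z') : ℝ)) hz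
        rw [← hsplit]
        rw [hφ, SimpleGraph.dist_self]
        have herase : ∀ z' ∈ S.erase z, (inner ℝ (φ z) (φ z') : ℝ) = u 2 := by
          intro z' hz'
          rw [hφ, hcc z hz z' (Finset.mem_of_mem_erase hz')
            (Ne.symm (Finset.ne_of_mem_erase hz'))]
        rw [Finset.sum_congr rfl herase, Finset.sum_const, Finset.card_erase_of_mem hz, hS,
          nsmul_eq_mul]
        have h1 : 1 ≤ c j := by
          rw [← hS]; exact Finset.card_pos.2 ⟨z, hz⟩
        rw [Nat.cast_sub h1]
        norm_num
      rw [Finset.sum_congr rfl key, Finset.sum_const, hS, nsmul_eq_mul]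
    have hQ11 := hdiag S₁ hA hF1
    have hQ22 := hdiag S₂ hB hF2
    have hQ12 : (inner ℝ (∑ z ∈ S₁, φ z) (∑ w ∈ S₂, φ w) : ℝ) =
        (c j : ℝ) * ((c (j - 1) : ℝ) * u (j - 2) + ((c j : ℝ) - (c (j - 1) : ℝ)) * u j) := by
      rw [sum_inner]
      have key : ∀ z ∈ S₁, (inner ℝ (φ z) (∑ w ∈ S₂, φ w) : ℝ) =
          (c (j - 1) : ℝ) * u (j - 2) + ((c j : ℝ) - (c (j - 1) : ℝ)) * u j := by
        intro z hz
        rw [inner_sum]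
        have hsplit := Finset.sum_filter_add_sum_filter_not S₂ (fun w => G.dist z w = j - 2)
          (fun w => (inner ℝ (φ z) (φ w) : ℝ))
        rw [← hsplit]
        have e1 : ∀ w ∈ S₂.filter (fun w => G.dist z w = j - 2),
            (inner ℝ (φ z) (φ w) : ℝ) = u (j - 2) := by
          intro w hw
          rw [Finset.mem_filter] at hw
          rw [hφ, hw.2]
        have e2 : ∀ w ∈ S₂.filter (¬ G.dist z · = j - 2),
            (inner ℝ (φ z) (φ w) : ℝ) = u j := by
          intro w hw
          rw [Finset.mem_filter] at hw
          rw [hφ, hTrest z hz w hw.1 hw.2]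
        have hcard1 := hTcard z hz
        have hcle : c (j - 1) ≤ c j := by
          rw [← hcard1, ← hB]
          exact Finset.card_filter_le _ _
        have hcard2 : (S₂.filter (¬ G.dist z · = j - 2)).card = c j - c (j - 1) := by
          have := Finset.card_filter_add_card_filter_not
            (s := S₂) (p := fun w => G.dist z w = j - 2)
          omega
        rw [Finset.sum_congr rfl e1, Finset.sum_congr rfl e2, Finset.sum_const,
          Finset.sum_const, hcard1, hcard2, nsmul_eq_mul, nsmul_eq_mul, Nat.cast_sub hcle]
      rw [Finset.sum_congr rfl key, Finset.sum_const, hA, nsmul_eq_mul]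
    have hQ21 : (inner ℝ (∑ w ∈ S₂, φ w) (∑ z ∈ S₁, φ z) : ℝ) =
        (c j : ℝ) * ((c (j - 1) : ℝ) * u (j - 2) + ((c j : ℝ) - (c (j - 1) : ℝ)) * u j) := by
      rw [real_inner_comm]; exact hQ12
    rw [hCvec, inner_sub_sub_self, hQ11, hQ22, hQ12, hQ21]
    ring
end

section
/- Let Γ be a non-bipartite distance-regular graph with diameter D ≥ 4 and vertex set V, let θ ≠ k be an eigenvalue of Γ with standard sequence (u_i)_{i=0}^D, and let φ : V → ℝ^N satisfy ⟨φ(x), φ(y)⟩ = u_{d(x,y)} for all vertices x, y. Fix 3 ≤ j ≤ D−1 and suppose that for all vertices x, y with d(x,y) = j the vectors F_j = φ(x) − φ(y) and C_j = Σ_{z ∈ Γ(x)∩Γ_{j−1}(y)} φ(z) − Σ_{w ∈ Γ_{j−1}(x)∩Γ(y)} φ(w) satisfy ⟨C_j, C_j⟩⟨F_j, F_j⟩ = ⟨C_j, F_j⟩². Then for all j ≤ i ≤ D−1: (u_0 − u_j)(u_i − u_{i−j+2}) = (u_1 − u_{j−1})(u_{i+1} − u_{i−j+1}). -/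
open Finset

lemma walk_split {V : Type*} {G : SimpleGraph V} {p x : V} (w : G.Walk p x) :
    ∀ k, k ≤ w.length → ∃ (y : V) (w1 : G.Walk p y) (w2 : G.Walk y x),
      w1.length = k ∧ w2.length = w.length - k := by
  induction w with
  | nil =>
      intro k hk
      simp only [SimpleGraph.Walk.length_nil, Nat.le_zero] at hk
      subst hk
      exact ⟨_, .nil, .nil, rfl, rfl⟩
  | @cons a bb cc h w ih =>
      intro k hk
      match k with
      | 0 => exact ⟨a, .nil, .cons h w, rfl, rfl⟩
      | k + 1 =>
        obtain ⟨y, w1, w2, h1, h2⟩ := ih k (by simpa using hk)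
        exact ⟨y, .cons h w1, w2, by simp [h1], by simp [h2]⟩

lemma dist_split {V : Type*} {G : SimpleGraph V} (hc : G.Connected) {p x : V} {m : ℕ}
    (hd : G.dist p x = m) (k : ℕ) (hk : k ≤ m) :
    ∃ y, G.dist p y = k ∧ G.dist y x = m - k := by
  obtain ⟨w, hw⟩ := hc.exists_walk_length_eq_dist p x
  rw [hd] at hw
  obtain ⟨y, w1, w2, h1, h2⟩ := walk_split w k (by omega)
  have d1 : G.dist p y ≤ k := h1 ▸ SimpleGraph.dist_le w1
  have d2 : G.dist y x ≤ m - k := by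
    have := SimpleGraph.dist_le w2; omega
  have t := hc.dist_triangle (u := p) (v := y) (w := x)
  exact ⟨y, by omega, by omega⟩

/-- For a non-bipartite distance-regular graph with diameter `D ≥ 4`, an eigenvalue
`θ ≠ k` with standard sequence `u`, and a representation `φ` with
`⟨φ x, φ y⟩ = u (d(x,y))`: if for some `3 ≤ j ≤ D - 1` all pairs `x, y` at distance `j`
satisfy `⟨C_j, C_j⟩ ⟨F_j, F_j⟩ = ⟨C_j, F_j⟩²`, then for all `j ≤ i ≤ D - 1`:
`(u 0 - u j)(u i - u (i-j+2)) = (u 1 - u (j-1))(u (i+1) - u (i-j+1))`. -/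
theorem stmt_9 {V : Type*} [Fintype V] (G : SimpleGraph V) [DecidableRel G.Adj]
    (D : ℕ) (b c : ℕ → ℕ) (hDRG : IsDRG G D b c) (hD : 4 ≤ D)
    (hnb : NonBipartite G)
    (θ : ℝ) (hθk : θ ≠ (b 0 : ℝ)) (hθ : IsAdjEigenvalue G θ)
    (u : ℕ → ℝ) (hu : IsStdSeq D b c θ u)
    (N : ℕ) (φ : V → EuclideanSpace ℝ (Fin N))
    (hφ : ∀ x y : V, (inner ℝ (φ x) (φ y) : ℝ) = u (G.dist x y))
    (j : ℕ) (hj3 : 3 ≤ j) (hjD : j ≤ D - 1)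
    (hS : ∀ x y : V, G.dist x y = j →
      (inner ℝ (Cvec G φ j x y) (Cvec G φ j x y) : ℝ) *
          (inner ℝ (φ x - φ y) (φ x - φ y) : ℝ) =
        (inner ℝ (Cvec G φ j x y) (φ x - φ y) : ℝ) ^ 2) :
    ∀ i, j ≤ i → i ≤ D - 1 →
      (u 0 - u j) * (u i - u (i - j + 2)) =
        (u 1 - u (j - 1)) * (u (i + 1) - u (i - j + 1)) := by
  obtain ⟨hconn, hdle, ⟨p0, q0, hpq⟩, hbD, hc0, hcount⟩ := hDRG
  intro i hji hiD
  -- build a geodesic configuration p0 --(i+1-j)-- y --(j)-- x with d(p0,x)=i+1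
  obtain ⟨x, hpx, -⟩ := dist_split hconn hpq (i + 1) (by omega)
  obtain ⟨y, hpy, hyx⟩ := dist_split hconn hpx (i + 1 - j) (by omega)
  have hyxj : G.dist y x = j := by omega
  have hxy : G.dist x y = j := by rw [SimpleGraph.dist_comm]; exact hyxj
  -- cardinalities
  have hS1card := (hcount j (by omega) y x hyxj).1
  have hS2card : (Finset.univ.filter (fun w => G.dist x w = j - 1 ∧ G.Adj y w)).card = c j := by
    have h2 := (hcount j (by omega) x y hxy).1
    rw [← h2]
    congr 1
    ext w
    simp only [Finset.mem_filter]
    tauto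
  -- c j ≠ 0
  have hcne : ((c j : ℝ)) ≠ 0 := by
    obtain ⟨z0, hz1, hz2⟩ := dist_split hconn hyxj (j - 1) (by omega)
    have hz2' : G.Adj x z0 := by
      rw [← SimpleGraph.dist_eq_one_iff_adj, SimpleGraph.dist_comm]
      omega
    have : 0 < c j := by
      rw [← hS1card]
      exact Finset.card_pos.mpr ⟨z0, by simp [hz2', hz1]⟩
    exact_mod_cast this.ne'
  -- distance facts
  have hdz : ∀ z : V, G.Adj x z → G.dist y z = j - 1 → G.dist p0 z = i := by
    intro z ha hdyz
    have t1 : G.dist p0 z ≤ G.dist p0 y + G.dist y z := hconn.dist_triangle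
    have t2 : G.dist p0 x ≤ G.dist p0 z + G.dist z x := hconn.dist_triangle
    have hzx : G.dist z x = 1 := by
      rw [SimpleGraph.dist_comm]; exact SimpleGraph.dist_eq_one_iff_adj.mpr ha
    omega
  have hdw : ∀ w : V, G.dist x w = j - 1 → G.Adj y w → G.dist p0 w = i - j + 2 := by
    intro w hdxw ha
    have t1 : G.dist p0 w ≤ G.dist p0 y + G.dist y w := hconn.dist_triangle
    have t2 : G.dist p0 x ≤ G.dist p0 w + G.dist w x := hconn.dist_triangle
    have hyw : G.dist y w = 1 := SimpleGraph.dist_eq_one_iff_adj.mpr ha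
    have hwx : G.dist w x = j - 1 := by rw [SimpleGraph.dist_comm]; exact hdxw
    omega
  -- inner products of Cvec with vertices
  have hCq : ∀ (q : V) (d1 d2 : ℕ),
      (∀ z : V, G.Adj x z → G.dist y z = j - 1 → G.dist z q = d1) →
      (∀ w : V, G.dist x w = j - 1 → G.Adj y w → G.dist w q = d2) →
      (inner ℝ (Cvec G φ j x y) (φ q) : ℝ) = (c j : ℝ) * u d1 - (c j : ℝ) * u d2 := by
    intro q d1 d2 h1 h2
    have e1 : ∑ z ∈ Finset.univ.filter (fun z => G.Adj x z ∧ G.dist y z = j - 1),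
        (inner ℝ (φ z) (φ q) : ℝ)
        = ∑ _z ∈ Finset.univ.filter (fun z => G.Adj x z ∧ G.dist y z = j - 1), u d1 :=
      Finset.sum_congr rfl (fun z hz => by
        simp only [Finset.mem_filter, Finset.mem_univ, true_and] at hz
        rw [hφ z q, h1 z hz.1 hz.2])
    have e2 : ∑ w ∈ Finset.univ.filter (fun w => G.dist x w = j - 1 ∧ G.Adj y w),
        (inner ℝ (φ w) (φ q) : ℝ)
        = ∑ _w ∈ Finset.univ.filter (fun w => G.dist x w = j - 1 ∧ G.Adj y w), u d2 :=
      Finset.sum_congr rfl (fun w hw => by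
        simp only [Finset.mem_filter, Finset.mem_univ, true_and] at hw
        rw [hφ w q, h2 w hw.1 hw.2])
    unfold Cvec
    rw [inner_sub_left, sum_inner, sum_inner, e1, e2, Finset.sum_const, Finset.sum_const,
        hS1card, hS2card, nsmul_eq_mul, nsmul_eq_mul]
  have hCx := hCq x 1 (j - 1)
    (fun z ha _ => by rw [SimpleGraph.dist_comm]; exact SimpleGraph.dist_eq_one_iff_adj.mpr ha)
    (fun w hd _ => by rw [SimpleGraph.dist_comm]; exact hd)
  have hCy := hCq y (j - 1) 1
    (fun z _ hd => by rw [SimpleGraph.dist_comm]; exact hd)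
    (fun w _ ha => by rw [SimpleGraph.dist_comm]; exact SimpleGraph.dist_eq_one_iff_adj.mpr ha)
  have hCp := hCq p0 i (i - j + 2)
    (fun z ha hd => by rw [SimpleGraph.dist_comm]; exact hdz z ha hd)
    (fun w hd ha => by rw [SimpleGraph.dist_comm]; exact hdw w hd ha)
  have hCF : (inner ℝ (Cvec G φ j x y) (φ x - φ y) : ℝ) = 2 * (c j : ℝ) * (u 1 - u (j - 1)) := by
    rw [inner_sub_right, hCx, hCy]; ring
  have hFF : (inner ℝ (φ x - φ y) (φ x - φ y) : ℝ) = 2 * (1 - u j) := by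
    rw [inner_sub_left, inner_sub_right, inner_sub_right, hφ, hφ, hφ, hφ,
        SimpleGraph.dist_self, SimpleGraph.dist_self, hxy, hyxj, hu.1]
    ring
  have hxp : G.dist x p0 = i + 1 := by rw [SimpleGraph.dist_comm]; exact hpx
  have hyp : G.dist y p0 = i - j + 1 := by rw [SimpleGraph.dist_comm]; omega
  have hFp : (inner ℝ (φ x - φ y) (φ p0) : ℝ) = u (i + 1) - u (i - j + 1) := by
    rw [inner_sub_left, hφ, hφ, hxp, hyp]
  by_cases h1 : u j = 1
  · -- degenerate case: φ x = φ y whenever d(x,y) = j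
    have hF0 : φ x = φ y := by
      have h0 : (inner ℝ (φ x - φ y) (φ x - φ y) : ℝ) = 0 := by rw [hFF, h1]; ring
      exact sub_eq_zero.mp (inner_self_eq_zero.mp h0)
    have heq : u (i + 1) = u (i - j + 1) := by
      have h2 : (inner ℝ (φ x) (φ p0) : ℝ) = inner ℝ (φ y) (φ p0) := by rw [hF0]
      rw [hφ, hφ, hxp, hyp] at h2
      exact h2
    rw [hu.1, h1, heq]; ring
  · -- main case: Cauchy–Schwarz equality forces proportionality
    have hSxy := hS x y hxy
    have hSxy' : (inner ℝ (Cvec G φ j x y) (Cvec G φ j x y) : ℝ) * (2 * (1 - u j))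
        = (2 * (c j : ℝ) * (u 1 - u (j - 1))) ^ 2 := by
      rw [← hFF, ← hCF]; exact hSxy
    have hveq : (1 - u j) • Cvec G φ j x y
        = ((c j : ℝ) * (u 1 - u (j - 1))) • (φ x - φ y) := by
      rw [← sub_eq_zero, ← inner_self_eq_zero (𝕜 := ℝ)]
      simp only [inner_sub_left, inner_sub_right, real_inner_smul_left, real_inner_smul_right]
      rw [real_inner_comm (Cvec G φ j x y) (φ x), real_inner_comm (Cvec G φ j x y) (φ y),
          hCx, hCy, hφ x x, hφ y x, hφ x y, hφ y y, SimpleGraph.dist_self,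
          SimpleGraph.dist_self, hxy, hyxj, hu.1]
      linear_combination ((1 - u j) / 2) * hSxy'
    have hkey : (1 - u j) * ((c j : ℝ) * u i - (c j : ℝ) * u (i - j + 2))
        = ((c j : ℝ) * (u 1 - u (j - 1))) * (u (i + 1) - u (i - j + 1)) := by
      have h3 := congrArg (fun v : EuclideanSpace ℝ (Fin N) => (inner ℝ v (φ p0) : ℝ)) hveq
      simp only [real_inner_smul_left] at h3
      rw [hCp, hFp] at h3
      exact h3
    have final : (c j : ℝ) * ((u 0 - u j) * (u i - u (i - j + 2)))
        = (c j : ℝ) * ((u 1 - u (j - 1)) * (u (i + 1) - u (i - j + 1))) := by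
      rw [hu.1]; linear_combination hkey
    exact mul_left_cancel₀ hcne final
end
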